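/- arXiv:1910.02466 — 8 statements merged into one kernel-verified Lean document; each statement's English description precedes it below -/
import Mathlib

section
/- If the initial value is h₀ = 0, then the forward ODE system has a unique solution (h, f, g) defined on all of [0, ∞) (i.e., τ(0) = ∞), and this solution satisfies h(t) = 0 for all t ≥ 0; moreover f is given explicitly by f(t) = (1 + (C₀ − 1)e^{−C₀ t})/C₀ if C₀ ≠ 0 and f(t) = 1 + t if C₀ = 0. -/
open Set

lemma deriv_transfer {u : ℝ → ℝ} {c a t N : ℝ} (h : HasDerivWithinAt u c (Icc a N) t)
    (ht : a ≤ t) (htN : t < N) : HasDerivWithinAt u c (Ici t) t := by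
  apply h.mono_of_mem_nhdsWithin
  rw [mem_nhdsWithin]
  exact ⟨Iio N, isOpen_Iio, htN, fun x hx => ⟨le_trans ht hx.2, le_of_lt hx.1⟩⟩

lemma hasDerivWithinAt_singleton (f : ℝ → ℝ) (x c : ℝ) : HasDerivWithinAt f c {x} x := by
  rw [hasDerivWithinAt_iff_tendsto_slope]
  simp



noncomputable def Ffun (C₀ : ℝ) : ℝ → ℝ :=
  fun t => if C₀ = 0 then 1 + t else (1 + (C₀ - 1) * Real.exp (-C₀ * t)) / C₀

lemma Ffun_zero (C₀ : ℝ) : Ffun C₀ 0 = 1 := by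
  unfold Ffun
  split_ifs with h
  · simp
  · field_simp
    simp

lemma Ffun_continuous (C₀ : ℝ) : Continuous (Ffun C₀) := by
  unfold Ffun
  split_ifs with h
  · continuity
  · continuity

lemma hasDerivAt_Ffun (C₀ t : ℝ) : HasDerivAt (Ffun C₀) (1 - C₀ * Ffun C₀ t) t := by
  unfold Ffun
  split_ifs with h
  · simpa [h] using (hasDerivAt_id t).const_add (1:ℝ)
  · have h1 : HasDerivAt (fun t : ℝ => -C₀ * t) (-C₀) t := by
      simpa using (hasDerivAt_id t).const_mul (-C₀)
    have h2 := (h1.exp.const_mul (C₀ - 1)).const_add (1:ℝ)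
    have h3 := h2.div_const C₀
    refine h3.congr_deriv ?_
    field_simp
    ring

lemma Ffun_pos (C₀ : ℝ) {t : ℝ} (ht : 0 ≤ t) : 0 < Ffun C₀ t := by
  unfold Ffun
  split_ifs with h
  · linarith
  · rcases lt_or_gt_of_ne h with hneg | hpos
    · apply div_pos_of_neg_of_neg _ hneg
      have he : 1 ≤ Real.exp (-C₀ * t) := by
        rw [Real.one_le_exp_iff]
        nlinarith
      nlinarith [mul_le_mul_of_nonpos_left he (by linarith : C₀ - 1 ≤ 0)]
    · apply div_pos _ hpos
      have he : Real.exp (-C₀ * t) ≤ 1 := by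
        rw [Real.exp_le_one_iff]
        nlinarith
      have he' : 0 < Real.exp (-C₀ * t) := Real.exp_pos _
      rcases le_or_gt 1 C₀ with h1 | h1
      · nlinarith
      · nlinarith [mul_le_mul_of_nonpos_left he (by linarith : C₀ - 1 ≤ 0)]

lemma gronwall_zero {u u' : ℝ → ℝ} {b K : ℝ} (hb : 0 ≤ b)
    (hu : ContinuousOn u (Icc 0 b))
    (hd : ∀ t ∈ Ico (0:ℝ) b, HasDerivWithinAt u (u' t) (Ici t) t)
    (h0 : u 0 = 0) (hK : ∀ t ∈ Ico (0:ℝ) b, |u' t| ≤ K * |u t|) : u b = 0 := by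
  have := norm_le_gronwallBound_of_norm_deriv_right_le (δ := 0) (K := K) (ε := 0)
    hu hd (by simp [h0]) (by simpa using hK) b (by simp [hb])
  rw [gronwallBound_ε0_δ0] at this
  simpa using le_antisymm this (abs_nonneg _)

/-- Uniqueness for the scalar Riccati-type equation on `Icc 0 N`. -/
lemma g_unique {α C₀ N : ℝ} (hα : 0 < α) {φ g1 g2 : ℝ → ℝ}
    (h1 : ∀ t ∈ Icc (0:ℝ) N, HasDerivWithinAt g1
      (φ t - 2/α * (g1 t)^2 - C₀ * g1 t) (Icc 0 N) t)
    (h2 : ∀ t ∈ Icc (0:ℝ) N, HasDerivWithinAt g2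
      (φ t - 2/α * (g2 t)^2 - C₀ * g2 t) (Icc 0 N) t)
    (e1 : g1 0 = 0) (e2 : g2 0 = 0) : ∀ t ∈ Icc (0:ℝ) N, g1 t = g2 t := by
  intro b hb
  have hc1 : ContinuousOn g1 (Icc 0 N) := fun t ht => (h1 t ht).continuousWithinAt
  have hc2 : ContinuousOn g2 (Icc 0 N) := fun t ht => (h2 t ht).continuousWithinAt
  have hcψ : ContinuousOn (fun t => 2/α * (g1 t + g2 t) + C₀) (Icc 0 N) := by
    exact (((hc1.add hc2).const_smul (2/α)).add continuousOn_const)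
  obtain ⟨K, hK⟩ := isCompact_Icc.exists_bound_of_continuousOn hcψ
  have key : (fun t => g1 t - g2 t) b = 0 := by
    apply gronwall_zero (u' := fun t =>
        (φ t - 2/α * (g1 t)^2 - C₀ * g1 t) - (φ t - 2/α * (g2 t)^2 - C₀ * g2 t))
      hb.1 ((hc1.sub hc2).mono (Icc_subset_Icc_right hb.2)) ?_ (by simp [e1, e2]) (K := K) ?_
    · intro t ht
      have htN : t ∈ Icc (0:ℝ) N := ⟨ht.1, le_of_lt (lt_of_lt_of_le ht.2 hb.2)⟩
      exact deriv_transfer ((h1 t htN).sub (h2 t htN)) ht.1 (lt_of_lt_of_le ht.2 hb.2)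
    · intro t ht
      have htN : t ∈ Icc (0:ℝ) N := ⟨ht.1, le_of_lt (lt_of_lt_of_le ht.2 hb.2)⟩
      have hrw : (φ t - 2/α * (g1 t)^2 - C₀ * g1 t) - (φ t - 2/α * (g2 t)^2 - C₀ * g2 t)
          = -((g1 t - g2 t) * (2/α * (g1 t + g2 t) + C₀)) := by ring
      show |(φ t - 2/α * (g1 t)^2 - C₀ * g1 t) - (φ t - 2/α * (g2 t)^2 - C₀ * g2 t)| ≤ K * |g1 t - g2 t|
      rw [hrw, abs_neg, abs_mul, mul_comm]
      have := hK t htN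
      rw [Real.norm_eq_abs] at this
      exact mul_le_mul_of_nonneg_right this (abs_nonneg _)
  simpa [sub_eq_zero] using key

set_option maxHeartbeats 2000000 in
lemma g_exists_Icc (c C₀ α : ℝ) (hc : 0 < c) (hα : 0 < α) (N : ℝ) (hN : 0 ≤ N) :
    ∃ g : ℝ → ℝ, g 0 = 0 ∧ ∀ t ∈ Icc (0:ℝ) N,
      HasDerivWithinAt g (c * Ffun C₀ t - 2/α * (g t)^2 - C₀ * g t) (Icc 0 N) t := by
  obtain ⟨M0, hM0⟩ := isCompact_Icc.exists_bound_of_continuousOn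
    ((Ffun_continuous C₀).continuousOn : ContinuousOn (Ffun C₀) (Icc 0 N))
  obtain ⟨M, hM1, hMF⟩ : ∃ M, (1:ℝ) ≤ M ∧ ∀ t ∈ Icc (0:ℝ) N, |Ffun C₀ t| ≤ M := by
    refine ⟨max M0 1, le_max_right _ _, fun t ht => ?_⟩
    exact le_trans (by simpa [Real.norm_eq_abs] using hM0 t ht) (le_max_left _ _)
  have h2α : (0:ℝ) ≤ 2/α := by positivity
  have hcM : 0 < c * M := by nlinarith
  obtain ⟨B, hB1, hB2⟩ : ∃ B, (1:ℝ) ≤ B ∧ 2/α * B ≥ |C₀| + c*M + 1 := by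
    refine ⟨max 1 (α/2 * (|C₀| + c*M + 1)), le_max_left _ _, ?_⟩
    have h1 : α/2 * (|C₀| + c*M + 1) ≤ max 1 (α/2 * (|C₀| + c*M + 1)) := le_max_right _ _
    have h' := mul_le_mul_of_nonneg_left h1 h2α
    calc |C₀| + c*M + 1 = 2/α * (α/2 * (|C₀| + c*M + 1)) := by field_simp
    _ ≤ 2/α * max 1 (α/2 * (|C₀| + c*M + 1)) := h'
  have hBkey : ∀ t ∈ Icc (0:ℝ) N, c * Ffun C₀ t - 2/α * B^2 - C₀ * B < 0 := by
    intro t ht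
    have hF : c * Ffun C₀ t ≤ c * M := by
      have := hMF t ht
      nlinarith [abs_nonneg (Ffun C₀ t), le_abs_self (Ffun C₀ t)]
    have hgt : B * (2/α * B + C₀) ≥ c*M + 1 := by
      have h1 : 2/α * B + C₀ ≥ c*M + 1 := by
        have := abs_nonneg C₀
        nlinarith [neg_abs_le C₀]
      nlinarith
    nlinarith
  obtain ⟨C, hCpos, hCb⟩ : ∃ C, 0 < C ∧ c*M + 2/α * (B+1)^2 + |C₀| * (B+1) ≤ C := by
    refine ⟨c*M + 2/α * (B+1)^2 + |C₀| * (B+1), by positivity, le_refl _⟩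
  obtain ⟨τ, hτ, hCτ⟩ : ∃ τ, (0:ℝ) < τ ∧ C * τ ≤ 1 := by
    refine ⟨1/C, by positivity, ?_⟩
    rw [mul_one_div, div_self (ne_of_gt hCpos)]
  obtain ⟨L, hLcoe⟩ : ∃ L : NNReal, (L:ℝ) = 2/α * (2*(B+1)) + |C₀| := by
    refine ⟨Real.toNNReal (2/α * (2*(B+1)) + |C₀|), Real.coe_toNNReal _ (by positivity)⟩
  set v : ℝ → ℝ → ℝ := fun t x => c * Ffun C₀ t - 2/α * x^2 - C₀ * x with hvdef
  -- Main induction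
  have main : ∀ m : ℕ, ∃ g : ℝ → ℝ, g 0 = 0 ∧ ∀ t ∈ Icc (0:ℝ) (min ((m:ℝ)*τ) N),
      (0 ≤ g t ∧ g t ≤ B) ∧ HasDerivWithinAt g (v t (g t)) (Icc 0 (min ((m:ℝ)*τ) N)) t := by
    intro m
    induction m with
    | zero =>
      refine ⟨fun _ => 0, rfl, ?_⟩
      intro t ht
      simp only [Nat.cast_zero, zero_mul, min_eq_left hN, Icc_self, mem_singleton_iff] at ht ⊢
      subst ht
      refine ⟨⟨le_refl _, by linarith⟩, ?_⟩
      exact hasDerivWithinAt_singleton _ _ _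
    | succ m ih =>
      rcases le_or_gt N ((m:ℝ)*τ) with hcase | hcase
      · -- already done
        obtain ⟨g, hg0, hg⟩ := ih
        have e1 : min ((m:ℝ)*τ) N = N := min_eq_right hcase
        have e2 : min (((m+1:ℕ):ℝ)*τ) N = N := by
          apply min_eq_right
          push_cast
          nlinarith
        rw [e1] at hg
        rw [e2]
        exact ⟨g, hg0, hg⟩
      · obtain ⟨g, hg0, hg⟩ := ih
        set s : ℝ := (m:ℝ)*τ with hsdef
        have hs0 : (0:ℝ) ≤ s := by positivity
        have emin : min s N = s := min_eq_left (le_of_lt hcase)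
        rw [emin] at hg
        set s' : ℝ := min (s+τ) N with hs'def
        have hss' : s ≤ s' := le_min (by linarith) (le_of_lt hcase)
        have hs'N : s' ≤ N := min_le_right _ _
        have hs'τ : s' - s ≤ τ := by
          have : s' ≤ s + τ := min_le_left _ _
          linarith
        have hgs := hg s ⟨hs0, le_refl s⟩
        obtain ⟨⟨hgs0, hgsB⟩, _⟩ := hgs
        -- Picard-Lindelöf on [s, s']
        have hsub : Icc s s' ⊆ Icc (0:ℝ) N := fun x hx => ⟨le_trans hs0 hx.1, le_trans hx.2 hs'N⟩
        have hball : ∀ x ∈ Metric.closedBall (g s) 1, |x| ≤ B + 1 := by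
          intro x hx
          rw [Metric.mem_closedBall, Real.dist_eq] at hx
          rw [abs_le] at hx ⊢
          obtain ⟨hx1, hx2⟩ := hx
          constructor <;> linarith
        have hpl : IsPicardLindelof v (tmin := s) (tmax := s') ⟨s, le_refl s, hss'⟩ (g s) 1 0
            C.toNNReal L := by
          constructor
          · intro t ht
            rw [lipschitzOnWith_iff_dist_le_mul]
            intro x hx y hy
            rw [Real.dist_eq, Real.dist_eq]
            have hx' := hball x hx
            have hy' := hball y hy
            rw [hLcoe]
            have hrw : v t x - v t y = -((x - y) * (2/α * (x+y) + C₀)) := by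
              simp only [hvdef]; ring
            rw [hrw, abs_neg, abs_mul, mul_comm]
            apply mul_le_mul_of_nonneg_right _ (abs_nonneg _)
            calc |2/α * (x+y) + C₀| ≤ |2/α * (x+y)| + |C₀| := abs_add_le _ _
              _ ≤ 2/α * (2*(B+1)) + |C₀| := by
                  have : |2/α * (x+y)| = 2/α * |x+y| := by
                    rw [abs_mul, abs_of_nonneg h2α]
                  rw [this]
                  have := abs_add_le x y
                  nlinarith
          · intro x _
            exact (((continuous_const.mul (Ffun_continuous C₀)).sub
              continuous_const).sub continuous_const).continuousOn
          · intro t ht x hx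
            have hF := abs_le.mp (hMF t (hsub ht))
            have hx' := hball x hx
            have hxB := abs_le.mp hx'
            have hx2 : x^2 ≤ (B+1)^2 := by nlinarith [sq_abs x, abs_nonneg x]
            have habs : |C₀ * x| ≤ |C₀| * (B+1) := by
              rw [abs_mul]; exact mul_le_mul_of_nonneg_left hx' (abs_nonneg C₀)
            have hC0x := abs_le.mp habs
            rw [Real.coe_toNNReal _ hCpos.le, Real.norm_eq_abs, abs_le]
            simp only [hvdef]
            constructor <;>
              nlinarith [mul_le_mul_of_nonneg_left hx2 h2α, sq_nonneg x,
                mul_nonneg h2α (sq_nonneg x), hCb]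
          · show (C.toNNReal : ℝ) * max (s' - s) (s - s) ≤ ((1 : NNReal) : ℝ) - ((0 : NNReal) : ℝ)
            rw [Real.coe_toNNReal _ hCpos.le, NNReal.coe_one, NNReal.coe_zero, sub_zero]
            have : max (s' - s) (s - s) = s' - s := by
              rw [max_eq_left]; linarith
            rw [this]
            calc C * (s' - s) ≤ C * τ := by nlinarith
              _ ≤ 1 := hCτ
        obtain ⟨w, hw0, hwd⟩ : ∃ w : ℝ → ℝ, w s = g s ∧
            ∀ t ∈ Icc s s', HasDerivWithinAt w (v t (w t)) (Icc s s') t :=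
          hpl.exists_eq_forall_mem_Icc_hasDerivWithinAt₀
        have hwc : ContinuousOn w (Icc s s') := fun t ht => (hwd t ht).continuousWithinAt
        have hwd' : ∀ t ∈ Ico s s', HasDerivWithinAt w (v t (w t)) (Ici t) t := by
          intro t ht
          exact deriv_transfer (hwd t ⟨ht.1, le_of_lt ht.2⟩) ht.1 ht.2
        -- invariance: w stays in [0, B]
        have hub : ∀ x ∈ Icc s s', w x ≤ B := by
          apply image_le_of_deriv_right_lt_deriv_boundary (B := fun _ => B) (B' := fun _ => 0)
            hwc hwd' (by rw [hw0]; exact hgsB) (fun x => hasDerivAt_const x B)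
          intro t ht heq
          rw [heq]
          exact hBkey t (hsub ⟨ht.1, le_of_lt ht.2⟩)
        have hlb : ∀ x ∈ Icc s s', 0 ≤ w x := by
          have : ∀ x ∈ Icc s s', -w x ≤ (fun _ => (0:ℝ)) x := by
            apply image_le_of_deriv_right_lt_deriv_boundary (B := fun _ => (0:ℝ))
              (B' := fun _ => 0) (f' := fun t => -(v t (w t)))
              (hwc.neg) (fun t ht => (hwd' t ht).neg)
              (by show -w s ≤ 0; rw [hw0]; simpa using hgs0) (fun x => hasDerivAt_const x 0)
            intro t ht heq
            have hwt : w t = 0 := by simpa using heq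
            have hFp := Ffun_pos C₀ (hsub ⟨ht.1, le_of_lt ht.2⟩).1
            have hv : v t (w t) = c * Ffun C₀ t := by
              simp only [hvdef]; rw [hwt]; ring
            rw [hv]
            have : 0 < c * Ffun C₀ t := by positivity
            linarith
          intro x hx
          have := this x hx
          simpa using this
        -- glue g and w
        set g1 : ℝ → ℝ := fun t => if t ≤ s then g t else w t with hg1def
        have hg1s : g1 s = g s := by simp [hg1def]
        have hws : w s = g s := hw0
        have he2 : min (((m+1:ℕ):ℝ)*τ) N = s' := by
          rw [hs'def, hsdef]; push_cast; ring_nf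
        rw [he2]
        have hbnd : ∀ t ∈ Icc (0:ℝ) s', 0 ≤ g1 t ∧ g1 t ≤ B := by
          intro t ht
          by_cases hts : t ≤ s
          · have := (hg t ⟨ht.1, hts⟩).1
            simpa [hg1def, hts] using this
          · have htmem : t ∈ Icc s s' := ⟨le_of_lt (not_le.mp hts), ht.2⟩
            have h1 := hlb t htmem
            have h2 := hub t htmem
            simpa [hg1def, hts] using ⟨h1, h2⟩
        refine ⟨g1, by simp [hg1def, hs0, hg0], fun t ht => ⟨hbnd t ht, ?_⟩⟩
        rcases lt_trichotomy t s with hts | hts | hts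
        · have hmem : t ∈ Icc (0:ℝ) s := ⟨ht.1, le_of_lt hts⟩
          have hd := (hg t hmem).2
          have hsubset : Icc (0:ℝ) s' ∩ Iio s ⊆ Icc 0 s := fun x hx => ⟨hx.1.1, le_of_lt hx.2⟩
          have heqt : g1 t = g t := by simp [hg1def, le_of_lt hts]
          have hd3 : HasDerivWithinAt g1 (v t (g t)) (Icc 0 s' ∩ Iio s) t :=
            (hd.mono hsubset).congr (fun x hx => by simp [hg1def, le_of_lt (mem_Iio.mp hx.2)]) heqt
          rw [heqt]
          exact hd3.mono_of_mem_nhdsWithin (inter_mem_nhdsWithin _ (Iio_mem_nhds hts))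
        · subst hts
          have hd1 : HasDerivWithinAt g1 (v s (g s)) (Icc 0 s) s :=
            ((hg s ⟨hs0, le_refl s⟩).2).congr (fun x hx => by simp [hg1def, hx.2])
              (by simp [hg1def])
          have hd2 : HasDerivWithinAt g1 (v s (g s)) (Icc s s') s := by
            have hder := hwd s ⟨le_refl s, hss'⟩
            rw [hws] at hder
            refine hder.congr (fun x hx => ?_) (by simp [hg1def, hws])
            by_cases hxs : x ≤ s
            · have hxeq : x = s := le_antisymm hxs hx.1
              simp [hg1def, hxeq, hws]
            · simp [hg1def, hxs]
          have hun := hd1.union hd2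
          rw [Icc_union_Icc_eq_Icc hs0 hss'] at hun
          have heqs : g1 s = g s := by simp [hg1def]
          rw [heqs]
          exact hun
        · have hmem : t ∈ Icc s s' := ⟨le_of_lt hts, ht.2⟩
          have hd := hwd t hmem
          have hsubset : Icc (0:ℝ) s' ∩ Ioi s ⊆ Icc s s' := fun x hx => ⟨le_of_lt hx.2, hx.1.2⟩
          have heqt : g1 t = w t := by simp [hg1def, not_le.mpr hts]
          have hd3 : HasDerivWithinAt g1 (v t (w t)) (Icc 0 s' ∩ Ioi s) t :=
            (hd.mono hsubset).congr (fun x hx => by simp [hg1def, not_le.mpr (mem_Ioi.mp hx.2)]) heqt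
          rw [heqt]
          exact hd3.mono_of_mem_nhdsWithin (inter_mem_nhdsWithin _ (Ioi_mem_nhds hts))
  obtain ⟨m, hm⟩ := exists_nat_ge (N / τ)
  have hmτ : N ≤ (m:ℝ) * τ := by
    rw [div_le_iff₀ hτ] at hm
    linarith
  obtain ⟨g, hg0, hg⟩ := main m
  rw [min_eq_right hmτ] at hg
  exact ⟨g, hg0, fun t ht => (hg t ht).2⟩

lemma g_exists_Ici (c C₀ α : ℝ) (hc : 0 < c) (hα : 0 < α) :
    ∃ g : ℝ → ℝ, g 0 = 0 ∧ ∀ t ∈ Ici (0:ℝ),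
      HasDerivWithinAt g (c * Ffun C₀ t - 2/α * (g t)^2 - C₀ * g t) (Ici 0) t := by
  choose gs hgs0 hgsd using fun n : ℕ => g_exists_Icc c C₀ α hc hα n (Nat.cast_nonneg n)
  have agree : ∀ (k l : ℕ) (x : ℝ), x ∈ Icc (0:ℝ) (min (k:ℝ) (l:ℝ)) → gs k x = gs l x := by
    intro k l x hx
    refine g_unique (C₀ := C₀) (φ := fun t => c * Ffun C₀ t) (N := min (k:ℝ) (l:ℝ)) hα
      (fun t ht => ?_) (fun t ht => ?_) (hgs0 k) (hgs0 l) x hx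
    · exact (hgsd k t ⟨ht.1, le_trans ht.2 (min_le_left _ _)⟩).mono
        (Icc_subset_Icc_right (min_le_left _ _))
    · exact (hgsd l t ⟨ht.1, le_trans ht.2 (min_le_right _ _)⟩).mono
        (Icc_subset_Icc_right (min_le_right _ _))
  refine ⟨fun t => gs (⌈t⌉₊ + 1) t, by simpa using hgs0 1, ?_⟩
  intro t ht
  set n : ℕ := ⌈t⌉₊ + 1 with hn
  have htn : t < (n:ℝ) := by
    rw [hn]; push_cast
    exact lt_of_le_of_lt (Nat.le_ceil t) (by linarith)
  have hagree : ∀ x ∈ Ici (0:ℝ) ∩ Iio (n:ℝ), gs (⌈x⌉₊ + 1) x = gs n x := by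
    intro x hx
    apply agree
    refine ⟨hx.1, le_min ?_ (le_of_lt hx.2)⟩
    push_cast
    exact le_trans (Nat.le_ceil x) (by linarith)
  have hd := hgsd n t ⟨ht, le_of_lt htn⟩
  have hsubset : Ici (0:ℝ) ∩ Iio (n:ℝ) ⊆ Icc 0 (n:ℝ) := fun x hx => ⟨hx.1, le_of_lt hx.2⟩
  have hGt : gs (⌈t⌉₊ + 1) t = gs n t := rfl
  have hd2 := (hd.mono hsubset).congr (fun x hx => hagree x hx) hGt
  have hgoal := hd2.mono_of_mem_nhdsWithin (inter_mem_nhdsWithin _ (Iio_mem_nhds htn))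
  simp only []
  rw [hGt]
  exact hgoal

/-- The forward ODE system of Proposition A.1: on a set `s ⊆ ℝ`,
`h' = (2g/α)·h` with `h 0 = h₀`, `f' = 1 + f·((a²σ_D²/(2I))·h − C₀)` with `f 0 = 1`,
and `g' = aσ_D²·f − (2/α)·g² + g·((a²σ_D²/(2I))·h − C₀)` with `g 0 = 0`. -/
def FwdSol (I : ℕ) (C₀ a σD α h₀ : ℝ) (h f g : ℝ → ℝ) (s : Set ℝ) : Prop :=
  h 0 = h₀ ∧ f 0 = 1 ∧ g 0 = 0 ∧
    ∀ t ∈ s,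
      HasDerivWithinAt h (2 * g t / α * h t) s t ∧
      HasDerivWithinAt f (1 + f t * (a ^ 2 * σD ^ 2 / (2 * (I : ℝ)) * h t - C₀)) s t ∧
      HasDerivWithinAt g
        (a * σD ^ 2 * f t - 2 / α * g t ^ 2 +
          g t * (a ^ 2 * σD ^ 2 / (2 * (I : ℝ)) * h t - C₀)) s t

/-- with initial value `h₀ = 0`, the forward ODE system has a unique solution on
all of `[0,∞)` (so `τ(0) = ∞`); it satisfies `h ≡ 0` and `f` is given explicitly. -/
theorem stmt1 (I : ℕ) (hI : 1 ≤ I) (C₀ T a σD α k : ℝ)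
    (hT : 0 < T) (ha : 0 < a) (hσD : 0 < σD) (hα : 0 < α) (hk : 0 < k) :
    (∃ h f g : ℝ → ℝ,
      FwdSol I C₀ a σD α 0 h f g (Ici 0) ∧
      ∀ t ∈ Ici (0 : ℝ), h t = 0 ∧
        f t = if C₀ = 0 then 1 + t else (1 + (C₀ - 1) * Real.exp (-C₀ * t)) / C₀) ∧
    (∀ h f g h' f' g' : ℝ → ℝ,
      FwdSol I C₀ a σD α 0 h f g (Ici 0) → FwdSol I C₀ a σD α 0 h' f' g' (Ici 0) →
      ∀ t ∈ Ici (0 : ℝ), h t = h' t ∧ f t = f' t ∧ g t = g' t) := by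
  have hsubIci : ∀ b : ℝ, Icc (0:ℝ) b ⊆ Ici 0 := fun b x hx => hx.1
  constructor
  · -- existence
    obtain ⟨g, hg0, hgd⟩ := g_exists_Ici (a*σD^2) C₀ α (by positivity) hα
    refine ⟨fun _ => 0, Ffun C₀, g, ⟨rfl, Ffun_zero C₀, hg0, ?_⟩, fun t ht => ⟨rfl, rfl⟩⟩
    intro t ht
    refine ⟨?_, ?_, ?_⟩
    · simpa using hasDerivWithinAt_const t (Ici (0:ℝ)) (0:ℝ)
    · have hdf := (hasDerivAt_Ffun C₀ t).hasDerivWithinAt (s := Ici 0)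
      refine hdf.congr_deriv ?_
      beta_reduce
      ring
    · have := hgd t ht
      convert this using 1
      simp only []
      ring
  · -- uniqueness
    have hzero : ∀ h f g : ℝ → ℝ, FwdSol I C₀ a σD α 0 h f g (Ici 0) →
        ∀ b ∈ Ici (0:ℝ), h b = 0 := by
      rintro h f g ⟨hh0, hf0, hg0, hder⟩ b hb
      have hgc : ContinuousOn g (Icc 0 b) := fun t htb =>
        (((hder t (hsubIci b htb)).2.2).mono (hsubIci b)).continuousWithinAt
      have hhc : ContinuousOn h (Icc 0 b) := fun t htb =>
        (((hder t (hsubIci b htb)).1).mono (hsubIci b)).continuousWithinAt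
      obtain ⟨K, hK⟩ := isCompact_Icc.exists_bound_of_continuousOn
        ((continuousOn_const.mul hgc).div_const α :
          ContinuousOn (fun t => 2 * g t / α) (Icc 0 b))
      refine gronwall_zero (K := K) (u' := fun t => 2 * g t / α * h t) hb hhc
        (fun t htb => ((hder t (mem_Ici.mpr htb.1)).1).mono (Ici_subset_Ici.mpr htb.1))
        hh0 (fun t htb => ?_)
      rw [abs_mul]
      refine mul_le_mul_of_nonneg_right ?_ (abs_nonneg _)
      have := hK t ⟨htb.1, le_of_lt htb.2⟩
      rwa [Real.norm_eq_abs] at this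
    rintro h f g h' f' g' hs1 hs2
    obtain ⟨hh0, hf0, hg0, hder⟩ := hs1
    obtain ⟨hh0', hf0', hg0', hder'⟩ := hs2
    have hz := hzero h f g ⟨hh0, hf0, hg0, hder⟩
    have hz' := hzero h' f' g' ⟨hh0', hf0', hg0', hder'⟩
    -- f equality
    have hfe : ∀ b ∈ Ici (0:ℝ), f b = f' b := by
      intro b hb
      have hfc : ContinuousOn (fun t => f t - f' t) (Icc 0 b) := fun t htb =>
        ((((hder t (hsubIci b htb)).2.1).sub ((hder' t (hsubIci b htb)).2.1)).mono
          (hsubIci b)).continuousWithinAt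
      have key := gronwall_zero (u := fun t => f t - f' t)
        (u' := fun t => (1 + f t * (a ^ 2 * σD ^ 2 / (2 * (I:ℝ)) * h t - C₀)) -
          (1 + f' t * (a ^ 2 * σD ^ 2 / (2 * (I:ℝ)) * h' t - C₀))) (K := |C₀|) hb hfc
        (fun t htb => (((hder t (mem_Ici.mpr htb.1)).2.1).sub
          ((hder' t (mem_Ici.mpr htb.1)).2.1)).mono (Ici_subset_Ici.mpr htb.1))
        (by rw [hf0, hf0']; ring) (fun t htb => ?_)
      · linarith [key, sub_eq_zero.mp key]
      · have he : (1 + f t * (a ^ 2 * σD ^ 2 / (2 * (I:ℝ)) * h t - C₀)) -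
            (1 + f' t * (a ^ 2 * σD ^ 2 / (2 * (I:ℝ)) * h' t - C₀))
            = -(C₀ * (f t - f' t)) := by
          rw [hz t (mem_Ici.mpr htb.1), hz' t (mem_Ici.mpr htb.1)]
          ring
        rw [he, abs_neg, abs_mul]
    -- g equality
    have hge : ∀ b ∈ Ici (0:ℝ), g b = g' b := by
      intro b hb
      refine g_unique (C₀ := C₀) (φ := fun t => a * σD ^ 2 * f t) (N := b) hα
        (fun t htb => ?_) (fun t htb => ?_) hg0 hg0' b ⟨hb, le_refl b⟩
      · have hd := ((hder t (hsubIci b htb)).2.2).mono (hsubIci b)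
        have hv : a * σD ^ 2 * f t - 2 / α * g t ^ 2 +
            g t * (a ^ 2 * σD ^ 2 / (2 * (I:ℝ)) * h t - C₀)
            = (fun t => a * σD ^ 2 * f t) t - 2/α * (g t)^2 - C₀ * g t := by
          rw [hz t (hsubIci b htb)]; simp only []; ring
        exact hv ▸ hd
      · have hd := ((hder' t (hsubIci b htb)).2.2).mono (hsubIci b)
        have hv : a * σD ^ 2 * f' t - 2 / α * g' t ^ 2 +
            g' t * (a ^ 2 * σD ^ 2 / (2 * (I:ℝ)) * h' t - C₀)
            = (fun t => a * σD ^ 2 * f t) t - 2/α * (g' t)^2 - C₀ * g' t := by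
          rw [hz' t (hsubIci b htb), ← hfe t (hsubIci b htb)]; simp only []; ring
        exact hv ▸ hd
    intro t ht
    exact ⟨by rw [hz t ht, hz' t ht], hfe t ht, hge t ht⟩
end

section
/- For any initial value h₀ ∈ ℝ, the component f of the maximal solution (h, f, g) of the forward ODE system satisfies f(t) > 0 for all t in the maximal interval of existence [0, τ(h₀)). -/
open Set Topology Filter

/-- for any initial value `h₀`, any solution of the forward ODE system on its
(maximal) interval of existence `[0,τ)` has `f > 0` there. -/
theorem stmt3 (I : ℕ) (hI : 1 ≤ I) (C₀ T a σD α k : ℝ)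
    (hT : 0 < T) (ha : 0 < a) (hσD : 0 < σD) (hα : 0 < α) (hk : 0 < k)
    (h₀ τ : ℝ) (hτ : 0 < τ) (h f g : ℝ → ℝ)
    (hsol : FwdSol I C₀ a σD α h₀ h f g (Ico 0 τ)) :
    ∀ t ∈ Ico (0 : ℝ) τ, 0 < f t := by
  obtain ⟨hh0, hf0, hg0, hderiv⟩ := hsol
  by_contra hcon
  push_neg at hcon
  obtain ⟨s₁, hs₁, hfs₁⟩ := hcon
  have hcont : ContinuousOn f (Ico 0 τ) := fun t ht =>
    ((hderiv t ht).2.1).continuousWithinAt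
  have hsub : Icc 0 s₁ ⊆ Ico 0 τ := fun t ht => ⟨ht.1, lt_of_le_of_lt ht.2 hs₁.2⟩
  set S : Set ℝ := Icc 0 s₁ ∩ f ⁻¹' Iic 0 with hS
  have hScl : IsClosed S :=
    (hcont.mono hsub).preimage_isClosed_of_isClosed isClosed_Icc isClosed_Iic
  have hs₁S : s₁ ∈ S := ⟨⟨hs₁.1, le_refl _⟩, hfs₁⟩
  have hbdd : BddBelow S := ⟨0, fun x hx => hx.1.1⟩
  set t₀ : ℝ := sInf S with ht₀
  have ht₀S : t₀ ∈ S := hScl.csInf_mem ⟨s₁, hs₁S⟩ hbdd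
  have hft₀le : f t₀ ≤ 0 := ht₀S.2
  have ht₀pos : 0 < t₀ := by
    rcases lt_or_eq_of_le ht₀S.1.1 with h' | h'
    · exact h'
    · exfalso; rw [← h', hf0] at hft₀le; linarith
  have ht₀mem : t₀ ∈ Ico 0 τ := hsub ht₀S.1
  have hlt : ∀ s ∈ Ioo (0:ℝ) t₀, 0 < f s := by
    intro s hs
    by_contra hle
    push_neg at hle
    have : s ∈ S := ⟨⟨hs.1.le, hs.2.le.trans ht₀S.1.2⟩, hle⟩
    exact absurd (csInf_le hbdd this) (not_le.mpr hs.2)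
  have hIoo : Ioo (0:ℝ) t₀ ⊆ Ico 0 τ := fun x hx =>
    ⟨hx.1.le, hx.2.trans ht₀mem.2⟩
  haveI : (𝓝[Ioo (0:ℝ) t₀] t₀).NeBot := right_nhdsWithin_Ioo_neBot ht₀pos
  -- f t₀ ≥ 0 from left continuity
  have hft₀ge : 0 ≤ f t₀ := by
    have htend : Filter.Tendsto f (𝓝[Ioo (0:ℝ) t₀] t₀) (𝓝 (f t₀)) :=
      ((hcont t₀ ht₀mem).mono hIoo).tendsto
    exact ge_of_tendsto htend (eventually_mem_nhdsWithin.mono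
      (fun x hx => (hlt x hx).le))
  have hft₀ : f t₀ = 0 := le_antisymm hft₀le hft₀ge
  -- derivative at t₀ is 1
  have hd : HasDerivWithinAt f 1 (Ico 0 τ) t₀ := by
    have := (hderiv t₀ ht₀mem).2.1
    rw [hft₀] at this
    simpa using this
  have hd' : HasDerivWithinAt f 1 (Ioo (0:ℝ) t₀) t₀ := hd.mono hIoo
  have hslope : Filter.Tendsto (slope f t₀) (𝓝[Ioo (0:ℝ) t₀ \ {t₀}] t₀) (𝓝 1) :=
    hasDerivWithinAt_iff_tendsto_slope.mp hd'
  have hdiff : Ioo (0:ℝ) t₀ \ {t₀} = Ioo 0 t₀ := by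
    apply diff_singleton_eq_self
    simp [mem_Ioo]
  rw [hdiff] at hslope
  have hle : (1:ℝ) ≤ 0 := by
    refine le_of_tendsto hslope (eventually_mem_nhdsWithin.mono ?_)
    intro x hx
    have hnum : 0 < f x - f t₀ := by rw [hft₀]; simpa using hlt x hx
    have hden : x - t₀ < 0 := sub_neg.mpr hx.2
    have : (f x - f t₀) / (x - t₀) < 0 := div_neg_of_pos_of_neg hnum hden
    simpa [slope_def_field, div_eq_iff] using this.le
  linarith
end

section
/- If h₀ ≥ 0, then the maximal solution (h, f, g) of the forward ODE system satisfies h(t) ≥ 0, g(t) ≥ 0, and f(t) ≥ C₁ > 0 for all t in the maximal interval of existence [0, τ(h₀)). -/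
open Set

/-- Restriction of a derivative within `Ico 0 τ` to `Ici x`. -/
lemma derivIci {τ x : ℝ} {φ : ℝ → ℝ} {d : ℝ} (hx0 : 0 ≤ x) (hxτ : x < τ)
    (H : HasDerivWithinAt φ d (Ico 0 τ) x) : HasDerivWithinAt φ d (Ici x) x :=
  H.mono_of_mem_nhdsWithin (mem_nhdsWithin.2
    ⟨Iio τ, isOpen_Iio, hxτ, fun z hz => ⟨hx0.trans hz.2, hz.1⟩⟩)

/-- If a function starts nonnegative and has strictly positive derivative at
each of its zeroes, it stays nonnegative. -/
lemma aux_nonneg {τ b : ℝ} {φ d : ℝ → ℝ}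
    (hd : ∀ t ∈ Ico (0:ℝ) τ, HasDerivWithinAt φ (d t) (Ico 0 τ) t)
    (h0 : 0 ≤ φ 0) (hbτ : b < τ)
    (hstrict : ∀ t ∈ Icc (0:ℝ) b, φ t = 0 → 0 < d t) :
    ∀ t ∈ Icc (0:ℝ) b, 0 ≤ φ t := by
  have hsub : Icc (0:ℝ) b ⊆ Ico 0 τ := fun z hz => ⟨hz.1, lt_of_le_of_lt hz.2 hbτ⟩
  have hcont : ContinuousOn φ (Icc 0 b) := fun z hz =>
    ((hd z (hsub hz)).continuousWithinAt).mono hsub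
  by_contra hcon
  push_neg at hcon
  obtain ⟨t₁, ht₁, hneg⟩ := hcon
  have hIccsub : Icc (0:ℝ) t₁ ⊆ Icc 0 b := Icc_subset_Icc le_rfl ht₁.2
  set Z : Set ℝ := Icc 0 t₁ ∩ φ ⁻¹' {0} with hZdef
  have hZne : Z.Nonempty := by
    rcases eq_or_lt_of_le h0 with he | hl
    · exact ⟨0, ⟨le_rfl, ht₁.1⟩, he.symm⟩
    · obtain ⟨s, hs, hφs⟩ := intermediate_value_Icc' ht₁.1 (hcont.mono hIccsub)
        ⟨hneg.le, hl.le⟩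
      exact ⟨s, hs, hφs⟩
  have hZclosed : IsClosed Z :=
    (hcont.mono hIccsub).preimage_isClosed_of_isClosed isClosed_Icc isClosed_singleton
  have hbdd : BddAbove Z := (bddAbove_Icc (a := (0:ℝ)) (b := t₁)).mono inter_subset_left
  set t₀ := sSup Z with ht₀def
  have ht₀Z : t₀ ∈ Z := hZclosed.csSup_mem hZne hbdd
  have hφt₀ : φ t₀ = 0 := ht₀Z.2
  have ht₀mem : t₀ ∈ Icc 0 t₁ := ht₀Z.1
  have ht₀lt : t₀ < t₁ := lt_of_le_of_ne ht₀mem.2 (by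
    intro he
    rw [he] at hφt₀
    exact hneg.ne hφt₀)
  have hnegIoc : ∀ z ∈ Ioc t₀ t₁, φ z < 0 := by
    intro z hz
    rcases lt_trichotomy (φ z) 0 with hc | hc | hc
    · exact hc
    · exact absurd (le_csSup hbdd ⟨⟨le_trans ht₀mem.1 hz.1.le, hz.2⟩, hc⟩) (not_le.2 hz.1)
    · obtain ⟨s, hs, hφs⟩ := intermediate_value_Icc' hz.2
        ((hcont.mono hIccsub).mono (Icc_subset_Icc (le_trans ht₀mem.1 hz.1.le) le_rfl))
        ⟨hneg.le, hc.le⟩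
      have hsZ : s ∈ Z := ⟨⟨le_trans (le_trans ht₀mem.1 hz.1.le) hs.1, hs.2⟩, hφs⟩
      exact absurd (le_csSup hbdd hsZ) (not_le.2 (lt_of_lt_of_le hz.1 hs.1))
  have hdpos : 0 < d t₀ := hstrict t₀ (hIccsub ht₀mem) hφt₀
  have hslope := hasDerivWithinAt_iff_tendsto_slope.1 (hd t₀ (hsub (hIccsub ht₀mem)))
  have hev : ∀ᶠ z in nhdsWithin t₀ (Ico 0 τ \ {t₀}), 0 < slope φ t₀ z :=
    hslope (IsOpen.mem_nhds isOpen_Ioi hdpos)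
  have hsub2 : Ioc t₀ t₁ ⊆ Ico 0 τ \ {t₀} := fun z hz =>
    ⟨⟨le_trans ht₀mem.1 hz.1.le,
      lt_of_le_of_lt (hz.2.trans ht₁.2) hbτ⟩, ne_of_gt hz.1⟩
  have hNB : (nhdsWithin t₀ (Ioc t₀ t₁)).NeBot := by
    refine mem_closure_iff_nhdsWithin_neBot.1 ?_
    rw [closure_Ioc ht₀lt.ne]
    exact ⟨le_rfl, ht₀lt.le⟩
  obtain ⟨z, hz0, hzmem⟩ :=
    ((hev.filter_mono (nhdsWithin_mono t₀ hsub2)).and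
      (eventually_mem_nhdsWithin)).exists
  have hzneg : slope φ t₀ z < 0 := by
    rw [slope_def_field, hφt₀, sub_zero]
    exact div_neg_of_neg_of_pos (hnegIoc z hzmem) (sub_pos.2 hzmem.1)
  linarith

/-- if `h₀ ≥ 0` then the solution of the forward ODE system satisfies
`h ≥ 0`, `g ≥ 0` and `f ≥ C₁ > 0` on its (maximal) interval of existence `[0,τ)`. -/
theorem stmt4 (I : ℕ) (hI : 1 ≤ I) (C₀ T a σD α k : ℝ)
    (hT : 0 < T) (ha : 0 < a) (hσD : 0 < σD) (hα : 0 < α) (hk : 0 < k)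
    (h₀ τ : ℝ) (hh₀ : 0 ≤ h₀) (hτ : 0 < τ) (h f g : ℝ → ℝ)
    (hsol : FwdSol I C₀ a σD α h₀ h f g (Ico 0 τ))
    (C₁ : ℝ) (hC₁ : C₁ = if C₀ ≤ 1 then 1 else 1 / C₀) :
    0 < C₁ ∧ ∀ t ∈ Ico (0 : ℝ) τ, 0 ≤ h t ∧ 0 ≤ g t ∧ C₁ ≤ f t := by
  obtain ⟨hh0, hf0, hg0, hder⟩ := hsol
  have hI0 : (0:ℝ) < (I:ℝ) := by exact_mod_cast hI
  set κ : ℝ := a ^ 2 * σD ^ 2 / (2 * (I:ℝ)) with hκdef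
  have hκpos : 0 < κ := div_pos (by positivity) (by positivity)
  have hC₁pos : 0 < C₁ := by
    rw [hC₁]; split_ifs with hc
    · norm_num
    · exact one_div_pos.2 (lt_trans one_pos (not_le.1 hc))
  have hconth : ContinuousOn h (Ico 0 τ) := fun z hz => ((hder z hz).1).continuousWithinAt
  have hcontf : ContinuousOn f (Ico 0 τ) := fun z hz => ((hder z hz).2.1).continuousWithinAt
  have hcontg : ContinuousOn g (Ico 0 τ) := fun z hz => ((hder z hz).2.2).continuousWithinAt
  refine ⟨hC₁pos, fun t ht => ?_⟩
  obtain ⟨ht0, htτ⟩ := ht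
  have hsubt : Icc (0:ℝ) t ⊆ Ico 0 τ := fun z hz => ⟨hz.1, lt_of_le_of_lt hz.2 htτ⟩
  -- Step A : h ≥ 0 on [0,t]
  have hA : ∀ s ∈ Icc (0:ℝ) t, 0 ≤ h s := by
    by_contra hcon
    push_neg at hcon
    obtain ⟨t₁, ht₁, hneg⟩ := hcon
    have hsub1 : Icc (0:ℝ) t₁ ⊆ Ico 0 τ := fun z hz =>
      ⟨hz.1, lt_of_le_of_lt (hz.2.trans ht₁.2) htτ⟩
    obtain ⟨t₀, ht₀, hzero⟩ : ∃ t₀ ∈ Icc (0:ℝ) t₁, h t₀ = 0 := by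
      rcases eq_or_lt_of_le hh₀ with he | hl
      · exact ⟨0, ⟨le_rfl, ht₁.1⟩, by rw [hh0, ← he]⟩
      · obtain ⟨s, hs, hφs⟩ := intermediate_value_Icc' ht₁.1 (hconth.mono hsub1)
          ⟨hneg.le, by rw [hh0]; exact hl.le⟩
        exact ⟨s, hs, hφs⟩
    have hsub2 : Icc t₀ t₁ ⊆ Ico 0 τ := fun z hz =>
      hsub1 ⟨ht₀.1.trans hz.1, hz.2⟩
    obtain ⟨K, hK⟩ : ∃ K, ∀ s ∈ Icc t₀ t₁, ‖2 * g s / α‖ ≤ K :=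
      isCompact_Icc.exists_bound_of_continuousOn
        ((continuousOn_const.mul (hcontg.mono hsub2)).div_const α)
    have hgr := norm_le_gronwallBound_of_norm_deriv_right_le
      (f := h) (f' := fun s => 2 * g s / α * h s) (δ := 0) (K := K) (ε := 0)
      (a := t₀) (b := t₁)
      (hconth.mono hsub2)
      (fun x hx => derivIci (ht₀.1.trans hx.1)
        (lt_of_lt_of_le hx.2 (ht₁.2.trans htτ.le))
        (hder x (hsub2 ⟨hx.1, hx.2.le⟩)).1)
      (by rw [hzero]; simp)
      (fun x hx => by
        rw [norm_mul, add_zero]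
        exact mul_le_mul_of_nonneg_right (hK x ⟨hx.1, hx.2.le⟩) (norm_nonneg _))
      t₁ ⟨ht₀.2, le_rfl⟩
    rw [gronwallBound_ε0, zero_mul] at hgr
    have : h t₁ = 0 := norm_le_zero_iff.1 hgr
    linarith
  -- Step B : f ≥ 0 on [0,t]
  have hB0 : ∀ s ∈ Icc (0:ℝ) t, 0 ≤ f s := by
    refine aux_nonneg (d := fun s => 1 + f s * (κ * h s - C₀))
      (fun s hs => (hder s hs).2.1) (by rw [hf0]; norm_num) htτ ?_
    intro s _ hfs
    show 0 < 1 + f s * (κ * h s - C₀)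
    rw [hfs]
    norm_num
  -- Step C : f ≥ B on [0,t] where B = gronwallBound 1 (-C₀) 1
  set B : ℝ → ℝ := fun s => gronwallBound 1 (-C₀) 1 s with hBdef
  have hBder : ∀ x : ℝ, HasDerivAt B (-C₀ * B x + 1) x := fun x =>
    hasDerivAt_gronwallBound 1 (-C₀) 1 x
  have hBcont : Continuous B := by
    refine continuous_iff_continuousAt.2 fun x => (hBder x).continuousAt
  have hC : ∀ s ∈ Icc (0:ℝ) t, B s - f s ≤ 0 := by
    have := le_gronwallBound_of_liminf_deriv_right_le
      (f := fun s => B s - f s)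
      (f' := fun s => (-C₀ * B s + 1) - (1 + f s * (κ * h s - C₀)))
      (δ := 0) (K := -C₀) (ε := 0) (a := 0) (b := t)
      (hBcont.continuousOn.sub (hcontf.mono hsubt))
      (fun x hx r hr => by
        have hD : HasDerivWithinAt (fun s => B s - f s)
            ((-C₀ * B x + 1) - (1 + f x * (κ * h x - C₀))) (Ici x) x :=
          ((hBder x).hasDerivWithinAt).sub
            (derivIci hx.1 (lt_of_lt_of_le hx.2 htτ.le)
              (hder x (hsubt ⟨hx.1, hx.2.le⟩)).2.1)
        exact hD.liminf_right_slope_le hr)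
      (by simp [hBdef, gronwallBound_x0, hf0])
      (fun x hx => by
        have h1 : 0 ≤ f x := hB0 x ⟨hx.1, hx.2.le⟩
        have h2 : 0 ≤ h x := hA x ⟨hx.1, hx.2.le⟩
        have h3 : 0 ≤ κ * (f x * h x) := by positivity
        show -C₀ * B x + 1 - (1 + f x * (κ * h x - C₀)) ≤ -C₀ * (B x - f x) + 0
        nlinarith [h3])
    intro s hs
    have := this s ⟨hs.1, hs.2⟩
    rwa [sub_zero, gronwallBound_ε0, zero_mul] at this
  -- Step D : B ≥ C₁ on [0,∞)
  have hD : ∀ s : ℝ, 0 ≤ s → C₁ ≤ B s := by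
    intro s hs
    by_cases hC0 : C₀ = 0
    · have : B s = 1 + 1 * s := by
        rw [hBdef]
        simp only [hC0, neg_zero]
        rw [gronwallBound_K0]
      rw [this, hC₁, if_pos (by norm_num [hC0])]
      linarith
    · have hBs : B s = 1 * Real.exp (-C₀ * s) + 1 / (-C₀) * (Real.exp (-C₀ * s) - 1) := by
        rw [hBdef, gronwallBound_of_K_ne_0 (neg_ne_zero.2 hC0)]
      set E := Real.exp (-C₀ * s) with hE
      have hEpos : 0 < E := Real.exp_pos _
      rw [hBs, hC₁]
      split_ifs with hle
      · rcases lt_or_gt_of_ne hC0 with hcneg | hcpos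
        · have hE1 : 1 ≤ E := Real.one_le_exp (by nlinarith)
          have h2 : 0 < -C₀ := by linarith
          have := mul_nonneg (le_of_lt (one_div_pos.2 h2)) (sub_nonneg.2 hE1)
          linarith
        · have hE1 : E ≤ 1 := by
            rw [hE, show (1:ℝ) = Real.exp 0 by rw [Real.exp_zero]]
            exact Real.exp_le_exp.2 (by nlinarith)
          have heq : 1 / (-C₀) * (E - 1) = (1 - E) / C₀ := by
            field_simp [hC0]; ring
          rw [heq]
          have : 1 - E ≤ (1 - E) / C₀ := by
            rw [le_div_iff₀ hcpos]
            nlinarith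
          linarith
      · have h2 : (0:ℝ) < C₀ := by linarith [not_le.1 hle]
        have heq : 1 / (-C₀) * (E - 1) = (1 - E) / C₀ := by
          field_simp [hC0]; ring
        rw [heq, div_le_iff₀ h2, one_mul]
        have h3 : 1 < C₀ := not_le.1 hle
        have h4 : (E + (1 - E) / C₀) * C₀ = E * C₀ + (1 - E) := by
          field_simp
        rw [h4]
        nlinarith
  have hFC₁ : ∀ s ∈ Icc (0:ℝ) t, C₁ ≤ f s := fun s hs =>
    le_trans (hD s hs.1) (by linarith [hC s hs])
  -- Step E : g ≥ 0 on [0,t]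
  have hE : ∀ s ∈ Icc (0:ℝ) t, 0 ≤ g s := by
    refine aux_nonneg
      (d := fun s => a * σD ^ 2 * f s - 2 / α * g s ^ 2 + g s * (κ * h s - C₀))
      (fun s hs => (hder s hs).2.2) (by rw [hg0]) htτ ?_
    intro s hsmem hgs
    show 0 < a * σD ^ 2 * f s - 2 / α * g s ^ 2 + g s * (κ * h s - C₀)
    rw [hgs]
    have hfs : 0 < f s := lt_of_lt_of_le hC₁pos (hFC₁ s hsmem)
    have : 0 < a * σD ^ 2 * f s := by positivity
    simpa using this
  exact ⟨hA t ⟨ht0, le_rfl⟩, hE t ⟨ht0, le_rfl⟩, hFC₁ t ⟨ht0, le_rfl⟩⟩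
end

section
/- If h₀ ≥ 0, then the component g of the maximal solution (h, f, g) of the forward ODE system satisfies the global lower bound g(t) ≥ min((a σ_D² C₁/2)·t, C₂) for all t in the maximal interval of existence [0, τ(h₀)). -/
open Set

lemma lowerBarrier {y Y B B' : ℝ → ℝ} {a b : ℝ}
    (hy : ContinuousOn y (Icc a b))
    (hy' : ∀ x ∈ Ico a b, HasDerivWithinAt y (Y x) (Ici x) x)
    (hB : ContinuousOn B (Icc a b))
    (hB' : ∀ x ∈ Ico a b, HasDerivWithinAt B (B' x) (Ici x) x)
    (hab : B a ≤ y a)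
    (bound : ∀ x ∈ Ico a b, y x = B x → B' x < Y x) :
    ∀ x ∈ Icc a b, B x ≤ y x := by
  intro x hx
  have H := image_le_of_deriv_right_lt_deriv_boundary' (f := fun z => -y z)
    (f' := fun z => -Y z) (B := fun z => -B z) (B' := fun z => -B' z)
    hy.neg (fun z hz => (hy' z hz).neg) (by simpa using hab) hB.neg
    (fun z hz => (hB' z hz).neg)
    (fun z hz hc => by
      have hyz : y z = B z := by linarith
      have := bound z hz hyz
      linarith) hx
  linarith

/-- positivity preservation via exponential barriers. -/
lemma nonneg_barrier {y Y : ℝ → ℝ} {t K : ℝ}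
    (hy : ContinuousOn y (Icc 0 t))
    (hy' : ∀ x ∈ Ico 0 t, HasDerivWithinAt y (Y x) (Ici x) x)
    (h0 : 0 ≤ y 0)
    (hbound : ∀ x ∈ Ico 0 t, -1 < y x → y x < 0 → K * y x < Y x) :
    ∀ x ∈ Icc 0 t, 0 ≤ y x := by
  intro x hx
  by_contra hneg
  push_neg at hneg
  have hxt : x ≤ t := hx.2
  have hx0 : 0 ≤ x := hx.1
  set c : ℝ := max K 0 + 1 with hc_def
  have hc : (0:ℝ) < c := by
    have := le_max_right K 0
    simp only [hc_def]; linarith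
  have hKc : K ≤ c := by
    have := le_max_left K 0
    simp only [hc_def]; linarith
  have hExpos : ∀ z : ℝ, (0:ℝ) < Real.exp (c * z) := fun z => Real.exp_pos _
  set ε : ℝ := min (Real.exp (-(c * t)) / 2) (-(y x) / (2 * Real.exp (c * x))) with hε_def
  have hε : 0 < ε := by
    apply lt_min
    · positivity
    · apply div_pos (by linarith) (by positivity)
  have main : ∀ z ∈ Icc (0:ℝ) t, -(y z) ≤ ε * Real.exp (c * z) := by
    intro z hz
    refine image_le_of_deriv_right_lt_deriv_boundary' (f := fun w => -(y w))
      (f' := fun w => -(Y w)) (B := fun w => ε * Real.exp (c * w))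
      (B' := fun w => ε * (Real.exp (c * w) * c)) hy.neg
      (fun w hw => (hy' w hw).neg) ?_ ?_ ?_ ?_ hz
    · simp only [mul_zero, Real.exp_zero, mul_one]; linarith
    · exact (Real.continuous_exp.comp (continuous_const.mul continuous_id)).continuousOn.const_smul ε
    · intro w _
      have hd : HasDerivAt (fun u : ℝ => ε * Real.exp (c * u))
          (ε * (Real.exp (c * w) * c)) w := by
        have h1 : HasDerivAt (fun u : ℝ => c * u) c w := by
          simpa using (hasDerivAt_id w).const_mul c
        exact (h1.exp).const_mul ε
      exact hd.hasDerivWithinAt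
    · intro w hw hcw
      have hEw := hExpos w
      have hyw : y w = -(ε * Real.exp (c * w)) := by linarith
      have hyw0 : y w < 0 := by nlinarith
      have hyw1 : -1 < y w := by
        have h1 : Real.exp (c * w) ≤ Real.exp (c * t) := by
          apply Real.exp_le_exp.2
          exact mul_le_mul_of_nonneg_left hw.2.le hc.le
        have h2 : ε ≤ Real.exp (-(c * t)) / 2 := min_le_left _ _
        have h3 : Real.exp (-(c * t)) * Real.exp (c * t) = 1 := by
          rw [← Real.exp_add]; simp
        have h4 : ε * Real.exp (c * w) < 1 := by nlinarith [Real.exp_pos (-(c*t))]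
        linarith
      have hb := hbound w hw hyw1 hyw0
      rw [hyw] at hb
      nlinarith [mul_pos hε hEw, mul_le_mul_of_nonneg_right hKc (mul_pos hε hEw).le]
  have h1 := main x hx
  have h2 : ε ≤ -(y x) / (2 * Real.exp (c * x)) := min_le_right _ _
  have hEx := hExpos x
  have h3 : ε * Real.exp (c * x) ≤ -(y x) / 2 := by
    rw [le_div_iff₀ (by positivity : (0:ℝ) < 2 * Real.exp (c * x))] at h2
    nlinarith
  linarith

set_option maxHeartbeats 1000000 in
/-- if `h₀ ≥ 0` then `g` satisfies the global lower bound
`g t ≥ min ((a σ_D² C₁/2)·t) C₂` on the (maximal) interval of existence `[0,τ)`. -/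
theorem stmt5 (I : ℕ) (hI : 1 ≤ I) (C₀ T a σD α k : ℝ)
    (hT : 0 < T) (ha : 0 < a) (hσD : 0 < σD) (hα : 0 < α) (hk : 0 < k)
    (h₀ τ : ℝ) (hh₀ : 0 ≤ h₀) (hτ : 0 < τ) (h f g : ℝ → ℝ)
    (hsol : FwdSol I C₀ a σD α h₀ h f g (Ico 0 τ))
    (C₁ : ℝ) (hC₁ : C₁ = if C₀ ≤ 1 then 1 else 1 / C₀)
    (C₂ : ℝ) (hC₂ : C₂ = if C₀ < 0 then -(α * C₀) / 2
      else α * (-C₀ + Real.sqrt (C₀ ^ 2 + 4 * a * σD ^ 2 * C₁ / α)) / 4) :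
    ∀ t ∈ Ico (0 : ℝ) τ, min (a * σD ^ 2 * C₁ / 2 * t) C₂ ≤ g t := by
  obtain ⟨hh0, hf0, hg0, hderiv⟩ := hsol
  set lam : ℝ := a ^ 2 * σD ^ 2 / (2 * (I : ℝ)) with hlam_def
  have hI' : (0:ℝ) < (I : ℝ) := by exact_mod_cast hI
  have hlam : 0 ≤ lam := by positivity
  have hC₁pos : 0 < C₁ := by
    rw [hC₁]; split_ifs with hco
    · norm_num
    · push_neg at hco; exact one_div_pos.2 (by linarith)
  have hC₁C₀ : C₁ * C₀ ≤ 1 := by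
    rw [hC₁]; split_ifs with hco
    · linarith
    · push_neg at hco
      rw [one_div, inv_mul_cancel₀ (by linarith : C₀ ≠ 0)]
  have haσ : 0 < a * σD ^ 2 := by positivity
  have hC₁le1 : C₁ ≤ 1 := by
    rw [hC₁]; split_ifs with hco
    · exact le_rfl
    · push_neg at hco
      rw [div_le_one (by linarith : (0:ℝ) < C₀)]; linarith
  have hcpos : 0 < a * σD ^ 2 * C₁ / 2 := by positivity
  -- C₂ facts
  have hC₂pos : 0 < C₂ := by
    rw [hC₂]; split_ifs with hco
    · nlinarith
    · push_neg at hco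
      have hrad : (0:ℝ) ≤ C₀ ^ 2 + 4 * a * σD ^ 2 * C₁ / α := by positivity
      have hs0 := Real.sqrt_nonneg (C₀ ^ 2 + 4 * a * σD ^ 2 * C₁ / α)
      have hs2 := Real.sq_sqrt hrad
      have hpos : 0 < 4 * a * σD ^ 2 * C₁ / α := by positivity
      have hsC₀ : C₀ < Real.sqrt (C₀ ^ 2 + 4 * a * σD ^ 2 * C₁ / α) := by
        nlinarith
      apply div_pos (mul_pos hα (by linarith)) (by norm_num)
  have hquad : ∀ x : ℝ, 0 ≤ x → x ≤ C₂ → 2 / α * x ^ 2 + C₀ * x ≤ a * σD ^ 2 * C₁ / 2 := by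
    intro x hx0 hxC₂
    rcases lt_or_ge C₀ 0 with hco | hco
    · rw [hC₂, if_pos hco] at hxC₂
      have h1 : 2 / α * x ≤ -C₀ := by
        rw [div_mul_eq_mul_div, div_le_iff₀ hα]
        nlinarith
      have h2 : x * (2 / α * x + C₀) ≤ 0 :=
        mul_nonpos_of_nonneg_of_nonpos hx0 (by linarith)
      nlinarith
    · rw [hC₂, if_neg (not_lt.2 hco)] at hxC₂
      set s : ℝ := Real.sqrt (C₀ ^ 2 + 4 * a * σD ^ 2 * C₁ / α) with hs_def
      have hrad : (0:ℝ) ≤ C₀ ^ 2 + 4 * a * σD ^ 2 * C₁ / α := by positivity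
      have hs2 : s ^ 2 = C₀ ^ 2 + 4 * a * σD ^ 2 * C₁ / α := Real.sq_sqrt hrad
      have hs0 : 0 ≤ s := Real.sqrt_nonneg _
      have h4 : α * s ^ 2 = α * C₀ ^ 2 + 4 * a * σD ^ 2 * C₁ := by
        rw [hs2]; field_simp
      have h5 : x ^ 2 ≤ (α * (-C₀ + s) / 4) ^ 2 := pow_le_pow_left₀ hx0 hxC₂ 2
      have h6 : α * C₀ * x ≤ α * C₀ * (α * (-C₀ + s) / 4) :=
        mul_le_mul_of_nonneg_left hxC₂ (mul_nonneg hα.le hco)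
      have h4' : α * (α * s ^ 2) = α * (α * C₀ ^ 2 + 4 * a * σD ^ 2 * C₁) := by rw [h4]
      have key2 : 2 * x ^ 2 + α * C₀ * x ≤ α * (a * σD ^ 2 * C₁ / 2) := by
        nlinarith [h4', h5, h6]
      have key : α * (2 / α * x ^ 2 + C₀ * x) = 2 * x ^ 2 + α * C₀ * x := by
        field_simp
      have key3 : α * (2 / α * x ^ 2 + C₀ * x) ≤ α * (a * σD ^ 2 * C₁ / 2) := by
        rw [key]; exact key2
      exact le_of_mul_le_mul_left key3 hα
  -- fix t
  intro t ht
  obtain ⟨ht0, htτ⟩ := ht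
  have hsub : Icc (0:ℝ) t ⊆ Ico 0 τ := fun x hx => ⟨hx.1, lt_of_le_of_lt hx.2 htτ⟩
  -- derivatives within Ici x
  have hmem : ∀ x ∈ Ico (0:ℝ) τ, Ico (0:ℝ) τ ∈ nhdsWithin x (Ici x) := by
    intro x hx
    exact mem_nhdsWithin.2 ⟨Iio τ, isOpen_Iio, hx.2,
      fun y hy => ⟨hx.1.trans hy.2, hy.1⟩⟩
  have hdh : ∀ x ∈ Ico (0:ℝ) τ, HasDerivWithinAt h (2 * g x / α * h x) (Ici x) x :=
    fun x hx => ((hderiv x hx).1).mono_of_mem_nhdsWithin (hmem x hx)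
  have hdf : ∀ x ∈ Ico (0:ℝ) τ,
      HasDerivWithinAt f (1 + f x * (lam * h x - C₀)) (Ici x) x :=
    fun x hx => ((hderiv x hx).2.1).mono_of_mem_nhdsWithin (hmem x hx)
  have hdg : ∀ x ∈ Ico (0:ℝ) τ,
      HasDerivWithinAt g (a * σD ^ 2 * f x - 2 / α * g x ^ 2 + g x * (lam * h x - C₀))
        (Ici x) x :=
    fun x hx => ((hderiv x hx).2.2).mono_of_mem_nhdsWithin (hmem x hx)
  -- continuity on Icc 0 t
  have hconth : ContinuousOn h (Icc 0 t) :=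
    fun x hx => (((hderiv x (hsub hx)).1).continuousWithinAt).mono hsub
  have hcontf : ContinuousOn f (Icc 0 t) :=
    fun x hx => (((hderiv x (hsub hx)).2.1).continuousWithinAt).mono hsub
  have hcontg : ContinuousOn g (Icc 0 t) :=
    fun x hx => (((hderiv x (hsub hx)).2.2).continuousWithinAt).mono hsub
  -- bound on coefficients
  obtain ⟨K, hK⟩ := isCompact_Icc.exists_bound_of_continuousOn
    (f := fun x => 2 * g x / α) (by fun_prop)
  obtain ⟨M, hM⟩ := isCompact_Icc.exists_bound_of_continuousOn
    (f := fun x => lam * h x - C₀) (by fun_prop (disch := assumption))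
  -- Step A : h ≥ 0 on Icc 0 t
  have hhnn : ∀ x ∈ Icc (0:ℝ) t, 0 ≤ h x := by
    apply nonneg_barrier (Y := fun x => 2 * g x / α * h x) (K := K + 1) hconth
      (fun x hx => hdh x (hsub (Ico_subset_Icc_self hx))) (by rw [hh0]; exact hh₀)
    intro x hx _ hx0
    have h1 : |2 * g x / α| ≤ K := by
      have := hK x (Ico_subset_Icc_self hx); rwa [Real.norm_eq_abs] at this
    have h2 := abs_le.1 h1
    nlinarith [h2.1, h2.2]
  -- Step B1 : f ≥ 0
  have hMnn : ∀ x ∈ Icc (0:ℝ) t, |lam * h x - C₀| ≤ M := by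
    intro x hx; simpa using hM x hx
  have hfnn : ∀ x ∈ Icc (0:ℝ) t, 0 ≤ f x := by
    apply nonneg_barrier (Y := fun x => 1 + f x * (lam * h x - C₀)) (K := M) hcontf
      (fun x hx => hdf x (hsub (Ico_subset_Icc_self hx))) (by rw [hf0]; norm_num)
    intro x hx _ hx0
    have h2 := abs_le.1 (hMnn x (Ico_subset_Icc_self hx))
    nlinarith [h2.1, h2.2]
  -- Step B2 : f ≥ C₁
  have hfC₁ : ∀ x ∈ Icc (0:ℝ) t, C₁ ≤ f x := by
    intro x hx
    by_contra hcon
    push_neg at hcon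
    set ε : ℝ := (C₁ - f x) / 2 with hε_def
    have hε : 0 < ε := by simp only [hε_def]; linarith
    have main : ∀ z ∈ Icc (0:ℝ) t, C₁ - ε ≤ f z := by
      apply lowerBarrier (Y := fun z => 1 + f z * (lam * h z - C₀))
        (B := fun _ => C₁ - ε) (B' := fun _ => 0) hcontf
        (fun z hz => hdf z (hsub (Ico_subset_Icc_self hz))) continuousOn_const
        (fun z _ => hasDerivWithinAt_const _ _ _) (by show C₁ - ε ≤ f 0; rw [hf0]; linarith)
      intro z hz hcz
      try dsimp only [] at hcz ⊢
      have hfz : 0 ≤ f z := hfnn z (Ico_subset_Icc_self hz)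
      have hhz : 0 ≤ h z := hhnn z (Ico_subset_Icc_self hz)
      rcases le_or_gt C₀ 0 with hco | hco
      · nlinarith [mul_nonneg (mul_nonneg hfz hlam) hhz, mul_nonpos_of_nonneg_of_nonpos hfz hco]
      · nlinarith [mul_nonneg (mul_nonneg hfz hlam) hhz]
    have := main x hx
    simp only [hε_def] at this
    linarith
  -- Step C1 : g ≥ 0
  have hgnn : ∀ x ∈ Icc (0:ℝ) t, 0 ≤ g x := by
    apply nonneg_barrier
      (Y := fun x => a * σD ^ 2 * f x - 2 / α * g x ^ 2 + g x * (lam * h x - C₀))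
      (K := 2 / α + M) hcontg
      (fun x hx => hdg x (hsub (Ico_subset_Icc_self hx))) (by rw [hg0])
    intro x hx hxm1 hx0
    have h2 := abs_le.1 (hMnn x (Ico_subset_Icc_self hx))
    have h3 : C₁ ≤ f x := hfC₁ x (Ico_subset_Icc_self hx)
    have h4 : a * σD ^ 2 * C₁ ≤ a * σD ^ 2 * f x :=
      mul_le_mul_of_nonneg_left h3 haσ.le
    have h5 : g x ^ 2 ≤ -(g x) := by nlinarith
    have h6 : 2 / α * g x ^ 2 ≤ 2 / α * (-(g x)) :=
      mul_le_mul_of_nonneg_left h5 (by positivity)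
    have h7 : g x * (lam * h x - C₀) ≥ g x * M :=
      mul_le_mul_of_nonpos_left h2.2 hx0.le
    nlinarith
  -- main quantitative bound
  have main2 : ∀ ε : ℝ, 0 < ε → ε < a * σD ^ 2 * C₁ / 2 →
      min (a * σD ^ 2 * C₁ / 2 * t) C₂ - ε * t ≤ g t := by
    intro ε hε hεc
    set ce : ℝ := a * σD ^ 2 * C₁ / 2 - ε with hce_def
    have hce : 0 < ce := by simp only [hce_def]; linarith
    set s₁ : ℝ := C₂ / ce with hs₁_def
    have hs₁ : 0 < s₁ := div_pos hC₂pos hce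
    have hces₁ : ce * s₁ = C₂ := by
      rw [hs₁_def]; field_simp [hce.ne']
    -- contact estimate, valid whenever 0 ≤ g z ≤ C₂
    have contact : ∀ z ∈ Ico (0:ℝ) t, 0 ≤ g z → g z ≤ C₂ →
        a * σD ^ 2 * C₁ / 2 ≤
          a * σD ^ 2 * f z - 2 / α * g z ^ 2 + g z * (lam * h z - C₀) := by
      intro z hz hgz0 hgzC₂
      have h3 : C₁ ≤ f z := hfC₁ z (Ico_subset_Icc_self hz)
      have h4 : a * σD ^ 2 * C₁ ≤ a * σD ^ 2 * f z :=
        mul_le_mul_of_nonneg_left h3 haσ.le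
      have h5 := hquad (g z) hgz0 hgzC₂
      have h6 : 0 ≤ g z * (lam * h z) :=
        mul_nonneg hgz0 (mul_nonneg hlam (hhnn z (Ico_subset_Icc_self hz)))
      nlinarith
    -- piece 1 : g z ≥ ce * z on [0, min t s₁]
    have piece1 : ∀ z ∈ Icc (0:ℝ) (min t s₁), ce * z ≤ g z := by
      apply lowerBarrier
        (Y := fun z => a * σD ^ 2 * f z - 2 / α * g z ^ 2 + g z * (lam * h z - C₀))
        (B := fun z => ce * z) (B' := fun _ => ce)
        (hcontg.mono (Icc_subset_Icc_right (min_le_left _ _)))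
        (fun z hz => hdg z (hsub ⟨hz.1, hz.2.le.trans (min_le_left _ _)⟩))
        (by fun_prop)
        (fun z _ => by simpa using (hasDerivWithinAt_id z (Ici z)).const_mul ce)
        (by rw [hg0]; simp)
      intro z hz hcz
      try dsimp only [] at hcz ⊢
      have hz' : z ∈ Ico (0:ℝ) t := ⟨hz.1, lt_of_lt_of_le hz.2 (min_le_left _ _)⟩
      have hgz0 : 0 ≤ g z := by rw [hcz]; exact mul_nonneg hce.le hz.1
      have hgzC₂ : g z ≤ C₂ := by
        rw [hcz, ← hces₁]
        exact mul_le_mul_of_nonneg_left (le_of_lt (lt_of_lt_of_le hz.2 (min_le_right _ _))) hce.le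
      have := contact z hz' hgz0 hgzC₂
      simp only [hce_def] at *
      linarith
    rcases le_or_gt t s₁ with hts | hts
    · -- t ≤ s₁ : use piece 1 at t
      have h1 := piece1 t ⟨ht0, le_min le_rfl hts⟩
      have h2 : min (a * σD ^ 2 * C₁ / 2 * t) C₂ ≤ a * σD ^ 2 * C₁ / 2 * t := min_le_left _ _
      simp only [hce_def] at h1
      nlinarith
    · -- s₁ < t : piece 2 on [s₁, t] with constant barrier C₂
      have hgs₁ : C₂ ≤ g s₁ := by
        have := piece1 s₁ ⟨hs₁.le, le_min hts.le le_rfl⟩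
        rwa [hces₁] at this
      have piece2 : ∀ z ∈ Icc s₁ t, C₂ ≤ g z := by
        apply lowerBarrier
          (Y := fun z => a * σD ^ 2 * f z - 2 / α * g z ^ 2 + g z * (lam * h z - C₀))
          (B := fun _ => C₂) (B' := fun _ => 0)
          (hcontg.mono (Icc_subset_Icc_left hs₁.le))
          (fun z hz => hdg z (hsub ⟨hs₁.le.trans hz.1, hz.2.le⟩))
          continuousOn_const (fun z _ => hasDerivWithinAt_const _ _ _) hgs₁
        intro z hz hcz
        try dsimp only [] at hcz ⊢
        have hz' : z ∈ Ico (0:ℝ) t := ⟨hs₁.le.trans hz.1, hz.2⟩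
        have := contact z hz' (hcz ▸ hC₂pos.le) (le_of_eq hcz)
        linarith
      have h1 := piece2 t ⟨hts.le, le_rfl⟩
      have h2 : min (a * σD ^ 2 * C₁ / 2 * t) C₂ ≤ C₂ := min_le_right _ _
      nlinarith [mul_nonneg hε.le ht0]
  -- limit ε → 0
  rcases eq_or_lt_of_le ht0 with ht0' | ht0'
  · rw [← ht0']
    simpa [hg0] using min_le_left ((a * σD ^ 2 * C₁ / 2) * 0) C₂
  · by_contra hcon
    push_neg at hcon
    set d : ℝ := min (a * σD ^ 2 * C₁ / 2 * t) C₂ - g t with hd_def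
    have hd : 0 < d := by simp only [hd_def]; linarith
    set ε : ℝ := min (a * σD ^ 2 * C₁ / 4) (d / (2 * t)) with hε_def
    have hε : 0 < ε := lt_min (by positivity) (by positivity)
    have hεc : ε < a * σD ^ 2 * C₁ / 2 := by
      have := min_le_left (a * σD ^ 2 * C₁ / 4) (d / (2 * t))
      simp only [hε_def]; nlinarith
    have h1 := main2 ε hε hεc
    have h2 : ε ≤ d / (2 * t) := min_le_right _ _
    have h3 : ε * t ≤ d / 2 := by
      rw [le_div_iff₀ (by positivity : (0:ℝ) < 2 * t)] at h2
      clear_value d ε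
      nlinarith
    simp only [hd_def] at h3
    linarith
end

section
/- If h₀ > 0, then the component h of the maximal solution (h, f, g) of the forward ODE system satisfies the global lower bound h(t) ≥ h₀ · exp( (2/α) ∫₀^t min((a σ_D² C₁/2)·s, C₂) ds ) for all t in the maximal interval of existence [0, τ(h₀)). -/
open Set MeasureTheory Filter Topology

lemma minDerivAux (c C₂ : ℝ) (hc : 0 ≤ c) (x : ℝ) :
    HasDerivWithinAt (fun u : ℝ => min (c * u) C₂) (if c * x < C₂ then c else 0) (Ici x) x := by
  by_cases hx : c * x < C₂
  · rw [if_pos hx]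
    have hev : ∀ᶠ u in 𝓝[Ici x] x, min (c * u) C₂ = c * u := by
      have h1 : ∀ᶠ u in 𝓝 x, c * u < C₂ :=
        ((continuous_const.mul continuous_id).continuousAt (x := x)).eventually_lt
          continuousAt_const hx
      exact (h1.filter_mono nhdsWithin_le_nhds).mono fun u hu => min_eq_left hu.le
    refine HasDerivWithinAt.congr_of_eventuallyEq ?_ hev (min_eq_left hx.le)
    simpa using (hasDerivWithinAt_id x (Ici x)).const_mul c
  · rw [if_neg hx]
    refine (hasDerivWithinAt_const x (Ici x) C₂).congr (fun u hu => ?_)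
      (min_eq_right (not_lt.1 hx))
    exact min_eq_right ((not_lt.1 hx).trans (mul_le_mul_of_nonneg_left hu hc))

set_option maxHeartbeats 1000000 in
/-- if `h₀ > 0` then `h` satisfies the global lower bound
`h t ≥ h₀ · exp((2/α) ∫₀ᵗ min ((a σ_D² C₁/2)·s) C₂ ds)` on the (maximal) interval of
existence `[0,τ)`. -/
theorem stmt6 (I : ℕ) (hI : 1 ≤ I) (C₀ T a σD α k : ℝ)
    (hT : 0 < T) (ha : 0 < a) (hσD : 0 < σD) (hα : 0 < α) (hk : 0 < k)
    (h₀ τ : ℝ) (hh₀ : 0 < h₀) (hτ : 0 < τ) (h f g : ℝ → ℝ)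
    (hsol : FwdSol I C₀ a σD α h₀ h f g (Ico 0 τ))
    (C₁ : ℝ) (hC₁ : C₁ = if C₀ ≤ 1 then 1 else 1 / C₀)
    (C₂ : ℝ) (hC₂ : C₂ = if C₀ < 0 then -(α * C₀) / 2
      else α * (-C₀ + Real.sqrt (C₀ ^ 2 + 4 * a * σD ^ 2 * C₁ / α)) / 4) :
    ∀ t ∈ Ico (0 : ℝ) τ,
      h₀ * Real.exp (2 / α * ∫ s in (0 : ℝ)..t, min (a * σD ^ 2 * C₁ / 2 * s) C₂) ≤ h t := by
  obtain ⟨hh0, hf0, hg0, hderiv⟩ := hsol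
  have hα' : (α : ℝ) ≠ 0 := ne_of_gt hα
  have hIpos : (0 : ℝ) < (I : ℝ) := by exact_mod_cast Nat.lt_of_lt_of_le Nat.zero_lt_one hI
  -- constants facts
  have hC₁pos : 0 < C₁ := by
    rw [hC₁]; split_ifs with hc
    · exact one_pos
    · exact one_div_pos.2 (lt_trans one_pos (not_le.1 hc))
  have hC₁le1 : C₁ ≤ 1 := by
    rw [hC₁]; split_ifs with hc
    · exact le_refl 1
    · have h1 : (1 : ℝ) < C₀ := not_le.1 hc
      rw [div_le_one (lt_trans one_pos h1)]; exact h1.le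
  have hC₁C₀ : C₁ * C₀ ≤ 1 := by
    rw [hC₁]; split_ifs with hc
    · simpa using hc
    · rw [one_div, inv_mul_cancel₀ (ne_of_gt (lt_trans one_pos (not_le.1 hc)))]
  have hβα : 2 / α * α = 2 := by field_simp
  have hβpos : 0 < 2 / α := by positivity
  have hRHSpos : 0 < a * σD ^ 2 * C₁ / 2 := by positivity
  have hC₂pos : 0 < C₂ := by
    rw [hC₂]; split_ifs with hc
    · have := mul_pos hα (neg_pos.2 hc); nlinarith
    · have h4 : 0 < 4 * a * σD ^ 2 * C₁ / α := by positivity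
      have h2 : Real.sqrt (C₀ ^ 2) < Real.sqrt (C₀ ^ 2 + 4 * a * σD ^ 2 * C₁ / α) :=
        Real.sqrt_lt_sqrt (sq_nonneg _) (by linarith)
      have h1 : C₀ ≤ Real.sqrt (C₀ ^ 2) := by
        rw [Real.sqrt_sq_eq_abs]; exact le_abs_self _
      nlinarith
  -- quadratic bounds
  have hQle : 2 / α * C₂ ^ 2 + C₀ * C₂ ≤ a * σD ^ 2 * C₁ / 2 := by
    rw [hC₂]; split_ifs with hc
    · have h1 : 2 / α * (-(α * C₀) / 2) = -C₀ := by
        field_simp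
      nlinarith [sq_nonneg C₀]
    · set s := Real.sqrt (C₀ ^ 2 + 4 * a * σD ^ 2 * C₁ / α) with hs
      have hs2 : s ^ 2 = C₀ ^ 2 + 4 * a * σD ^ 2 * C₁ / α := Real.sq_sqrt (by positivity)
      have hs2' : α * s ^ 2 = α * C₀ ^ 2 + 4 * (a * σD ^ 2 * C₁) := by
        rw [hs2]; field_simp
      have : 2 / α * (α * (-C₀ + s) / 4) ^ 2 + C₀ * (α * (-C₀ + s) / 4)
          = a * σD ^ 2 * C₁ / 2 := by
        have e1 : 2 / α * (α * (-C₀ + s) / 4) ^ 2 = α * (-C₀ + s) ^ 2 / 8 := by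
          field_simp; ring
        rw [e1]
        linear_combination (1/8 : ℝ) * hs2'
      linarith [this.le]
  have hQlt : ∀ y : ℝ, 0 ≤ y → y < C₂ → 2 / α * y ^ 2 + C₀ * y < a * σD ^ 2 * C₁ / 2 := by
    intro y hy0 hy
    by_cases hc : C₀ < 0
    · have hC₂v : C₂ = -(α * C₀) / 2 := by rw [hC₂, if_pos hc]
      have h1 : 2 / α * y ≤ -C₀ := by
        have h2 : 2 / α * y ≤ 2 / α * C₂ := mul_le_mul_of_nonneg_left hy.le hβpos.le
        have h3 : 2 / α * C₂ = -C₀ := by rw [hC₂v]; field_simp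
        linarith
      nlinarith [mul_le_mul_of_nonneg_left h1 hy0]
    · have hc' : 0 ≤ C₀ := not_lt.1 hc
      have hCy : (0:ℝ) < C₂ + y := by linarith
      have hmono : 2 / α * y ^ 2 + C₀ * y < 2 / α * C₂ ^ 2 + C₀ * C₂ := by
        nlinarith [mul_pos hβpos (mul_pos (sub_pos.2 hy) hCy),
          mul_nonneg hc' (sub_pos.2 hy).le]
      linarith
  -- basic set facts
  have hsubIco : ∀ {b : ℝ}, b ∈ Ico (0:ℝ) τ → Icc (0:ℝ) b ⊆ Ico (0:ℝ) τ :=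
    fun {b} hb y hy => ⟨hy.1, lt_of_le_of_lt hy.2 hb.2⟩
  have hmemIci : ∀ x ∈ Ico (0:ℝ) τ, Ico (0:ℝ) τ ∈ 𝓝[Ici x] x := by
    intro x hx
    rw [mem_nhdsWithin]
    exact ⟨Iio τ, isOpen_Iio, hx.2, fun y hy => ⟨le_trans hx.1 hy.2, hy.1⟩⟩
  -- continuity
  have hch : ContinuousOn h (Ico 0 τ) := fun x hx => ((hderiv x hx).1).continuousWithinAt
  have hcf : ContinuousOn f (Ico 0 τ) := fun x hx => ((hderiv x hx).2.1).continuousWithinAt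
  have hcg : ContinuousOn g (Ico 0 τ) := fun x hx => ((hderiv x hx).2.2).continuousWithinAt
  -- right derivatives
  have hdh : ∀ x ∈ Ico (0:ℝ) τ, HasDerivWithinAt h (2 * g x / α * h x) (Ici x) x :=
    fun x hx => ((hderiv x hx).1).mono_of_mem_nhdsWithin (hmemIci x hx)
  have hdf : ∀ x ∈ Ico (0:ℝ) τ, HasDerivWithinAt f
      (1 + f x * (a ^ 2 * σD ^ 2 / (2 * (I : ℝ)) * h x - C₀)) (Ici x) x :=
    fun x hx => ((hderiv x hx).2.1).mono_of_mem_nhdsWithin (hmemIci x hx)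
  have hdg : ∀ x ∈ Ico (0:ℝ) τ, HasDerivWithinAt g
      (a * σD ^ 2 * f x - 2 / α * g x ^ 2 +
        g x * (a ^ 2 * σD ^ 2 / (2 * (I : ℝ)) * h x - C₀)) (Ici x) x :=
    fun x hx => ((hderiv x hx).2.2).mono_of_mem_nhdsWithin (hmemIci x hx)
  -- integrability of g
  have hgInt : ∀ x ∈ Ico (0:ℝ) τ, IntervalIntegrable g volume 0 x := by
    intro x hx
    apply ContinuousOn.intervalIntegrable
    rw [uIcc_of_le hx.1]
    exact hcg.mono (hsubIco hx)
  -- FTC for primitive of g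
  have hdG : ∀ x ∈ Ico (0:ℝ) τ,
      HasDerivWithinAt (fun u => ∫ s in (0:ℝ)..u, g s) (g x) (Ici x) x := by
    intro x hx
    have hmem' : Ico (0:ℝ) τ ∈ 𝓝[>] x :=
      nhdsWithin_mono x Ioi_subset_Ici_self (hmemIci x hx)
    exact intervalIntegral.integral_hasDerivWithinAt_right (hgInt x hx)
      ⟨Ico 0 τ, hmem', hcg.aestronglyMeasurable measurableSet_Ico⟩
      ((hcg x hx).mono_of_mem_nhdsWithin hmem')
  have hGc : ∀ b ∈ Ico (0:ℝ) τ, ContinuousOn (fun u => ∫ s in (0:ℝ)..u, g s) (Icc 0 b) := by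
    intro b hb
    have := intervalIntegral.continuousOn_primitive_interval
      (f := g) (μ := volume) (a := 0) (b := b)
      (by rw [uIcc_of_le hb.1]; exact (hcg.mono (hsubIco hb)).integrableOn_Icc)
    rwa [uIcc_of_le hb.1] at this
  -- Step 1: formula for h
  have hform : ∀ x ∈ Ico (0:ℝ) τ, h x = h₀ * Real.exp (2 / α * ∫ s in (0:ℝ)..x, g s) := by
    intro b hb
    have hw : ∀ x ∈ Icc (0:ℝ) b,
        h x * Real.exp (-(2 / α) * ∫ s in (0:ℝ)..x, g s)
          = h 0 * Real.exp (-(2 / α) * ∫ s in (0:ℝ)..(0:ℝ), g s) := by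
      apply constant_of_has_deriv_right_zero
      · exact (hch.mono (hsubIco hb)).mul
          ((Real.continuous_exp.comp_continuousOn (continuousOn_const.mul (hGc b hb))))
      · intro x hx
        have hx' : x ∈ Ico (0:ℝ) τ := ⟨hx.1, lt_trans hx.2 hb.2⟩
        have hdE : HasDerivWithinAt (fun u => Real.exp (-(2 / α) * ∫ s in (0:ℝ)..u, g s))
            (Real.exp (-(2 / α) * ∫ s in (0:ℝ)..x, g s) * (-(2 / α) * g x)) (Ici x) x :=
          (((hdG x hx').const_mul (-(2 / α))).exp)
        have hmul := (hdh x hx').mul hdE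
        convert hmul using 1
        · rfl
        · rfl
        · ring
    have hwb := hw b ⟨hb.1, le_refl b⟩
    rw [intervalIntegral.integral_same, mul_zero, Real.exp_zero, mul_one, hh0] at hwb
    have hE : Real.exp (-(2 / α) * ∫ s in (0:ℝ)..b, g s)
        * Real.exp (2 / α * ∫ s in (0:ℝ)..b, g s) = 1 := by
      rw [← Real.exp_add]
      ring_nf
      exact Real.exp_zero
    calc h b = h b * Real.exp (-(2 / α) * ∫ s in (0:ℝ)..b, g s)
          * Real.exp (2 / α * ∫ s in (0:ℝ)..b, g s) := by rw [mul_assoc, hE, mul_one]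
      _ = h₀ * Real.exp (2 / α * ∫ s in (0:ℝ)..b, g s) := by rw [hwb]
  have hpos : ∀ x ∈ Ico (0:ℝ) τ, 0 < h x := by
    intro x hx; rw [hform x hx]; positivity
  -- Step 2: f ≥ C₁
  have hfC₁ : ∀ x ∈ Ico (0:ℝ) τ, C₁ ≤ f x := by
    intro b hb
    have key : ∀ ⦃y : ℝ⦄, y ∈ Icc (0:ℝ) b → (fun _ : ℝ => C₁) y ≤ f y := by
      apply image_le_of_deriv_right_lt_deriv_boundary' (f' := fun _ => (0:ℝ))
        (B' := fun x => 1 + f x * (a ^ 2 * σD ^ 2 / (2 * (I : ℝ)) * h x - C₀))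
        continuousOn_const (fun x _ => hasDerivWithinAt_const x (Ici x) C₁)
        (by rw [hf0]; exact hC₁le1) (hcf.mono (hsubIco hb))
        (fun x hx => hdf x ⟨hx.1, lt_trans hx.2 hb.2⟩)
      intro x hx heq
      have hx' : x ∈ Ico (0:ℝ) τ := ⟨hx.1, lt_trans hx.2 hb.2⟩
      have hhx := hpos x hx'
      have hterm : 0 < C₁ * (a ^ 2 * σD ^ 2 / (2 * (I : ℝ)) * h x) := by positivity
      rw [← heq]
      nlinarith
    exact key ⟨hb.1, le_refl b⟩
  -- Step 3: g ≥ min (c x) C₂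
  set c : ℝ := a * σD ^ 2 * C₁ / 2 with hcdef
  have hcpos : 0 < c := hRHSpos
  have hgm : ∀ x ∈ Ico (0:ℝ) τ, min (c * x) C₂ ≤ g x := by
    intro b hb
    have key : ∀ ⦃y : ℝ⦄, y ∈ Icc (0:ℝ) b → (fun u : ℝ => min (c * u) C₂) y ≤ g y := by
      apply image_le_of_deriv_right_lt_deriv_boundary'
        (f := fun u : ℝ => min (c * u) C₂)
        (f' := fun x => if c * x < C₂ then c else 0)
        (B' := fun x => a * σD ^ 2 * f x - 2 / α * g x ^ 2 +
          g x * (a ^ 2 * σD ^ 2 / (2 * (I : ℝ)) * h x - C₀))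
        (((continuous_const.mul continuous_id).min continuous_const).continuousOn)
        (fun x _ => minDerivAux c C₂ hcpos.le x)
        (by rw [hg0]; simpa using min_le_left (c * 0) C₂)
        (hcg.mono (hsubIco hb))
        (fun x hx => hdg x ⟨hx.1, lt_trans hx.2 hb.2⟩)
      intro x hx heq
      have hx' : x ∈ Ico (0:ℝ) τ := ⟨hx.1, lt_trans hx.2 hb.2⟩
      have hm0 : 0 ≤ min (c * x) C₂ := le_min (mul_nonneg hcpos.le hx.1) hC₂pos.le
      have hgx0 : 0 ≤ g x := heq ▸ hm0
      have hfx : C₁ ≤ f x := hfC₁ x hx'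
      have hP : 0 ≤ a ^ 2 * σD ^ 2 / (2 * (I : ℝ)) * h x := by
        have := hpos x hx'; positivity
      have hgP : 0 ≤ g x * (a ^ 2 * σD ^ 2 / (2 * (I : ℝ)) * h x) := mul_nonneg hgx0 hP
      have hflow : a * σD ^ 2 * C₁ ≤ a * σD ^ 2 * f x :=
        mul_le_mul_of_nonneg_left hfx (by positivity)
      by_cases hcx : c * x < C₂
      · rw [if_pos hcx]
        have hmx : min (c * x) C₂ = c * x := min_eq_left hcx.le
        have hgval : g x = c * x := by rw [← heq, hmx]
        have hQ := hQlt (g x) hgx0 (by rw [hgval]; exact hcx)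
        nlinarith
      · rw [if_neg hcx]
        have hmx : min (c * x) C₂ = C₂ := min_eq_right (not_lt.1 hcx)
        have hgval : g x = C₂ := by rw [← heq, hmx]
        rw [hgval] at hgP ⊢
        linarith [hflow, hQle, hgP, hcpos]
    exact key ⟨hb.1, le_refl b⟩
  -- Final step
  intro t ht
  rw [hform t ht]
  have hmInt : IntervalIntegrable (fun s => min (c * s) C₂) volume 0 t :=
    (((continuous_const.mul continuous_id).min continuous_const)).intervalIntegrable 0 t
  have hint : (∫ s in (0:ℝ)..t, min (c * s) C₂) ≤ ∫ s in (0:ℝ)..t, g s :=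
    intervalIntegral.integral_mono_on ht.1 hmInt (hgInt t ht)
      (fun x hx => hgm x ⟨hx.1, lt_of_le_of_lt hx.2 ht.2⟩)
  exact mul_le_mul_of_nonneg_left
    (Real.exp_le_exp.2 (mul_le_mul_of_nonneg_left hint hβpos.le)) hh₀.le
end

section
/- Let 0 < h₀ < h̃₀ < k and let (h, f, g) and (h̃, f̃, g̃) be the maximal solutions of the forward ODE system with initial values h₀ and h̃₀ and maximal existence intervals [0, τ) and [0, τ̃), respectively. Then for all t ∈ (0, τ ∧ τ̃): h(t) < h̃(t), f(t) < f̃(t), and g(t) < g̃(t). -/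
open Set MeasureTheory intervalIntegral

/-- Key comparison lemma: if `x' = p x + q` on `Icc a b` with `q ≥ 0` on the interior,
then `x t ≥ x a * exp (∫ p)`. -/
lemma tilt_le (a b : ℝ) (x p q : ℝ → ℝ)
    (hx : ∀ t ∈ Icc a b, HasDerivWithinAt x (p t * x t + q t) (Icc a b) t)
    (hp : ContinuousOn p (Icc a b))
    (hq : ∀ t ∈ Ioo a b, 0 ≤ q t) :
    ∀ t ∈ Icc a b, x a * Real.exp (∫ s in a..t, p s) ≤ x t := by
  intro t ht
  have hab : a ≤ b := le_trans ht.1 ht.2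
  set P : ℝ → ℝ := fun r => ∫ s in a..r, p s with hPdef
  set y : ℝ → ℝ := fun r => x r * Real.exp (-P r) with hydef
  have hPc : ContinuousOn P (Icc a b) := by
    have h1 : IntegrableOn p (uIcc a b) := by
      rw [uIcc_of_le hab]; exact hp.integrableOn_Icc
    have := continuousOn_primitive_interval (μ := volume) h1
    rwa [uIcc_of_le hab] at this
  have hxc : ContinuousOn x (Icc a b) := fun s hs => (hx s hs).continuousWithinAt
  have hyc : ContinuousOn y (Icc a b) :=
    hxc.mul (Real.continuous_exp.comp_continuousOn hPc.neg)
  have hyd : ∀ r ∈ Ioo a b, HasDerivAt y (q r * Real.exp (-P r)) r := by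
    intro r hr
    have hmem : Icc a b ∈ nhds r := Icc_mem_nhds hr.1 hr.2
    have hx' : HasDerivAt x (p r * x r + q r) r :=
      (hx r (Ioo_subset_Icc_self hr)).hasDerivAt hmem
    have hP' : HasDerivAt P (p r) r := by
      apply integral_hasDerivAt_right
      · exact (hp.mono (Icc_subset_Icc le_rfl hr.2.le)).intervalIntegrable_of_Icc hr.1.le
      · exact ⟨Icc a b, hmem, hp.aestronglyMeasurable measurableSet_Icc⟩
      · exact (hp r (Ioo_subset_Icc_self hr)).continuousAt hmem
    have := hx'.mul ((hP'.neg).exp)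
    exact this.congr_deriv (by simp only [Pi.neg_apply]; ring)
  have hmono : MonotoneOn y (Icc a b) := by
    apply monotoneOn_of_deriv_nonneg (convex_Icc a b) hyc
    · rw [interior_Icc]
      exact fun r hr => ((hyd r hr).differentiableAt).differentiableWithinAt
    · intro r hr
      rw [interior_Icc] at hr
      rw [(hyd r hr).deriv]
      exact mul_nonneg (hq r hr) (Real.exp_pos _).le
  have h0 : y a = x a := by
    simp [hydef, hPdef, intervalIntegral.integral_same]
  have hle : x a ≤ x t * Real.exp (-P t) := by
    rw [← h0]; exact hmono (left_mem_Icc.2 hab) ht ht.1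
  calc x a * Real.exp (P t) ≤ (x t * Real.exp (-P t)) * Real.exp (P t) :=
        mul_le_mul_of_nonneg_right hle (Real.exp_pos _).le
    _ = x t := by rw [mul_assoc, ← Real.exp_add, neg_add_cancel, Real.exp_zero, mul_one]

lemma tilt_lt (a b : ℝ) (x p q : ℝ → ℝ)
    (hx : ∀ t ∈ Icc a b, HasDerivWithinAt x (p t * x t + q t) (Icc a b) t)
    (hp : ContinuousOn p (Icc a b))
    (hq : ∀ t ∈ Ioo a b, 0 < q t) :
    ∀ t ∈ Ioc a b, x a * Real.exp (∫ s in a..t, p s) < x t := by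
  intro t ht
  have hab : a ≤ b := le_trans ht.1.le ht.2
  set P : ℝ → ℝ := fun r => ∫ s in a..r, p s with hPdef
  set y : ℝ → ℝ := fun r => x r * Real.exp (-P r) with hydef
  have hPc : ContinuousOn P (Icc a b) := by
    have h1 : IntegrableOn p (uIcc a b) := by
      rw [uIcc_of_le hab]; exact hp.integrableOn_Icc
    have := continuousOn_primitive_interval (μ := volume) h1
    rwa [uIcc_of_le hab] at this
  have hxc : ContinuousOn x (Icc a b) := fun s hs => (hx s hs).continuousWithinAt
  have hyc : ContinuousOn y (Icc a b) :=
    hxc.mul (Real.continuous_exp.comp_continuousOn hPc.neg)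
  have hyd : ∀ r ∈ Ioo a b, HasDerivAt y (q r * Real.exp (-P r)) r := by
    intro r hr
    have hmem : Icc a b ∈ nhds r := Icc_mem_nhds hr.1 hr.2
    have hx' : HasDerivAt x (p r * x r + q r) r :=
      (hx r (Ioo_subset_Icc_self hr)).hasDerivAt hmem
    have hP' : HasDerivAt P (p r) r := by
      apply integral_hasDerivAt_right
      · exact (hp.mono (Icc_subset_Icc le_rfl hr.2.le)).intervalIntegrable_of_Icc hr.1.le
      · exact ⟨Icc a b, hmem, hp.aestronglyMeasurable measurableSet_Icc⟩
      · exact (hp r (Ioo_subset_Icc_self hr)).continuousAt hmem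
    have := hx'.mul ((hP'.neg).exp)
    exact this.congr_deriv (by simp only [Pi.neg_apply]; ring)
  have hmono : StrictMonoOn y (Icc a b) := by
    apply strictMonoOn_of_deriv_pos (convex_Icc a b) hyc
    · intro r hr
      rw [interior_Icc] at hr
      rw [(hyd r hr).deriv]
      exact mul_pos (hq r hr) (Real.exp_pos _)
  have h0 : y a = x a := by
    simp [hydef, hPdef, intervalIntegral.integral_same]
  have hle : x a < x t * Real.exp (-P t) := by
    rw [← h0]
    exact hmono (left_mem_Icc.2 hab) ⟨ht.1.le, ht.2⟩ ht.1
  calc x a * Real.exp (P t) < (x t * Real.exp (-P t)) * Real.exp (P t) :=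
        mul_lt_mul_of_pos_right hle (Real.exp_pos _)
    _ = x t := by rw [mul_assoc, ← Real.exp_add, neg_add_cancel, Real.exp_zero, mul_one]

/-- comparison of solutions.  If `0 < h₀ < h̃₀ < k` then the solutions with
initial values `h₀` and `h̃₀` satisfy `h < h̃`, `f < f̃` and `g < g̃` on `(0, τ ∧ τ̃)`. -/
theorem stmt8 (I : ℕ) (hI : 1 ≤ I) (C₀ T a σD α k : ℝ)
    (hT : 0 < T) (ha : 0 < a) (hσD : 0 < σD) (hα : 0 < α) (hk : 0 < k)
    (h₀ hb₀ : ℝ) (h1 : 0 < h₀) (h2 : h₀ < hb₀) (h3 : hb₀ < k)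
    (τ τ' : ℝ) (hτ : 0 < τ) (hτ' : 0 < τ')
    (h f g hb fb gb : ℝ → ℝ)
    (hsol : FwdSol I C₀ a σD α h₀ h f g (Ico 0 τ))
    (hsolb : FwdSol I C₀ a σD α hb₀ hb fb gb (Ico 0 τ')) :
    ∀ t : ℝ, 0 < t → t < min τ τ' →
      h t < hb t ∧ f t < fb t ∧ g t < gb t := by
  intro b hb0 hbm
  have hbτ : b < τ := lt_of_lt_of_le hbm (min_le_left _ _)
  have hbτ' : b < τ' := lt_of_lt_of_le hbm (min_le_right _ _)
  have hsub : Icc (0:ℝ) b ⊆ Ico 0 τ := fun s hs => ⟨hs.1, lt_of_le_of_lt hs.2 hbτ⟩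
  have hsub' : Icc (0:ℝ) b ⊆ Ico 0 τ' := fun s hs => ⟨hs.1, lt_of_le_of_lt hs.2 hbτ'⟩
  obtain ⟨hh0, hf0, hg0, hder⟩ := hsol
  obtain ⟨hhb0, hfb0, hgb0, hderb⟩ := hsolb
  have hIpos : (0:ℝ) < (I:ℝ) := by
    have : (1:ℝ) ≤ (I:ℝ) := by exact_mod_cast hI
    linarith
  set c : ℝ := a ^ 2 * σD ^ 2 / (2 * (I : ℝ)) with hc
  have hcpos : 0 < c := by rw [hc]; positivity
  -- restricted derivatives
  have Dh : ∀ s ∈ Icc (0:ℝ) b, HasDerivWithinAt h (2 * g s / α * h s) (Icc 0 b) s :=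
    fun s hs => ((hder s (hsub hs)).1).mono hsub
  have Df : ∀ s ∈ Icc (0:ℝ) b,
      HasDerivWithinAt f (1 + f s * (c * h s - C₀)) (Icc 0 b) s :=
    fun s hs => ((hder s (hsub hs)).2.1).mono hsub
  have Dg : ∀ s ∈ Icc (0:ℝ) b,
      HasDerivWithinAt g (a * σD ^ 2 * f s - 2 / α * g s ^ 2 + g s * (c * h s - C₀))
        (Icc 0 b) s :=
    fun s hs => ((hder s (hsub hs)).2.2).mono hsub
  have Dhb : ∀ s ∈ Icc (0:ℝ) b, HasDerivWithinAt hb (2 * gb s / α * hb s) (Icc 0 b) s :=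
    fun s hs => ((hderb s (hsub' hs)).1).mono hsub'
  have Dfb : ∀ s ∈ Icc (0:ℝ) b,
      HasDerivWithinAt fb (1 + fb s * (c * hb s - C₀)) (Icc 0 b) s :=
    fun s hs => ((hderb s (hsub' hs)).2.1).mono hsub'
  have Dgb : ∀ s ∈ Icc (0:ℝ) b,
      HasDerivWithinAt gb (a * σD ^ 2 * fb s - 2 / α * gb s ^ 2 + gb s * (c * hb s - C₀))
        (Icc 0 b) s :=
    fun s hs => ((hderb s (hsub' hs)).2.2).mono hsub'
  -- continuity
  have Ch : ContinuousOn h (Icc 0 b) := fun s hs => (Dh s hs).continuousWithinAt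
  have Cf : ContinuousOn f (Icc 0 b) := fun s hs => (Df s hs).continuousWithinAt
  have Cg : ContinuousOn g (Icc 0 b) := fun s hs => (Dg s hs).continuousWithinAt
  have Chb : ContinuousOn hb (Icc 0 b) := fun s hs => (Dhb s hs).continuousWithinAt
  have Cfb : ContinuousOn fb (Icc 0 b) := fun s hs => (Dfb s hs).continuousWithinAt
  have Cgb : ContinuousOn gb (Icc 0 b) := fun s hs => (Dgb s hs).continuousWithinAt
  -- positivity of hb
  have Phb : ∀ s ∈ Icc (0:ℝ) b, 0 < hb s := by
    intro s hs
    have key := tilt_le 0 b hb (fun r => 2 * gb r / α) (fun _ => 0)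
      (fun r hr => by simpa using Dhb r hr)
      (((continuousOn_const.mul Cgb).div_const α))
      (fun _ _ => le_rfl) s hs
    have h0' : (0:ℝ) < hb 0 := by rw [hhb0]; linarith
    calc (0:ℝ) < hb 0 * Real.exp (∫ r in (0:ℝ)..s, 2 * gb r / α) :=
          mul_pos h0' (Real.exp_pos _)
      _ ≤ hb s := key
  -- positivity of fb
  have Pfb : ∀ s ∈ Icc (0:ℝ) b, 0 < fb s := by
    intro s hs
    have key := tilt_le 0 b fb (fun r => c * hb r - C₀) (fun _ => 1)
      (fun r hr => by
        have := Dfb r hr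
        convert this using 1
        ring)
      ((continuousOn_const.mul Chb).sub continuousOn_const)
      (fun _ _ => zero_le_one) s hs
    have h0' : (0:ℝ) < fb 0 := by rw [hfb0]; norm_num
    calc (0:ℝ) < fb 0 * Real.exp (∫ r in (0:ℝ)..s, (c * hb r - C₀)) :=
          mul_pos h0' (Real.exp_pos _)
      _ ≤ fb s := key
  -- nonnegativity of gb
  have Pgb : ∀ s ∈ Icc (0:ℝ) b, 0 ≤ gb s := by
    intro s hs
    have key := tilt_le 0 b gb (fun r => -(2 / α) * gb r + (c * hb r - C₀))
      (fun r => a * σD ^ 2 * fb r)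
      (fun r hr => by
        have := Dgb r hr
        convert this using 1
        ring)
      (((continuousOn_const.mul Cgb)).add
        ((continuousOn_const.mul Chb).sub continuousOn_const))
      (fun r hr => by
        have := Pfb r (Ioo_subset_Icc_self hr)
        positivity) s hs
    simpa [hgb0] using key
  -- difference derivative facts
  have Du : ∀ t₁ : ℝ, t₁ ≤ b → ∀ s ∈ Icc (0:ℝ) t₁,
      HasDerivWithinAt (fun r => hb r - h r)
        ((2 * g s / α) * (hb s - h s) + (2 / α * hb s) * (gb s - g s)) (Icc 0 t₁) s := by
    intro t₁ ht₁ s hs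
    have hss : Icc (0:ℝ) t₁ ⊆ Icc 0 b := Icc_subset_Icc le_rfl ht₁
    have := ((Dhb s (hss hs)).sub (Dh s (hss hs))).mono hss
    exact this.congr_deriv (by ring)
  have Dv : ∀ t₁ : ℝ, t₁ ≤ b → ∀ s ∈ Icc (0:ℝ) t₁,
      HasDerivWithinAt (fun r => fb r - f r)
        ((c * h s - C₀) * (fb s - f s) + c * fb s * (hb s - h s)) (Icc 0 t₁) s := by
    intro t₁ ht₁ s hs
    have hss : Icc (0:ℝ) t₁ ⊆ Icc 0 b := Icc_subset_Icc le_rfl ht₁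
    have := ((Dfb s (hss hs)).sub (Df s (hss hs))).mono hss
    exact this.congr_deriv (by ring)
  have Dw : ∀ t₁ : ℝ, t₁ ≤ b → ∀ s ∈ Icc (0:ℝ) t₁,
      HasDerivWithinAt (fun r => gb r - g r)
        ((-(2 / α) * (gb s + g s) + (c * h s - C₀)) * (gb s - g s) +
          (a * σD ^ 2 * (fb s - f s) + c * gb s * (hb s - h s))) (Icc 0 t₁) s := by
    intro t₁ ht₁ s hs
    have hss : Icc (0:ℝ) t₁ ⊆ Icc 0 b := Icc_subset_Icc le_rfl ht₁
    have := ((Dgb s (hss hs)).sub (Dg s (hss hs))).mono hss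
    exact this.congr_deriv (by ring)
  -- continuity of coefficient functions
  have Cpu : ContinuousOn (fun r => 2 * g r / α) (Icc 0 b) :=
    (continuousOn_const.mul Cg).div_const α
  have Cpv : ContinuousOn (fun r => c * h r - C₀) (Icc 0 b) :=
    (continuousOn_const.mul Ch).sub continuousOn_const
  have Cpw : ContinuousOn (fun r => -(2 / α) * (gb r + g r) + (c * h r - C₀)) (Icc 0 b) :=
    (continuousOn_const.mul (Cgb.add Cg)).add
      ((continuousOn_const.mul Ch).sub continuousOn_const)
  have hu0 : hb 0 - h 0 = hb₀ - h₀ := by rw [hhb0, hh0]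
  -- KEY CLAIM: u = hb - h is positive on all of Icc 0 b
  have KU : ∀ s ∈ Icc (0:ℝ) b, 0 < hb s - h s := by
    by_contra hcon
    push_neg at hcon
    obtain ⟨t₂, ht₂, ht₂'⟩ := hcon
    set Z : Set ℝ := Icc 0 b ∩ (fun r => hb r - h r) ⁻¹' Iic 0 with hZ
    have hZclosed : IsClosed Z :=
      (Chb.sub Ch).preimage_isClosed_of_isClosed isClosed_Icc isClosed_Iic
    have hZne : Z.Nonempty := ⟨t₂, ht₂, by simpa using ht₂'⟩
    have hZbdd : BddBelow Z := ⟨0, fun r hr => hr.1.1⟩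
    set t₁ := sInf Z with ht₁def
    have ht₁Z : t₁ ∈ Z := hZclosed.csInf_mem hZne hZbdd
    obtain ⟨⟨ht₁0, ht₁b⟩, ht₁u⟩ := ht₁Z
    simp only [mem_preimage, mem_Iic] at ht₁u
    have ht₁pos : 0 < t₁ := by
      rcases ht₁0.lt_or_eq with h' | h'
      · exact h'
      · exfalso
        rw [← h', hu0] at ht₁u
        linarith
    have hupos : ∀ r ∈ Ico (0:ℝ) t₁, 0 < hb r - h r := by
      intro r hr
      by_contra hru
      push_neg at hru
      have hrZ : r ∈ Z := ⟨⟨hr.1, le_trans hr.2.le ht₁b⟩, by simpa using hru⟩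
      exact absurd (csInf_le hZbdd hrZ) (not_le.2 hr.2)
    have hss : Icc (0:ℝ) t₁ ⊆ Icc 0 b := Icc_subset_Icc le_rfl ht₁b
    -- v ≥ 0 on Icc 0 t₁
    have hv : ∀ r ∈ Icc (0:ℝ) t₁, 0 ≤ fb r - f r := by
      intro r hr
      have key := tilt_le 0 t₁ (fun r => fb r - f r) (fun r => c * h r - C₀)
        (fun r => c * fb r * (hb r - h r))
        (Dv t₁ ht₁b) (Cpv.mono hss)
        (fun r hr => le_of_lt (mul_pos (mul_pos hcpos (Pfb r (hss (Ioo_subset_Icc_self hr))))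
          (hupos r ⟨hr.1.le, hr.2⟩))) r hr
      have : fb 0 - f 0 = 0 := by rw [hfb0, hf0]; ring
      simpa [this] using key
    -- w ≥ 0 on Icc 0 t₁
    have hw : ∀ r ∈ Icc (0:ℝ) t₁, 0 ≤ gb r - g r := by
      intro r hr
      have key := tilt_le 0 t₁ (fun r => gb r - g r)
        (fun r => -(2 / α) * (gb r + g r) + (c * h r - C₀))
        (fun r => a * σD ^ 2 * (fb r - f r) + c * gb r * (hb r - h r))
        (Dw t₁ ht₁b) (Cpw.mono hss)
        (fun r hr => by
          have h1' := hv r (Ioo_subset_Icc_self hr)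
          have h2' := Pgb r (hss (Ioo_subset_Icc_self hr))
          have h3' := (hupos r ⟨hr.1.le, hr.2⟩).le
          have p1 : 0 ≤ a * σD ^ 2 * (fb r - f r) := by positivity
          have p2 : 0 ≤ c * gb r * (hb r - h r) := by positivity
          linarith) r hr
      have : gb 0 - g 0 = 0 := by rw [hgb0, hg0]; ring
      simpa [this] using key
    -- u at t₁ is positive: contradiction
    have key := tilt_le 0 t₁ (fun r => hb r - h r) (fun r => 2 * g r / α)
      (fun r => (2 / α * hb r) * (gb r - g r))
      (Du t₁ ht₁b) (Cpu.mono hss)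
      (fun r hr => by
        have h1' := Phb r (hss (Ioo_subset_Icc_self hr))
        have h2' := hw r (Ioo_subset_Icc_self hr)
        positivity) t₁ (right_mem_Icc.2 ht₁0)
    rw [hu0] at key
    have : (0:ℝ) < (hb₀ - h₀) * Real.exp (∫ r in (0:ℝ)..t₁, 2 * g r / α) :=
      mul_pos (by linarith) (Real.exp_pos _)
    linarith
  -- now strict positivity of v on Ioc 0 b
  have KV : ∀ s ∈ Ioc (0:ℝ) b, 0 < fb s - f s := by
    intro s hs
    have key := tilt_lt 0 b (fun r => fb r - f r) (fun r => c * h r - C₀)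
      (fun r => c * fb r * (hb r - h r))
      (Dv b le_rfl) Cpv
      (fun r hr => mul_pos (mul_pos hcpos (Pfb r (Ioo_subset_Icc_self hr)))
        (KU r (Ioo_subset_Icc_self hr))) s hs
    have h0' : fb 0 - f 0 = 0 := by rw [hfb0, hf0]; ring
    simpa [h0'] using key
  -- strict positivity of w at b
  have KW : ∀ s ∈ Ioc (0:ℝ) b, 0 < gb s - g s := by
    intro s hs
    have key := tilt_lt 0 b (fun r => gb r - g r)
      (fun r => -(2 / α) * (gb r + g r) + (c * h r - C₀))
      (fun r => a * σD ^ 2 * (fb r - f r) + c * gb r * (hb r - h r))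
      (Dw b le_rfl) Cpw
      (fun r hr => by
        have h1' := KV r ⟨hr.1, hr.2.le⟩
        have h2' := Pgb r (Ioo_subset_Icc_self hr)
        have h3' := (KU r (Ioo_subset_Icc_self hr)).le
        have p1 : 0 < a * σD ^ 2 * (fb r - f r) := by positivity
        have p2 : 0 ≤ c * gb r * (hb r - h r) := by positivity
        linarith) s hs
    have h0' : gb 0 - g 0 = 0 := by rw [hgb0, hg0]; ring
    simpa [h0'] using key
  have hbmem : b ∈ Icc (0:ℝ) b := right_mem_Icc.2 hb0.le
  have hbmem' : b ∈ Ioc (0:ℝ) b := ⟨hb0, le_rfl⟩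
  exact ⟨sub_pos.1 (KU b hbmem), sub_pos.1 (KV b hbmem'), sub_pos.1 (KW b hbmem')⟩
end

section
/- The hitting-time map (0, k) ∋ h₀ ↦ T_{h=k}(h₀) is strictly decreasing: if 0 < h₀ < h̃₀ < k then T_{h=k}(h̃₀) < T_{h=k}(h₀). -/
open Set Filter Topology intervalIntegral MeasureTheory

private lemma no_downcross {T t₀ d : ℝ} {y : ℝ → ℝ}
    (hy : HasDerivWithinAt y d (Icc 0 T) t₀) (ht₀ : t₀ ∈ Icc 0 T) (ht₀pos : 0 < t₀)
    (hy0 : y t₀ = 0) (hd : 0 < d) (hpos : ∀ t ∈ Ico 0 t₀, 0 < y t) : False := by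
  have hsub : Ico (0:ℝ) t₀ ⊆ Icc 0 T \ {t₀} := fun t ht =>
    ⟨⟨ht.1, ht.2.le.trans ht₀.2⟩, fun h => (ne_of_lt ht.2) (mem_singleton_iff.mp h)⟩
  have hneb : (𝓝[Ico (0:ℝ) t₀] t₀).NeBot := by
    rw [← mem_closure_iff_nhdsWithin_neBot, closure_Ico (ne_of_lt ht₀pos)]
    exact right_mem_Icc.mpr ht₀pos.le
  have h2 : Filter.Tendsto (slope y t₀) (𝓝[Ico (0:ℝ) t₀] t₀) (𝓝 d) :=
    (hasDerivWithinAt_iff_tendsto_slope.mp hy).mono_left (nhdsWithin_mono _ hsub)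
  have h3 : ∀ᶠ t in 𝓝[Ico (0:ℝ) t₀] t₀, 0 < slope y t₀ t :=
    h2.eventually (eventually_gt_nhds hd)
  obtain ⟨t, hts, htm⟩ := (h3.and eventually_mem_nhdsWithin).exists
  rw [slope_def_field] at hts
  have hneg : (y t - y t₀) / (t - t₀) < 0 :=
    div_neg_of_pos_of_neg (by rw [hy0]; simpa using hpos t htm) (by linarith [htm.2])
  linarith

private lemma hit_attained {τ₀ : WithTop ℝ} {Hh : ℝ → ℝ} {h₀ k Th : ℝ}
    (hcont : ∀ T' : ℝ, 0 ≤ T' → (T' : WithTop ℝ) < τ₀ → ContinuousOn Hh (Icc 0 T'))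
    (hne : {t : ℝ | 0 < t ∧ (t : WithTop ℝ) < τ₀ ∧ Hh t = k}.Nonempty)
    (hTh : Th = sInf {t : ℝ | 0 < t ∧ (t : WithTop ℝ) < τ₀ ∧ Hh t = k})
    (h0 : Hh 0 = h₀) (hne' : h₀ ≠ k) :
    (0 < Th ∧ (Th : WithTop ℝ) < τ₀ ∧ Hh Th = k) ∧
      ∀ t : ℝ, 0 < t → (t : WithTop ℝ) < τ₀ → Hh t = k → Th ≤ t := by
  set S := {t : ℝ | 0 < t ∧ (t : WithTop ℝ) < τ₀ ∧ Hh t = k} with hS_def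
  have hSbdd : BddBelow S := ⟨0, fun x hx => hx.1.le⟩
  have hmin : ∀ t : ℝ, 0 < t → (t : WithTop ℝ) < τ₀ → Hh t = k → Th ≤ t := by
    intro t h1 h2 h3; rw [hTh]; exact csInf_le hSbdd ⟨h1, h2, h3⟩
  obtain ⟨b, hbpos, hblt, hbk⟩ := hne
  set S' := S ∩ Icc 0 b with hS'_def
  have hbS' : b ∈ S' := ⟨⟨hbpos, hblt, hbk⟩, ⟨hbpos.le, le_rfl⟩⟩
  have hS'bdd : BddBelow S' := ⟨0, fun x hx => hx.1.1.le⟩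
  have hinf : sInf S = sInf S' := by
    apply le_antisymm
    · exact csInf_le_csInf hSbdd ⟨b, hbS'⟩ inter_subset_left
    · have hSne : S.Nonempty := ⟨b, hbpos, hblt, hbk⟩
      apply le_csInf hSne
      intro x hx
      rcases le_or_gt x b with h | h
      · exact csInf_le hS'bdd ⟨hx, ⟨hx.1.le, h⟩⟩
      · exact (csInf_le hS'bdd hbS').trans h.le
  have hHcont : ContinuousOn Hh (Icc 0 b) := hcont b hbpos.le hblt
  have hCclosed : IsClosed (Icc (0:ℝ) b ∩ Hh ⁻¹' {k}) :=
    hHcont.preimage_isClosed_of_isClosed isClosed_Icc isClosed_singleton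
  have hsub : S' ⊆ Icc (0:ℝ) b ∩ Hh ⁻¹' {k} := fun x hx =>
    ⟨hx.2, by simp only [mem_preimage, mem_singleton_iff]; exact hx.1.2.2⟩
  have hclmem : sInf S' ∈ Icc (0:ℝ) b ∩ Hh ⁻¹' {k} :=
    (closure_minimal hsub hCclosed) (csInf_mem_closure ⟨b, hbS'⟩ hS'bdd)
  have hThS' : Th ∈ Icc (0:ℝ) b ∩ Hh ⁻¹' {k} := by rw [hTh, hinf]; exact hclmem
  have hThk : Hh Th = k := by simpa using hThS'.2
  have hThpos : 0 < Th := by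
    rcases lt_or_eq_of_le hThS'.1.1 with h | h
    · exact h
    · exact absurd (by rw [← h0, h]; exact hThk) hne'
  have hThlt : (Th : WithTop ℝ) < τ₀ := lt_of_le_of_lt (WithTop.coe_le_coe.mpr hThS'.1.2) hblt
  exact ⟨⟨hThpos, hThlt, hThk⟩, hmin⟩

private lemma metzler3 {T K : ℝ} (hK : 0 < K) {u v p du dv dp : ℝ → ℝ}
    (hu : ∀ t ∈ Icc (0:ℝ) T, HasDerivWithinAt u (du t) (Icc 0 T) t)
    (hv : ∀ t ∈ Icc (0:ℝ) T, HasDerivWithinAt v (dv t) (Icc 0 T) t)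
    (hp : ∀ t ∈ Icc (0:ℝ) T, HasDerivWithinAt p (dp t) (Icc 0 T) t)
    (hu0 : 0 ≤ u 0) (hv0 : 0 ≤ v 0) (hp0 : 0 ≤ p 0)
    (hdu : ∀ t ∈ Icc (0:ℝ) T, ∀ c : ℝ, 0 < c → c ≤ 1 → u t = -c → -c ≤ v t → -c ≤ p t →
      -(K*c) ≤ du t)
    (hdv : ∀ t ∈ Icc (0:ℝ) T, ∀ c : ℝ, 0 < c → c ≤ 1 → v t = -c → -c ≤ u t → -c ≤ p t →
      -(K*c) ≤ dv t)
    (hdp : ∀ t ∈ Icc (0:ℝ) T, ∀ c : ℝ, 0 < c → c ≤ 1 → p t = -c → -c ≤ u t → -c ≤ v t →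
      -(K*c) ≤ dp t) :
    ∀ t ∈ Icc (0:ℝ) T, 0 ≤ u t ∧ 0 ≤ v t ∧ 0 ≤ p t := by
  have hucont : ContinuousOn u (Icc 0 T) := fun t ht => (hu t ht).continuousWithinAt
  have hvcont : ContinuousOn v (Icc 0 T) := fun t ht => (hv t ht).continuousWithinAt
  have hpcont : ContinuousOn p (Icc 0 T) := fun t ht => (hp t ht).continuousWithinAt
  have hecont : Continuous (fun t : ℝ => Real.exp (2*K*t)) :=
    Real.continuous_exp.comp (continuous_const.mul continuous_id)
  have key : ∀ ε : ℝ, 0 < ε → ε * Real.exp (2*K*T) ≤ 1 → ∀ t ∈ Icc (0:ℝ) T,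
      0 < u t + ε * Real.exp (2*K*t) ∧ 0 < v t + ε * Real.exp (2*K*t) ∧
        0 < p t + ε * Real.exp (2*K*t) := by
    intro ε hε hε1
    have heC : Continuous (fun t : ℝ => ε * Real.exp (2*K*t)) := continuous_const.mul hecont
    set B : Set ℝ := {t ∈ Icc (0:ℝ) T | u t + ε * Real.exp (2*K*t) ≤ 0 ∨
      v t + ε * Real.exp (2*K*t) ≤ 0 ∨ p t + ε * Real.exp (2*K*t) ≤ 0} with hB_def
    have hBempty : ¬ B.Nonempty := by
      rintro ⟨t₁, ht₁⟩
      have hclosed : IsClosed B := by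
        have c1 : IsClosed (Icc (0:ℝ) T ∩ (fun t => u t + ε * Real.exp (2*K*t)) ⁻¹' Iic 0) :=
          (hucont.add heC.continuousOn).preimage_isClosed_of_isClosed isClosed_Icc isClosed_Iic
        have c2 : IsClosed (Icc (0:ℝ) T ∩ (fun t => v t + ε * Real.exp (2*K*t)) ⁻¹' Iic 0) :=
          (hvcont.add heC.continuousOn).preimage_isClosed_of_isClosed isClosed_Icc isClosed_Iic
        have c3 : IsClosed (Icc (0:ℝ) T ∩ (fun t => p t + ε * Real.exp (2*K*t)) ⁻¹' Iic 0) :=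
          (hpcont.add heC.continuousOn).preimage_isClosed_of_isClosed isClosed_Icc isClosed_Iic
        have hBeq : B = (Icc (0:ℝ) T ∩ (fun t => u t + ε * Real.exp (2*K*t)) ⁻¹' Iic 0) ∪
            ((Icc (0:ℝ) T ∩ (fun t => v t + ε * Real.exp (2*K*t)) ⁻¹' Iic 0) ∪
             (Icc (0:ℝ) T ∩ (fun t => p t + ε * Real.exp (2*K*t)) ⁻¹' Iic 0)) := by
          ext x
          simp only [hB_def, mem_sep_iff, mem_union, mem_inter_iff, mem_preimage, mem_Iic]
          tauto
        rw [hBeq]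
        exact c1.union (c2.union c3)
      have hBbdd : BddBelow B := ⟨0, fun x hx => hx.1.1⟩
      set t₀ := sInf B with ht₀_def
      have ht₀B : t₀ ∈ B := hclosed.csInf_mem ⟨t₁, ht₁⟩ hBbdd
      have ht₀Icc : t₀ ∈ Icc (0:ℝ) T := ht₀B.1
      have hlow : ∀ t, 0 ≤ t → t < t₀ → 0 < u t + ε * Real.exp (2*K*t) ∧
          0 < v t + ε * Real.exp (2*K*t) ∧ 0 < p t + ε * Real.exp (2*K*t) := by
        intro t h0 hlt
        have htIcc : t ∈ Icc (0:ℝ) T := ⟨h0, hlt.le.trans ht₀Icc.2⟩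
        by_contra hne
        have htB : t ∈ B := by
          refine ⟨htIcc, ?_⟩
          by_contra hor
          push_neg at hor
          exact hne ⟨hor.1, hor.2.1, hor.2.2⟩
        exact absurd (csInf_le hBbdd htB) (not_le.mpr hlt)
      have ht₀pos : 0 < t₀ := by
        rcases lt_or_eq_of_le ht₀Icc.1 with h | h
        · exact h
        · exfalso
          have he0 : Real.exp (2*K*(0:ℝ)) = 1 := by norm_num
          rcases ht₀B.2 with h' | h' | h' <;> rw [← h] at h' <;> rw [he0] at h' <;> linarith
      have hnebot : (𝓝[Ico (0:ℝ) t₀] t₀).NeBot := by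
        rw [← mem_closure_iff_nhdsWithin_neBot, closure_Ico (ne_of_lt ht₀pos)]
        exact right_mem_Icc.mpr ht₀pos.le
      have hIcoSub : Ico (0:ℝ) t₀ ⊆ Icc 0 T := fun x hx => ⟨hx.1, hx.2.le.trans ht₀Icc.2⟩
      have hlim : ∀ y : ℝ → ℝ, ContinuousOn y (Icc 0 T) →
          (∀ t, 0 ≤ t → t < t₀ → 0 < y t + ε * Real.exp (2*K*t)) →
          0 ≤ y t₀ + ε * Real.exp (2*K*t₀) := by
        intro y hy hyp
        have h1 : Filter.Tendsto (fun t => y t + ε * Real.exp (2*K*t)) (𝓝[Ico (0:ℝ) t₀] t₀)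
            (𝓝 (y t₀ + ε * Real.exp (2*K*t₀))) :=
          ((hy t₀ ht₀Icc).mono hIcoSub).add heC.continuousAt.continuousWithinAt
        exact ge_of_tendsto h1 (eventually_mem_nhdsWithin.mono fun t ht => (hyp t ht.1 ht.2).le)
      have hepos : 0 < ε * Real.exp (2*K*t₀) := mul_pos hε (Real.exp_pos _)
      have hc1 : ε * Real.exp (2*K*t₀) ≤ 1 := by
        have h2 : Real.exp (2*K*t₀) ≤ Real.exp (2*K*T) :=
          Real.exp_le_exp.mpr (mul_le_mul_of_nonneg_left ht₀Icc.2 (by positivity))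
        nlinarith
      have hu₀ := hlim u hucont (fun t a b => (hlow t a b).1)
      have hv₀ := hlim v hvcont (fun t a b => (hlow t a b).2.1)
      have hp₀ := hlim p hpcont (fun t a b => (hlow t a b).2.2)
      have main : ∀ y dy : ℝ → ℝ,
          (∀ t ∈ Icc (0:ℝ) T, HasDerivWithinAt y (dy t) (Icc 0 T) t) →
          y t₀ + ε * Real.exp (2*K*t₀) = 0 →
          -(K * (ε * Real.exp (2*K*t₀))) ≤ dy t₀ →
          (∀ t, 0 ≤ t → t < t₀ → 0 < y t + ε * Real.exp (2*K*t)) → False := by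
        intro y dy hyd hy0 hdy hylow
        have hlin : HasDerivAt (fun t : ℝ => 2*K*t) (2*K) t₀ := by
          simpa using (hasDerivAt_id t₀).const_mul (2*K)
        have hed : HasDerivAt (fun t : ℝ => ε * Real.exp (2*K*t))
            (ε * (Real.exp (2*K*t₀) * (2*K))) t₀ := (hlin.exp).const_mul ε
        have hyed : HasDerivWithinAt (fun t => y t + ε * Real.exp (2*K*t))
            (dy t₀ + ε * (Real.exp (2*K*t₀) * (2*K))) (Icc 0 T) t₀ :=
          (hyd t₀ ht₀Icc).add hed.hasDerivWithinAt
        have hKe : 0 < K * (ε * Real.exp (2*K*t₀)) := mul_pos hK hepos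
        have hdpos : 0 < dy t₀ + ε * (Real.exp (2*K*t₀) * (2*K)) := by nlinarith
        exact no_downcross hyed ht₀Icc ht₀pos hy0 hdpos (fun t ht => hylow t ht.1 ht.2)
      rcases ht₀B.2 with h | h | h
      · have h0 : u t₀ + ε * Real.exp (2*K*t₀) = 0 := le_antisymm h hu₀
        refine main u du hu h0 ?_ (fun t a b => (hlow t a b).1)
        exact hdu t₀ ht₀Icc (ε * Real.exp (2*K*t₀)) hepos hc1 (by linarith)
          (by linarith) (by linarith)
      · have h0 : v t₀ + ε * Real.exp (2*K*t₀) = 0 := le_antisymm h hv₀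
        refine main v dv hv h0 ?_ (fun t a b => (hlow t a b).2.1)
        exact hdv t₀ ht₀Icc (ε * Real.exp (2*K*t₀)) hepos hc1 (by linarith)
          (by linarith) (by linarith)
      · have h0 : p t₀ + ε * Real.exp (2*K*t₀) = 0 := le_antisymm h hp₀
        refine main p dp hp h0 ?_ (fun t a b => (hlow t a b).2.2)
        exact hdp t₀ ht₀Icc (ε * Real.exp (2*K*t₀)) hepos hc1 (by linarith)
          (by linarith) (by linarith)
    intro t ht
    by_contra hbad
    apply hBempty
    refine ⟨t, ht, ?_⟩
    by_contra hor
    push_neg at hor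
    exact hbad ⟨hor.1, hor.2.1, hor.2.2⟩
  intro t ht
  have final : ∀ w : ℝ,
      (∀ ε : ℝ, 0 < ε → ε * Real.exp (2*K*T) ≤ 1 → 0 < w + ε * Real.exp (2*K*t)) → 0 ≤ w := by
    intro w hw
    by_contra hneg
    push_neg at hneg
    have hE := Real.exp_pos (2*K*t)
    have hET := Real.exp_pos (2*K*T)
    set ε := min (Real.exp (2*K*T))⁻¹ (-w / (2*Real.exp (2*K*t))) with hεdef
    have hε : 0 < ε := lt_min (inv_pos.mpr hET) (div_pos (by linarith) (by positivity))
    have h1 : ε * Real.exp (2*K*T) ≤ 1 := by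
      calc ε * Real.exp (2*K*T) ≤ (Real.exp (2*K*T))⁻¹ * Real.exp (2*K*T) :=
            mul_le_mul_of_nonneg_right (min_le_left _ _) hET.le
        _ = 1 := inv_mul_cancel₀ hET.ne'
    have h2 := hw ε hε h1
    have h3 : ε * Real.exp (2*K*t) ≤ -w/2 := by
      have hm := min_le_right (Real.exp (2*K*T))⁻¹ (-w / (2*Real.exp (2*K*t)))
      calc ε * Real.exp (2*K*t) ≤ (-w / (2*Real.exp (2*K*t))) * Real.exp (2*K*t) :=
            mul_le_mul_of_nonneg_right hm hE.le
        _ = -w/2 := by field_simp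
    linarith
  exact ⟨final (u t) (fun ε h1 h2 => (key ε h1 h2 t ht).1),
    final (v t) (fun ε h1 h2 => (key ε h1 h2 t ht).2.1),
    final (p t) (fun ε h1 h2 => (key ε h1 h2 t ht).2.2)⟩

private lemma lin_lower {T : ℝ} (hT : 0 ≤ T) {x d c r : ℝ → ℝ}
    (hx : ∀ t ∈ Icc (0:ℝ) T, HasDerivWithinAt x (d t) (Icc 0 T) t)
    (hc : ContinuousOn c (Icc 0 T))
    (hd : ∀ t ∈ Icc (0:ℝ) T, d t = c t * x t + r t)
    (hr : ∀ t ∈ Icc (0:ℝ) T, 0 ≤ r t)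
    (hx0 : 0 ≤ x 0) :
    ∀ t ∈ Icc (0:ℝ) T, 0 ≤ x t ∧ (0 < x 0 → 0 < x t) := by
  set φ : ℝ → ℝ := fun t => ∫ s in (0:ℝ)..t, c s with hφ_def
  have huIcc : uIcc (0:ℝ) T = Icc 0 T := uIcc_of_le hT
  have hint : IntegrableOn c (Icc 0 T) := hc.integrableOn_Icc
  have hφcont : ContinuousOn φ (Icc 0 T) := by
    have := intervalIntegral.continuousOn_primitive_interval (μ := volume)
      (f := c) (a := (0:ℝ)) (b := T) (by rwa [huIcc])
    rwa [huIcc] at this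
  have hφd : ∀ t ∈ Ioo (0:ℝ) T, HasDerivAt φ (c t) t := by
    intro t ht
    apply intervalIntegral.integral_hasDerivAt_right
    · apply ContinuousOn.intervalIntegrable
      apply hc.mono
      rw [uIcc_of_le ht.1.le]
      exact Icc_subset_Icc le_rfl ht.2.le
    · exact (hc.mono Ioo_subset_Icc_self).stronglyMeasurableAtFilter isOpen_Ioo t ht
    · exact hc.continuousAt (Icc_mem_nhds ht.1 ht.2)
  have hxcont : ContinuousOn x (Icc 0 T) := fun t ht => (hx t ht).continuousWithinAt
  set z : ℝ → ℝ := fun t => x t * Real.exp (-φ t) with hz_def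
  have hzcont : ContinuousOn z (Icc 0 T) :=
    hxcont.mul (Real.continuous_exp.comp_continuousOn hφcont.neg)
  have hzd : ∀ t ∈ Ioo (0:ℝ) T, HasDerivAt z (r t * Real.exp (-φ t)) t := by
    intro t ht
    have htIcc : t ∈ Icc (0:ℝ) T := Ioo_subset_Icc_self ht
    have hxd : HasDerivAt x (d t) t := (hx t htIcc).hasDerivAt (Icc_mem_nhds ht.1 ht.2)
    have he : HasDerivAt (fun t => Real.exp (-φ t)) (Real.exp (-φ t) * -(c t)) t :=
      ((hφd t ht).neg).exp
    have := hxd.mul he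
    have hval : r t * Real.exp (-φ t) =
        d t * Real.exp (-φ t) + x t * (Real.exp (-φ t) * -(c t)) := by
      rw [hd t htIcc]; ring
    rw [hval]; exact this
  have hmono : MonotoneOn z (Icc 0 T) := by
    apply monotoneOn_of_deriv_nonneg (convex_Icc 0 T) hzcont
    · intro t ht
      rw [interior_Icc] at ht
      exact (hzd t ht).differentiableAt.differentiableWithinAt
    · intro t ht
      rw [interior_Icc] at ht
      rw [(hzd t ht).deriv]
      exact mul_nonneg (hr t (Ioo_subset_Icc_self ht)) (Real.exp_pos _).le
  intro t ht
  have h1 : z 0 ≤ z t := hmono (left_mem_Icc.mpr hT) ht ht.1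
  have hz0 : z 0 = x 0 := by
    simp [hz_def, hφ_def, intervalIntegral.integral_same]
  have hepos := Real.exp_pos (-φ t)
  rw [hz0] at h1
  have h1' : x 0 ≤ x t * Real.exp (-φ t) := by simpa [hz_def] using h1
  constructor
  · nlinarith [h1', hepos, hx0]
  · intro h
    nlinarith [h1', hepos]

set_option maxHeartbeats 2000000 in
/-- the hitting-time map `h₀ ↦ T_{h=k}(h₀)` is strictly decreasing on `(0,k)`.
For each `h₀ ∈ (0,k)`, `(H h₀, F h₀, G h₀)` is the maximal solution of the forward ODE
system with maximal interval `[0, τ h₀)` (maximality expressed by `hmax`), and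
`Thit h₀` is the (finite) hitting time of the level `k`. -/
theorem stmt9 (I : ℕ) (hI : 1 ≤ I) (C₀ T a σD α k : ℝ)
    (hT : 0 < T) (ha : 0 < a) (hσD : 0 < σD) (hα : 0 < α) (hk : 0 < k)
    (τ : ℝ → WithTop ℝ) (H F G : ℝ → ℝ → ℝ) (Thit : ℝ → ℝ)
    (hτ : ∀ h₀ ∈ Ioo (0 : ℝ) k, 0 < τ h₀)
    (hsol : ∀ h₀ ∈ Ioo (0 : ℝ) k,
      FwdSol I C₀ a σD α h₀ (H h₀) (F h₀) (G h₀) {t : ℝ | 0 ≤ t ∧ (t : WithTop ℝ) < τ h₀})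
    (hmax : ∀ h₀ ∈ Ioo (0 : ℝ) k, ∀ (T' : ℝ) (h' f' g' : ℝ → ℝ),
      FwdSol I C₀ a σD α h₀ h' f' g' (Ico 0 T') → (T' : WithTop ℝ) ≤ τ h₀)
    (hhit : ∀ h₀ ∈ Ioo (0 : ℝ) k,
      {t : ℝ | 0 < t ∧ (t : WithTop ℝ) < τ h₀ ∧ H h₀ t = k}.Nonempty ∧
      Thit h₀ = sInf {t : ℝ | 0 < t ∧ (t : WithTop ℝ) < τ h₀ ∧ H h₀ t = k}) :
    StrictAntiOn Thit (Ioo 0 k) := by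
  intro h₀ hh₀ h₁ hh₁ hlt
  by_contra hcon
  push_neg at hcon
  obtain ⟨hH0, hF0, hG0, hder⟩ := hsol h₀ hh₀
  obtain ⟨hH1, hF1, hG1, hder'⟩ := hsol h₁ hh₁
  have hcont₀ : ∀ T' : ℝ, 0 ≤ T' → (T' : WithTop ℝ) < τ h₀ → ContinuousOn (H h₀) (Icc 0 T') := by
    intro T' _ hT' t ht
    exact ((hder t ⟨ht.1, lt_of_le_of_lt (WithTop.coe_le_coe.mpr ht.2) hT'⟩).1.continuousWithinAt).mono
      (fun s hs => ⟨hs.1, lt_of_le_of_lt (WithTop.coe_le_coe.mpr hs.2) hT'⟩)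
  have hcont₁ : ∀ T' : ℝ, 0 ≤ T' → (T' : WithTop ℝ) < τ h₁ → ContinuousOn (H h₁) (Icc 0 T') := by
    intro T' _ hT' t ht
    exact ((hder' t ⟨ht.1, lt_of_le_of_lt (WithTop.coe_le_coe.mpr ht.2) hT'⟩).1.continuousWithinAt).mono
      (fun s hs => ⟨hs.1, lt_of_le_of_lt (WithTop.coe_le_coe.mpr hs.2) hT'⟩)
  obtain ⟨⟨hT0pos, hT0lt, hT0hit⟩, _⟩ :=
    hit_attained hcont₀ (hhit h₀ hh₀).1 (hhit h₀ hh₀).2 hH0 (ne_of_lt hh₀.2)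
  obtain ⟨⟨hT1pos, hT1lt, hT1hit⟩, hT1min⟩ :=
    hit_attained hcont₁ (hhit h₁ hh₁).1 (hhit h₁ hh₁).2 hH1 (ne_of_lt hh₁.2)
  set T₁ := Thit h₀ with hT₁def
  have hT₁0 : (0:ℝ) ≤ T₁ := hT0pos.le
  have hsub₀ : Icc (0:ℝ) T₁ ⊆ {t : ℝ | 0 ≤ t ∧ (t : WithTop ℝ) < τ h₀} :=
    fun t ht => ⟨ht.1, lt_of_le_of_lt (WithTop.coe_le_coe.mpr ht.2) hT0lt⟩
  have hT1lt' : (T₁ : WithTop ℝ) < τ h₁ :=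
    lt_of_le_of_lt (WithTop.coe_le_coe.mpr hcon) hT1lt
  have hsub₁ : Icc (0:ℝ) T₁ ⊆ {t : ℝ | 0 ≤ t ∧ (t : WithTop ℝ) < τ h₁} :=
    fun t ht => ⟨ht.1, lt_of_le_of_lt (WithTop.coe_le_coe.mpr ht.2) hT1lt'⟩
  have hdH : ∀ t ∈ Icc (0:ℝ) T₁,
      HasDerivWithinAt (H h₀) (2 * G h₀ t / α * H h₀ t) (Icc 0 T₁) t :=
    fun t ht => ((hder t (hsub₀ ht)).1).mono hsub₀
  have hdF : ∀ t ∈ Icc (0:ℝ) T₁,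
      HasDerivWithinAt (F h₀)
        (1 + F h₀ t * (a ^ 2 * σD ^ 2 / (2 * (I : ℝ)) * H h₀ t - C₀)) (Icc 0 T₁) t :=
    fun t ht => ((hder t (hsub₀ ht)).2.1).mono hsub₀
  have hdG : ∀ t ∈ Icc (0:ℝ) T₁,
      HasDerivWithinAt (G h₀)
        (a * σD ^ 2 * F h₀ t - 2 / α * G h₀ t ^ 2 +
          G h₀ t * (a ^ 2 * σD ^ 2 / (2 * (I : ℝ)) * H h₀ t - C₀)) (Icc 0 T₁) t :=
    fun t ht => ((hder t (hsub₀ ht)).2.2).mono hsub₀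
  have hdH' : ∀ t ∈ Icc (0:ℝ) T₁,
      HasDerivWithinAt (H h₁) (2 * G h₁ t / α * H h₁ t) (Icc 0 T₁) t :=
    fun t ht => ((hder' t (hsub₁ ht)).1).mono hsub₁
  have hdF' : ∀ t ∈ Icc (0:ℝ) T₁,
      HasDerivWithinAt (F h₁)
        (1 + F h₁ t * (a ^ 2 * σD ^ 2 / (2 * (I : ℝ)) * H h₁ t - C₀)) (Icc 0 T₁) t :=
    fun t ht => ((hder' t (hsub₁ ht)).2.1).mono hsub₁
  have hdG' : ∀ t ∈ Icc (0:ℝ) T₁,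
      HasDerivWithinAt (G h₁)
        (a * σD ^ 2 * F h₁ t - 2 / α * G h₁ t ^ 2 +
          G h₁ t * (a ^ 2 * σD ^ 2 / (2 * (I : ℝ)) * H h₁ t - C₀)) (Icc 0 T₁) t :=
    fun t ht => ((hder' t (hsub₁ ht)).2.2).mono hsub₁
  have hHc : ContinuousOn (H h₀) (Icc 0 T₁) := fun t ht => (hdH t ht).continuousWithinAt
  have hFc : ContinuousOn (F h₀) (Icc 0 T₁) := fun t ht => (hdF t ht).continuousWithinAt
  have hGc : ContinuousOn (G h₀) (Icc 0 T₁) := fun t ht => (hdG t ht).continuousWithinAt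
  have hHc' : ContinuousOn (H h₁) (Icc 0 T₁) := fun t ht => (hdH' t ht).continuousWithinAt
  have hFc' : ContinuousOn (F h₁) (Icc 0 T₁) := fun t ht => (hdF' t ht).continuousWithinAt
  have hGc' : ContinuousOn (G h₁) (Icc 0 T₁) := fun t ht => (hdG' t ht).continuousWithinAt
  have hIpos : (0:ℝ) < (I:ℝ) := by
    have h1 : 0 < I := lt_of_lt_of_le one_pos hI
    exact_mod_cast h1
  have hqc : ContinuousOn (fun t => a ^ 2 * σD ^ 2 / (2 * (I:ℝ)) * H h₀ t - C₀) (Icc 0 T₁) :=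
    (continuousOn_const.mul hHc).sub continuousOn_const
  have hF00 : 0 ≤ F h₀ 0 := by rw [hF0]; norm_num
  have hFpos : ∀ t ∈ Icc (0:ℝ) T₁, 0 ≤ F h₀ t := by
    intro t ht
    have := lin_lower (c := fun t => a ^ 2 * σD ^ 2 / (2 * (I:ℝ)) * H h₀ t - C₀)
      (r := fun _ => (1:ℝ)) hT₁0 hdF hqc (fun t _ => by ring) (fun t _ => zero_le_one) hF00
    exact (this t ht).1
  have hGc_coef : ContinuousOn
      (fun t => (a ^ 2 * σD ^ 2 / (2 * (I:ℝ)) * H h₀ t - C₀) - 2/α * G h₀ t) (Icc 0 T₁) :=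
    hqc.sub (continuousOn_const.mul hGc)
  have hG00 : 0 ≤ G h₀ 0 := by rw [hG0]
  have hGpos : ∀ t ∈ Icc (0:ℝ) T₁, 0 ≤ G h₀ t := by
    intro t ht
    have := lin_lower
      (c := fun t => (a ^ 2 * σD ^ 2 / (2 * (I:ℝ)) * H h₀ t - C₀) - 2/α * G h₀ t)
      (r := fun t => a * σD ^ 2 * F h₀ t) hT₁0 hdG hGc_coef
      (fun t _ => by ring) (fun t htt => mul_nonneg (by positivity) (hFpos t htt)) hG00
    exact (this t ht).1
  have hH1c_coef : ContinuousOn (fun t => 2 * G h₁ t / α) (Icc 0 T₁) :=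
    (continuousOn_const.mul hGc').div_const α
  have hH10 : 0 ≤ H h₁ 0 := by rw [hH1]; exact (lt_trans hh₀.1 hlt).le
  have hH1pos : ∀ t ∈ Icc (0:ℝ) T₁, 0 ≤ H h₁ t := by
    intro t ht
    have := lin_lower (c := fun t => 2 * G h₁ t / α) (r := fun _ => (0:ℝ)) hT₁0 hdH'
      hH1c_coef (fun t _ => by ring) (fun t _ => le_refl 0) hH10
    exact (this t ht).1
  set u : ℝ → ℝ := fun t => F h₁ t - F h₀ t with hu_def
  set v : ℝ → ℝ := fun t => G h₁ t - G h₀ t with hv_def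
  set p : ℝ → ℝ := fun t => H h₁ t - H h₀ t with hp_def
  set du : ℝ → ℝ := fun t => (a ^ 2 * σD ^ 2 / (2 * (I:ℝ)) * H h₁ t - C₀) * u t
      + a ^ 2 * σD ^ 2 / (2 * (I:ℝ)) * F h₀ t * p t with hdu_def
  set dv : ℝ → ℝ := fun t => a * σD ^ 2 * u t
      + ((a ^ 2 * σD ^ 2 / (2 * (I:ℝ)) * H h₁ t - C₀) - 2/α * (G h₁ t + G h₀ t)) * v t
      + a ^ 2 * σD ^ 2 / (2 * (I:ℝ)) * G h₀ t * p t with hdv_def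
  set dp : ℝ → ℝ := fun t => 2/α * H h₁ t * v t + 2/α * G h₀ t * p t with hdp_def
  have hud : ∀ t ∈ Icc (0:ℝ) T₁, HasDerivWithinAt u (du t) (Icc 0 T₁) t := by
    intro t ht
    have h1 := (hdF' t ht).sub (hdF t ht)
    have he : (1 + F h₁ t * (a ^ 2 * σD ^ 2 / (2 * (I:ℝ)) * H h₁ t - C₀))
        - (1 + F h₀ t * (a ^ 2 * σD ^ 2 / (2 * (I:ℝ)) * H h₀ t - C₀)) = du t := by
      simp only [hdu_def, hu_def, hp_def]; ring
    exact he ▸ h1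
  have hvd : ∀ t ∈ Icc (0:ℝ) T₁, HasDerivWithinAt v (dv t) (Icc 0 T₁) t := by
    intro t ht
    have h1 := (hdG' t ht).sub (hdG t ht)
    have he : (a * σD ^ 2 * F h₁ t - 2 / α * G h₁ t ^ 2 +
          G h₁ t * (a ^ 2 * σD ^ 2 / (2 * (I : ℝ)) * H h₁ t - C₀))
        - (a * σD ^ 2 * F h₀ t - 2 / α * G h₀ t ^ 2 +
          G h₀ t * (a ^ 2 * σD ^ 2 / (2 * (I : ℝ)) * H h₀ t - C₀)) = dv t := by
      simp only [hdv_def, hu_def, hv_def, hp_def]; ring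
    exact he ▸ h1
  have hpd : ∀ t ∈ Icc (0:ℝ) T₁, HasDerivWithinAt p (dp t) (Icc 0 T₁) t := by
    intro t ht
    have h1 := (hdH' t ht).sub (hdH t ht)
    have he : (2 * G h₁ t / α * H h₁ t) - (2 * G h₀ t / α * H h₀ t) = dp t := by
      simp only [hdp_def, hv_def, hp_def]; ring
    exact he ▸ h1
  set M : ℝ → ℝ := fun t =>
      |a ^ 2 * σD ^ 2 / (2 * (I:ℝ)) * H h₁ t - C₀| + a ^ 2 * σD ^ 2 / (2 * (I:ℝ)) * F h₀ t
      + a * σD ^ 2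
      + |(a ^ 2 * σD ^ 2 / (2 * (I:ℝ)) * H h₁ t - C₀) - 2/α * (G h₁ t + G h₀ t)|
      + a ^ 2 * σD ^ 2 / (2 * (I:ℝ)) * G h₀ t
      + (2/α * H h₁ t + 2/α * G h₀ t) with hM_def
  have hq1c : ContinuousOn (fun t => a ^ 2 * σD ^ 2 / (2 * (I:ℝ)) * H h₁ t - C₀) (Icc 0 T₁) :=
    (continuousOn_const.mul hHc').sub continuousOn_const
  have hMcont : ContinuousOn M (Icc 0 T₁) := by
    rw [hM_def]
    exact (((((hq1c.abs.add (continuousOn_const.mul hFc)).add continuousOn_const).add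
      ((hq1c.sub (continuousOn_const.mul (hGc'.add hGc))).abs)).add
      (continuousOn_const.mul hGc)).add
      ((continuousOn_const.mul hHc').add (continuousOn_const.mul hGc)))
  obtain ⟨K₀, hK₀⟩ := IsCompact.exists_bound_of_continuousOn isCompact_Icc hMcont
  set K := K₀ + 1 with hK_def
  have hMle : ∀ t ∈ Icc (0:ℝ) T₁, M t ≤ K := by
    intro t ht
    have h1 := hK₀ t ht
    rw [Real.norm_eq_abs] at h1
    have h2 := le_abs_self (M t)
    rw [hK_def]; linarith
  have hKpos : 0 < K := by
    have h1 := hK₀ 0 (left_mem_Icc.mpr hT₁0)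
    have h2 := norm_nonneg (M 0)
    rw [hK_def]; linarith
  have hM_parts : ∀ t ∈ Icc (0:ℝ) T₁,
      (|a ^ 2 * σD ^ 2 / (2 * (I:ℝ)) * H h₁ t - C₀|
        + a ^ 2 * σD ^ 2 / (2 * (I:ℝ)) * F h₀ t ≤ K) ∧
      (a * σD ^ 2 + |(a ^ 2 * σD ^ 2 / (2 * (I:ℝ)) * H h₁ t - C₀) - 2/α * (G h₁ t + G h₀ t)|
        + a ^ 2 * σD ^ 2 / (2 * (I:ℝ)) * G h₀ t ≤ K) ∧
      (2/α * H h₁ t + 2/α * G h₀ t ≤ K) := by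
    intro t ht
    have hM := hMle t ht
    simp only [hM_def] at hM
    have n1 : (0:ℝ) ≤ |a ^ 2 * σD ^ 2 / (2 * (I:ℝ)) * H h₁ t - C₀| := abs_nonneg _
    have n2 : (0:ℝ) ≤ a ^ 2 * σD ^ 2 / (2 * (I:ℝ)) * F h₀ t :=
      mul_nonneg (by positivity) (hFpos t ht)
    have n3 : (0:ℝ) ≤ a * σD ^ 2 := by positivity
    have n4 : (0:ℝ) ≤ |(a ^ 2 * σD ^ 2 / (2 * (I:ℝ)) * H h₁ t - C₀)
        - 2/α * (G h₁ t + G h₀ t)| := abs_nonneg _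
    have n5 : (0:ℝ) ≤ a ^ 2 * σD ^ 2 / (2 * (I:ℝ)) * G h₀ t :=
      mul_nonneg (by positivity) (hGpos t ht)
    have n6 : (0:ℝ) ≤ 2/α * H h₁ t := mul_nonneg (by positivity) (hH1pos t ht)
    have n7 : (0:ℝ) ≤ 2/α * G h₀ t := mul_nonneg (by positivity) (hGpos t ht)
    exact ⟨by linarith, by linarith, by linarith⟩
  have hBdu : ∀ t ∈ Icc (0:ℝ) T₁, ∀ c : ℝ, 0 < c → c ≤ 1 → u t = -c → -c ≤ v t → -c ≤ p t →
      -(K*c) ≤ du t := by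
    intro t ht c hc _ huc hvc hpc
    obtain ⟨hm1, _, _⟩ := hM_parts t ht
    set X := a ^ 2 * σD ^ 2 / (2 * (I:ℝ)) * H h₁ t - C₀ with hX
    set Bf := a ^ 2 * σD ^ 2 / (2 * (I:ℝ)) * F h₀ t with hBf
    have hB : 0 ≤ Bf := mul_nonneg (by positivity) (hFpos t ht)
    have h1 : X * c ≤ |X| * c := mul_le_mul_of_nonneg_right (le_abs_self _) hc.le
    have h2 : Bf * (-c) ≤ Bf * p t := mul_le_mul_of_nonneg_left hpc hB
    have h3 : (|X| + Bf) * c ≤ K * c := mul_le_mul_of_nonneg_right hm1 hc.le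
    simp only [hdu_def]
    rw [← hX, ← hBf, huc]
    nlinarith [h1, h2, h3]
  have hBdv : ∀ t ∈ Icc (0:ℝ) T₁, ∀ c : ℝ, 0 < c → c ≤ 1 → v t = -c → -c ≤ u t → -c ≤ p t →
      -(K*c) ≤ dv t := by
    intro t ht c hc _ hvc huc hpc
    obtain ⟨_, hm2, _⟩ := hM_parts t ht
    set X := a ^ 2 * σD ^ 2 / (2 * (I:ℝ)) * H h₁ t - C₀ - 2/α * (G h₁ t + G h₀ t) with hX
    set Bg := a ^ 2 * σD ^ 2 / (2 * (I:ℝ)) * G h₀ t with hBg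
    set Aa := a * σD ^ 2 with hAa
    have hA : (0:ℝ) ≤ Aa := by rw [hAa]; positivity
    have hB : 0 ≤ Bg := by rw [hBg]; exact mul_nonneg (by positivity) (hGpos t ht)
    have h1 : Aa * (-c) ≤ Aa * u t := mul_le_mul_of_nonneg_left huc hA
    have h2 : X * c ≤ |X| * c := mul_le_mul_of_nonneg_right (le_abs_self _) hc.le
    have h3 : Bg * (-c) ≤ Bg * p t := mul_le_mul_of_nonneg_left hpc hB
    have h4 : (Aa + |X| + Bg) * c ≤ K * c := mul_le_mul_of_nonneg_right hm2 hc.le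
    simp only [hdv_def]
    rw [← hX, ← hBg, hvc]
    nlinarith [h1, h2, h3, h4]
  have hBdp : ∀ t ∈ Icc (0:ℝ) T₁, ∀ c : ℝ, 0 < c → c ≤ 1 → p t = -c → -c ≤ u t → -c ≤ v t →
      -(K*c) ≤ dp t := by
    intro t ht c hc _ hpc huc hvc
    obtain ⟨_, _, hm3⟩ := hM_parts t ht
    set Ph := 2/α * H h₁ t with hPh
    set Pg := 2/α * G h₀ t with hPg
    have hA : (0:ℝ) ≤ Ph := by rw [hPh]; exact mul_nonneg (by positivity) (hH1pos t ht)
    have hB : (0:ℝ) ≤ Pg := by rw [hPg]; exact mul_nonneg (by positivity) (hGpos t ht)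
    have h1 : Ph * (-c) ≤ Ph * v t := mul_le_mul_of_nonneg_left hvc hA
    have h2 : (Ph + Pg) * c ≤ K * c := mul_le_mul_of_nonneg_right hm3 hc.le
    simp only [hdp_def]
    rw [← hPh, ← hPg, hpc]
    nlinarith [h1, h2]
  have hu0 : 0 ≤ u 0 := by simp only [hu_def]; rw [hF0, hF1]; norm_num
  have hv0 : 0 ≤ v 0 := by simp only [hv_def]; rw [hG0, hG1]; norm_num
  have hp0 : 0 < p 0 := by simp only [hp_def]; rw [hH0, hH1]; linarith
  have hnn := metzler3 hKpos hud hvd hpd hu0 hv0 hp0.le hBdu hBdv hBdp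
  have hppos : 0 < p T₁ := by
    have hpc_coef : ContinuousOn (fun t => 2/α * G h₀ t) (Icc 0 T₁) :=
      continuousOn_const.mul hGc
    have := lin_lower (c := fun t => 2/α * G h₀ t) (r := fun t => 2/α * H h₁ t * v t)
      hT₁0 hpd hpc_coef (fun t _ => by simp only [hdp_def]; ring)
      (fun t ht => mul_nonneg (mul_nonneg (by positivity) (hH1pos t ht)) (hnn t ht).2.1)
      hp0.le
    exact (this T₁ (right_mem_Icc.mpr hT₁0)).2 hp0
  have hH1T : k < H h₁ T₁ := by
    have he : p T₁ = H h₁ T₁ - H h₀ T₁ := by simp [hp_def]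
    rw [he, hT0hit] at hppos
    linarith
  have hIVT := intermediate_value_Icc hT₁0 hHc'
  have hkmem : k ∈ Icc (H h₁ 0) (H h₁ T₁) := by
    rw [hH1]; exact ⟨hh₁.2.le, hH1T.le⟩
  obtain ⟨t, htmem, htk⟩ := hIVT hkmem
  have ht0 : 0 < t := by
    rcases lt_or_eq_of_le htmem.1 with h | h
    · exact h
    · exfalso; rw [← h, hH1] at htk; exact (ne_of_lt hh₁.2) htk
  have htT : t < T₁ := by
    rcases lt_or_eq_of_le htmem.2 with h | h
    · exact h
    · exfalso; rw [h] at htk; rw [htk] at hH1T; exact lt_irrefl k hH1T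
  have htτ : (t : WithTop ℝ) < τ h₁ :=
    lt_of_le_of_lt (WithTop.coe_le_coe.mpr htmem.2) hT1lt'
  have hfin := hT1min t ht0 htτ htk
  linarith
end

section
/- The hitting-time map (0, k) ∋ h₀ ↦ T_{h=k}(h₀) is continuous. -/
open Set

open Filter Real Topology

lemma deriv_le_zero_of_slopes {φ : ℝ → ℝ} {d b t : ℝ} {A : Set ℝ}
    (hd : HasDerivWithinAt φ d (Icc 0 b) t)
    (hA : A ⊆ Icc 0 b \ {t}) (hcl : t ∈ closure A)
    (hslope : ∀ z ∈ A, slope φ t z ≤ 0) : d ≤ 0 := by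
  have htend : Tendsto (slope φ t) (𝓝[Icc 0 b \ {t}] t) (𝓝 d) :=
    hasDerivWithinAt_iff_tendsto_slope.1 hd
  have htend' : Tendsto (slope φ t) (𝓝[A] t) (𝓝 d) :=
    htend.mono_left (nhdsWithin_mono _ hA)
  have : (𝓝[A] t).NeBot := mem_closure_iff_nhdsWithin_neBot.1 hcl
  exact le_of_tendsto htend' (eventually_nhdsWithin_of_forall hslope)

lemma deriv_le_zero_left {φ : ℝ → ℝ} {d b t : ℝ}
    (hd : HasDerivWithinAt φ d (Icc 0 b) t) (ht : 0 < t) (htb : t ≤ b)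
    (hge : ∀ s ∈ Ico 0 t, φ t ≤ φ s) : d ≤ 0 := by
  refine deriv_le_zero_of_slopes hd (A := Ico 0 t) ?_ ?_ ?_
  · intro z hz
    exact ⟨⟨hz.1, hz.2.le.trans htb⟩, fun h => absurd (h ▸ hz.2) (lt_irrefl _)⟩
  · rw [closure_Ico ht.ne]
    exact ⟨le_of_lt ht, le_refl t⟩
  · intro z hz
    rw [slope_def_field]
    have h1 : φ z - φ t ≥ 0 := sub_nonneg.2 (hge z hz)
    have h2 : z - t < 0 := sub_neg.2 hz.2
    exact div_nonpos_of_nonneg_of_nonpos h1 h2.le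

/-- the left limit: a function continuous within `Icc 0 b` at `t ∈ (0,b]` whose values on
`[0,t)` are `≥ 0` has `φ t ≥ 0`. -/
lemma nonneg_left_limit {φ : ℝ → ℝ} {b t : ℝ}
    (hc : ContinuousWithinAt φ (Icc 0 b) t) (ht : 0 < t) (htb : t ≤ b)
    (hge : ∀ s ∈ Ico 0 t, 0 ≤ φ s) : 0 ≤ φ t := by
  have hsub : Ico 0 t ⊆ Icc 0 b := fun z hz => ⟨hz.1, hz.2.le.trans htb⟩
  have htend : Tendsto φ (𝓝[Ico 0 t] t) (𝓝 (φ t)) := hc.mono hsub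
  have hcl : t ∈ closure (Ico 0 t) := by
    rw [closure_Ico ht.ne]; exact ⟨ht.le, le_refl t⟩
  have : (𝓝[Ico 0 t] t).NeBot := mem_closure_iff_nhdsWithin_neBot.1 hcl
  exact ge_of_tendsto htend (eventually_nhdsWithin_of_forall hge)


lemma gronwallBound_mono' {δ K ε : ℝ} (hδ : 0 ≤ δ) (hK : 0 ≤ K) (hε : 0 ≤ ε) {x y : ℝ}
    (hxy : x ≤ y) : gronwallBound δ K ε x ≤ gronwallBound δ K ε y := by
  rcases eq_or_lt_of_le hK with hK0 | hKpos
  · rw [← hK0, gronwallBound_K0]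
    simp only
    nlinarith
  · rw [gronwallBound_of_K_ne_0 hKpos.ne']
    simp only
    have h1 : exp (K * x) ≤ exp (K * y) := exp_le_exp.2 (mul_le_mul_of_nonneg_left hxy hK)
    have h2 : 0 ≤ ε / K := div_nonneg hε hKpos.le
    nlinarith

section Sol

variable {I : ℕ} {C₀ a σD α h₀ b : ℝ} {h f g : ℝ → ℝ}

lemma sol_cont_h (hs : FwdSol I C₀ a σD α h₀ h f g (Icc 0 b)) :
    ContinuousOn h (Icc 0 b) := fun t ht => ((hs.2.2.2 t ht).1).continuousWithinAt

lemma sol_cont_f (hs : FwdSol I C₀ a σD α h₀ h f g (Icc 0 b)) :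
    ContinuousOn f (Icc 0 b) := fun t ht => ((hs.2.2.2 t ht).2.1).continuousWithinAt

lemma sol_cont_g (hs : FwdSol I C₀ a σD α h₀ h f g (Icc 0 b)) :
    ContinuousOn g (Icc 0 b) := fun t ht => ((hs.2.2.2 t ht).2.2).continuousWithinAt

lemma sol_f_pos (hs : FwdSol I C₀ a σD α h₀ h f g (Icc 0 b)) :
    ∀ t ∈ Icc 0 b, 0 < f t := by
  by_contra hcon
  push_neg at hcon
  obtain ⟨t₁, ht₁, hft₁⟩ := hcon
  set A := {t | t ∈ Icc 0 b ∧ f t ≤ 0} with hAdef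
  have hA_closed : IsClosed A := by
    have : A = Icc 0 b ∩ f ⁻¹' (Iic 0) := by ext z; simp [hAdef, and_comm]
    rw [this]
    exact (sol_cont_f hs).preimage_isClosed_of_isClosed isClosed_Icc isClosed_Iic
  have hA_ne : A.Nonempty := ⟨t₁, ht₁, hft₁⟩
  have hbdd : BddBelow A := ⟨0, fun x hx => hx.1.1⟩
  set t₀ := sInf A with ht₀def
  have ht₀A : t₀ ∈ A := hA_closed.csInf_mem hA_ne hbdd
  have ht₀pos : 0 < t₀ := by
    rcases ht₀A.1.1.lt_or_eq with h' | h'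
    · exact h'
    · exfalso
      have : f 0 ≤ 0 := (h' ▸ ht₀A : (0:ℝ) ∈ A).2
      rw [hs.2.1] at this; linarith
  have hlt : ∀ s ∈ Ico 0 t₀, 0 < f s := by
    intro s hsmem
    by_contra h'
    push_neg at h'
    have : s ∈ A := ⟨⟨hsmem.1, hsmem.2.le.trans ht₀A.1.2⟩, h'⟩
    exact absurd (csInf_le hbdd this) (not_le.2 hsmem.2)
  have hft0 : f t₀ = 0 := by
    refine le_antisymm ht₀A.2 ?_
    exact nonneg_left_limit ((sol_cont_f hs) t₀ ht₀A.1) ht₀pos ht₀A.1.2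
      (fun s hsm => (hlt s hsm).le)
  have hd := (hs.2.2.2 t₀ ht₀A.1).2.1
  have hle : (1 : ℝ) + f t₀ * (a ^ 2 * σD ^ 2 / (2 * (I : ℝ)) * h t₀ - C₀) ≤ 0 :=
    deriv_le_zero_left hd ht₀pos ht₀A.1.2
      (fun s hsm => by rw [hft0]; exact (hlt s hsm).le)
  rw [hft0] at hle
  linarith

lemma sol_g_nonneg (ha : 0 < a) (hσD : 0 < σD)
    (hs : FwdSol I C₀ a σD α h₀ h f g (Icc 0 b)) :
    ∀ t ∈ Icc 0 b, 0 ≤ g t := by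
  by_contra hcon
  push_neg at hcon
  obtain ⟨t', ht', hgt'⟩ := hcon
  set A := {t | t ∈ Icc 0 b ∧ g t < 0} with hAdef
  have hA_ne : A.Nonempty := ⟨t', ht', hgt'⟩
  have hbdd : BddBelow A := ⟨0, fun x hx => hx.1.1⟩
  set t₁ := sInf A with ht₁def
  have hclA : t₁ ∈ closure A := csInf_mem_closure hA_ne hbdd
  have ht₁Icc : t₁ ∈ Icc 0 b := by
    have : closure A ⊆ Icc 0 b := closure_minimal (fun z hz => hz.1) isClosed_Icc
    exact this hclA
  have hge_left : ∀ s ∈ Ico 0 t₁, 0 ≤ g s := by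
    intro s hsmem
    by_contra h'
    push_neg at h'
    have : s ∈ A := ⟨⟨hsmem.1, hsmem.2.le.trans ht₁Icc.2⟩, h'⟩
    exact absurd (csInf_le hbdd this) (not_le.2 hsmem.2)
  -- g t₁ ≤ 0 by approximation from A
  have hgle : g t₁ ≤ 0 := by
    have htend : Tendsto g (𝓝[A] t₁) (𝓝 (g t₁)) :=
      ((sol_cont_g hs) t₁ ht₁Icc).mono (fun z hz => hz.1)
    have : (𝓝[A] t₁).NeBot := mem_closure_iff_nhdsWithin_neBot.1 hclA
    exact le_of_tendsto htend (eventually_nhdsWithin_of_forall (fun z hz => hz.2.le))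
  have hgt1 : g t₁ = 0 := by
    rcases ht₁Icc.1.lt_or_eq with h' | h'
    · exact le_antisymm hgle (nonneg_left_limit ((sol_cont_g hs) t₁ ht₁Icc) h' ht₁Icc.2 hge_left)
    · rw [← h', hs.2.2.1]
  have ht₁A : t₁ ∉ A := fun hmem => absurd (hgt1 ▸ hmem.2) (lt_irrefl (0:ℝ))
  have hd := (hs.2.2.2 t₁ ht₁Icc).2.2
  have hle : a * σD ^ 2 * f t₁ - 2 / α * g t₁ ^ 2 +
      g t₁ * (a ^ 2 * σD ^ 2 / (2 * (I : ℝ)) * h t₁ - C₀) ≤ 0 := by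
    refine deriv_le_zero_of_slopes hd (A := A) ?_ hclA ?_
    · intro z hz
      exact ⟨hz.1, fun hzz => ht₁A (hzz ▸ hz)⟩
    · intro z hz
      rw [slope_def_field]
      have hz_gt : t₁ < z := lt_of_le_of_ne (csInf_le hbdd hz) (fun hh => ht₁A (hh ▸ hz))
      have h1 : g z - g t₁ < 0 := by rw [hgt1]; simpa using hz.2
      have h2 : 0 < z - t₁ := sub_pos.2 hz_gt
      exact (div_nonpos_iff.2 (Or.inr ⟨h1.le, h2.le⟩))
  rw [hgt1] at hle
  have hfpos := sol_f_pos hs t₁ ht₁Icc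
  nlinarith [sq_nonneg σD, mul_pos (mul_pos ha (pow_pos hσD 2)) hfpos]

lemma sol_g_pos (ha : 0 < a) (hσD : 0 < σD)
    (hs : FwdSol I C₀ a σD α h₀ h f g (Icc 0 b)) :
    ∀ t ∈ Ioc 0 b, 0 < g t := by
  intro t ht
  rcases (sol_g_nonneg ha hσD hs t ⟨ht.1.le, ht.2⟩).lt_or_eq with h' | h'
  · exact h'
  exfalso
  have hd := (hs.2.2.2 t ⟨ht.1.le, ht.2⟩).2.2
  have hle : a * σD ^ 2 * f t - 2 / α * g t ^ 2 +
      g t * (a ^ 2 * σD ^ 2 / (2 * (I : ℝ)) * h t - C₀) ≤ 0 :=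
    deriv_le_zero_left hd ht.1 ht.2
      (fun s hsm => by rw [← h']; exact sol_g_nonneg ha hσD hs s ⟨hsm.1, hsm.2.le.trans ht.2⟩)
  rw [← h'] at hle
  have hfpos := sol_f_pos hs t ⟨ht.1.le, ht.2⟩
  nlinarith [mul_pos (mul_pos ha (pow_pos hσD 2)) hfpos]


/-- derivative facts as `HasDerivAt` at interior points -/
lemma sol_hasDerivAt_h (hs : FwdSol I C₀ a σD α h₀ h f g (Icc 0 b)) {t : ℝ}
    (ht : t ∈ Ioo 0 b) : HasDerivAt h (2 * g t / α * h t) t :=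
  ((hs.2.2.2 t ⟨ht.1.le, ht.2.le⟩).1).hasDerivAt (Icc_mem_nhds ht.1 ht.2)

lemma sol_h_pos (ha : 0 < a) (hσD : 0 < σD) (hα : 0 < α) (hh₀ : 0 < h₀)
    (hs : FwdSol I C₀ a σD α h₀ h f g (Icc 0 b)) :
    ∀ t ∈ Icc 0 b, 0 < h t := by
  by_contra hcon
  push_neg at hcon
  obtain ⟨t', ht', hht'⟩ := hcon
  set A := {t | t ∈ Icc 0 b ∧ h t ≤ 0} with hAdef
  have hA_closed : IsClosed A := by
    have : A = Icc 0 b ∩ h ⁻¹' (Iic 0) := by ext z; simp [hAdef, and_comm]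
    rw [this]
    exact (sol_cont_h hs).preimage_isClosed_of_isClosed isClosed_Icc isClosed_Iic
  have hA_ne : A.Nonempty := ⟨t', ht', hht'⟩
  have hbdd : BddBelow A := ⟨0, fun x hx => hx.1.1⟩
  set t₂ := sInf A with ht₂def
  have ht₂A : t₂ ∈ A := hA_closed.csInf_mem hA_ne hbdd
  have ht₂pos : 0 < t₂ := by
    rcases ht₂A.1.1.lt_or_eq with h' | h'
    · exact h'
    · exfalso
      have : h 0 ≤ 0 := (h' ▸ ht₂A : (0:ℝ) ∈ A).2
      rw [hs.1] at this; linarith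
  have hlt : ∀ s ∈ Ico 0 t₂, 0 < h s := by
    intro s hsmem
    by_contra h'
    push_neg at h'
    have : s ∈ A := ⟨⟨hsmem.1, hsmem.2.le.trans ht₂A.1.2⟩, h'⟩
    exact absurd (csInf_le hbdd this) (not_le.2 hsmem.2)
  -- h is monotone on [0, t₂]
  have hsub : Icc 0 t₂ ⊆ Icc 0 b := Icc_subset_Icc le_rfl ht₂A.1.2
  have hmono : MonotoneOn h (Icc 0 t₂) := by
    refine monotoneOn_of_deriv_nonneg (convex_Icc 0 t₂) ((sol_cont_h hs).mono hsub) ?_ ?_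
    · intro x hx
      rw [interior_Icc] at hx
      have hx' : x ∈ Ioo 0 b := ⟨hx.1, hx.2.trans_le ht₂A.1.2⟩
      exact ((sol_hasDerivAt_h hs hx').differentiableAt).differentiableWithinAt
    · intro x hx
      rw [interior_Icc] at hx
      have hx' : x ∈ Ioo 0 b := ⟨hx.1, hx.2.trans_le ht₂A.1.2⟩
      rw [(sol_hasDerivAt_h hs hx').deriv]
      have hg := sol_g_nonneg ha hσD hs x ⟨hx'.1.le, hx'.2.le⟩
      have hh := hlt x ⟨hx.1.le, hx.2⟩
      positivity
  have : h 0 ≤ h t₂ := hmono ⟨le_rfl, ht₂pos.le⟩ ⟨ht₂pos.le, le_rfl⟩ ht₂pos.le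
  rw [hs.1] at this
  linarith [ht₂A.2]

lemma sol_h_mono (ha : 0 < a) (hσD : 0 < σD) (hα : 0 < α) (hh₀ : 0 < h₀)
    (hs : FwdSol I C₀ a σD α h₀ h f g (Icc 0 b)) :
    StrictMonoOn h (Icc 0 b) := by
  refine strictMonoOn_of_deriv_pos (convex_Icc 0 b) (sol_cont_h hs) ?_
  intro x hx
  rw [interior_Icc] at hx
  rw [(sol_hasDerivAt_h hs hx).deriv]
  have hg := sol_g_pos ha hσD hs x ⟨hx.1, hx.2.le⟩
  have hh := sol_h_pos ha hσD hα hh₀ hs x ⟨hx.1.le, hx.2.le⟩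
  positivity


lemma sol_hasDeriv_Ici_f (hs : FwdSol I C₀ a σD α h₀ h f g (Icc 0 b)) {t : ℝ}
    (ht : t ∈ Ico 0 b) :
    HasDerivWithinAt f (1 + f t * (a ^ 2 * σD ^ 2 / (2 * (I : ℝ)) * h t - C₀)) (Ici t) t :=
  ((hs.2.2.2 t ⟨ht.1, ht.2.le⟩).2.1).mono_of_mem_nhdsWithin (Icc_mem_nhdsGE_of_mem ht)

lemma sol_hasDeriv_Ici_g (hs : FwdSol I C₀ a σD α h₀ h f g (Icc 0 b)) {t : ℝ}
    (ht : t ∈ Ico 0 b) :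
    HasDerivWithinAt g (a * σD ^ 2 * f t - 2 / α * g t ^ 2 +
      g t * (a ^ 2 * σD ^ 2 / (2 * (I : ℝ)) * h t - C₀)) (Ici t) t :=
  ((hs.2.2.2 t ⟨ht.1, ht.2.le⟩).2.2).mono_of_mem_nhdsWithin (Icc_mem_nhdsGE_of_mem ht)

lemma sol_hasDeriv_Ici_h (hs : FwdSol I C₀ a σD α h₀ h f g (Icc 0 b)) {t : ℝ}
    (ht : t ∈ Ico 0 b) :
    HasDerivWithinAt h (2 * g t / α * h t) (Ici t) t :=
  ((hs.2.2.2 t ⟨ht.1, ht.2.le⟩).1).mono_of_mem_nhdsWithin (Icc_mem_nhdsGE_of_mem ht)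

/-- `|κ h t − C₀| ≤ κ R + |C₀|` when `0 ≤ h t ≤ R`. -/
lemma c_abs_bound {κ C₀ x R : ℝ} (hκ : 0 ≤ κ) (hx0 : 0 ≤ x) (hxR : x ≤ R) :
    |κ * x - C₀| ≤ κ * R + |C₀| := by
  have h1 : 0 ≤ κ * x := mul_nonneg hκ hx0
  have h2 : κ * x ≤ κ * R := mul_le_mul_of_nonneg_left hxR hκ
  have h3 := neg_abs_le C₀
  have h4 := le_abs_self C₀
  rw [abs_le]
  constructor <;> linarith

lemma sol_f_bound (ha : 0 < a) (hσD : 0 < σD) (hα : 0 < α) (hh₀ : 0 < h₀) (hb : 0 ≤ b)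
    (hs : FwdSol I C₀ a σD α h₀ h f g (Icc 0 b)) {R : ℝ}
    (hhR : ∀ t ∈ Icc 0 b, h t ≤ R) :
    ∀ t ∈ Icc 0 b, f t ≤
      gronwallBound 1 (a ^ 2 * σD ^ 2 / (2 * (I : ℝ)) * R + |C₀|) 1 b := by
  set κ := a ^ 2 * σD ^ 2 / (2 * (I : ℝ)) with hκdef
  have hκ : 0 ≤ κ := by positivity
  have hR0 : 0 ≤ R := (hh₀.le.trans (hs.1 ▸ hhR 0 ⟨le_rfl, hb⟩))
  set M := κ * R + |C₀| with hMdef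
  have hM : 0 ≤ M := add_nonneg (mul_nonneg hκ hR0) (abs_nonneg _)
  have key := norm_le_gronwallBound_of_norm_deriv_right_le (E := ℝ) (f := f)
    (f' := fun t => 1 + f t * (κ * h t - C₀)) (δ := 1) (K := M) (ε := 1) (a := 0) (b := b)
    (sol_cont_f hs) (fun x hx => sol_hasDeriv_Ici_f hs hx)
    (by rw [hs.2.1]; simp) ?_
  · intro t ht
    have h1 : f t ≤ ‖f t‖ := le_abs_self _
    have h2 := key t ht
    have h3 : gronwallBound 1 M 1 (t - 0) ≤ gronwallBound 1 M 1 b :=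
      gronwallBound_mono' zero_le_one hM zero_le_one (by rw [sub_zero]; exact ht.2)
    linarith
  · intro x hx
    have hxIcc : x ∈ Icc 0 b := ⟨hx.1, hx.2.le⟩
    have hc := c_abs_bound (C₀ := C₀) hκ (sol_h_pos ha hσD hα hh₀ hs x hxIcc).le (hhR x hxIcc)
    have h5 : ‖(1 : ℝ) + f x * (κ * h x - C₀)‖ ≤ 1 + |f x| * |κ * h x - C₀| := by
      calc ‖(1 : ℝ) + f x * (κ * h x - C₀)‖ ≤ ‖(1:ℝ)‖ + ‖f x * (κ * h x - C₀)‖ :=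
            norm_add_le _ _
        _ = 1 + |f x| * |κ * h x - C₀| := by
            rw [Real.norm_eq_abs, Real.norm_eq_abs, abs_one, abs_mul]
    have h6 : |f x| * |κ * h x - C₀| ≤ |f x| * M :=
      mul_le_mul_of_nonneg_left hc (abs_nonneg _)
    have h7 : ‖f x‖ = |f x| := rfl
    rw [h7]
    linarith

lemma sol_g_bound (ha : 0 < a) (hσD : 0 < σD) (hα : 0 < α) (hh₀ : 0 < h₀) (hb : 0 ≤ b)
    (hs : FwdSol I C₀ a σD α h₀ h f g (Icc 0 b)) {R : ℝ}
    (hhR : ∀ t ∈ Icc 0 b, h t ≤ R) :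
    ∀ t ∈ Icc 0 b, g t ≤
      gronwallBound 0 (a ^ 2 * σD ^ 2 / (2 * (I : ℝ)) * R + |C₀|)
        (a * σD ^ 2 * gronwallBound 1 (a ^ 2 * σD ^ 2 / (2 * (I : ℝ)) * R + |C₀|) 1 b) b := by
  set κ := a ^ 2 * σD ^ 2 / (2 * (I : ℝ)) with hκdef
  have hκ : 0 ≤ κ := by positivity
  have hR0 : 0 ≤ R := (hh₀.le.trans (hs.1 ▸ hhR 0 ⟨le_rfl, hb⟩))
  set M := κ * R + |C₀| with hMdef
  have hM : 0 ≤ M := add_nonneg (mul_nonneg hκ hR0) (abs_nonneg _)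
  set Bf := gronwallBound 1 M 1 b with hBfdef
  have hBf1 : (1:ℝ) ≤ Bf := by
    have := gronwallBound_mono' zero_le_one hM zero_le_one hb (x := 0)
    rwa [gronwallBound_x0] at this
  have hε : 0 ≤ a * σD ^ 2 * Bf := by positivity
  have key := le_gronwallBound_of_liminf_deriv_right_le (f := g)
    (f' := fun t => a * σD ^ 2 * f t - 2 / α * g t ^ 2 + g t * (κ * h t - C₀))
    (δ := 0) (K := M) (ε := a * σD ^ 2 * Bf) (a := 0) (b := b)
    (sol_cont_g hs)
    (fun x hx r hr => (sol_hasDeriv_Ici_g hs hx).liminf_right_slope_le hr)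
    (le_of_eq hs.2.2.1) ?_
  · intro t ht
    have h2 := key t ht
    have h3 : gronwallBound 0 M (a * σD ^ 2 * Bf) (t - 0) ≤
        gronwallBound 0 M (a * σD ^ 2 * Bf) b :=
      gronwallBound_mono' le_rfl hM hε (by rw [sub_zero]; exact ht.2)
    linarith
  · intro x hx
    have hxIcc : x ∈ Icc 0 b := ⟨hx.1, hx.2.le⟩
    have hc := c_abs_bound (C₀ := C₀) hκ (sol_h_pos ha hσD hα hh₀ hs x hxIcc).le (hhR x hxIcc)
    have hg0 := sol_g_nonneg ha hσD hs x hxIcc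
    have hf0 := sol_f_pos hs x hxIcc
    have hfB := sol_f_bound ha hσD hα hh₀ hb hs hhR x hxIcc
    have h1 : a * σD ^ 2 * f x ≤ a * σD ^ 2 * Bf := by
      have hpos : (0:ℝ) ≤ a * σD ^ 2 := by positivity
      exact mul_le_mul_of_nonneg_left hfB hpos
    have h2 : (0:ℝ) ≤ 2 / α * g x ^ 2 := by positivity
    have h3 : g x * (κ * h x - C₀) ≤ g x * M :=
      mul_le_mul_of_nonneg_left (le_trans (le_abs_self _) hc) hg0
    nlinarith

end Sol

/-! ### The vector field and its Lipschitz property -/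

noncomputable def Vf (I : ℕ) (C₀ a σD α : ℝ) (p : ℝ × ℝ × ℝ) : ℝ × ℝ × ℝ :=
  (2 * p.2.2 / α * p.1,
   1 + p.2.1 * (a ^ 2 * σD ^ 2 / (2 * (I : ℝ)) * p.1 - C₀),
   a * σD ^ 2 * p.2.1 - 2 / α * p.2.2 ^ 2 +
     p.2.2 * (a ^ 2 * σD ^ 2 / (2 * (I : ℝ)) * p.1 - C₀))

def Box (R Q : ℝ) : Set (ℝ × ℝ × ℝ) := {p | |p.1| ≤ R ∧ |p.2.1| ≤ Q ∧ |p.2.2| ≤ Q}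

lemma c_abs_bound' {κ C₀ x R : ℝ} (hκ : 0 ≤ κ) (hx : |x| ≤ R) :
    |κ * x - C₀| ≤ κ * R + |C₀| := by
  have h1 : |κ * x - C₀| ≤ |κ * x| + |C₀| := abs_sub _ _
  rw [abs_mul, abs_of_nonneg hκ] at h1
  have h2 : κ * |x| ≤ κ * R := mul_le_mul_of_nonneg_left hx hκ
  linarith

lemma Vf_lipschitz (I : ℕ) {C₀ a σD α : ℝ} (ha : 0 < a) (hσD : 0 < σD) (hα : 0 < α)
    {R Q : ℝ} (hR : 0 ≤ R) (hQ : 0 ≤ Q) :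
    LipschitzOnWith
      (Real.toNNReal (2 / α * (Q + R) +
        (a ^ 2 * σD ^ 2 / (2 * (I : ℝ)) * R + |C₀| + Q * (a ^ 2 * σD ^ 2 / (2 * (I : ℝ)))) +
        (a * σD ^ 2 + 4 * Q / α +
          (a ^ 2 * σD ^ 2 / (2 * (I : ℝ)) * R + |C₀| + Q * (a ^ 2 * σD ^ 2 / (2 * (I : ℝ)))))))
      (Vf I C₀ a σD α) (Box R Q) := by
  set κ := a ^ 2 * σD ^ 2 / (2 * (I : ℝ)) with hκdef
  have hκ : 0 ≤ κ := by positivity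
  set K2 := κ * R + |C₀| + Q * κ with hK2def
  set KL := 2 / α * (Q + R) + K2 + (a * σD ^ 2 + 4 * Q / α + K2) with hKLdef
  have hK2nn : 0 ≤ K2 := by positivity
  have hKL : 0 ≤ KL := by positivity
  clear_value K2 KL
  rw [lipschitzOnWith_iff_dist_le_mul]
  intro p hp q hq
  obtain ⟨hp1, hp2, hp3⟩ := hp
  obtain ⟨hq1, hq2, hq3⟩ := hq
  set d := dist p q with hddef
  have hd0 : 0 ≤ d := dist_nonneg
  have hd1 : |p.1 - q.1| ≤ d := by
    rw [← Real.dist_eq]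
    exact le_trans (le_max_left _ _) (le_of_eq Prod.dist_eq.symm)
  have hd2 : |p.2.1 - q.2.1| ≤ d := by
    rw [← Real.dist_eq]
    calc dist p.2.1 q.2.1 ≤ dist p.2 q.2 := le_trans (le_max_left _ _) (le_of_eq Prod.dist_eq.symm)
      _ ≤ d := le_trans (le_max_right _ _) (le_of_eq Prod.dist_eq.symm)
  have hd3 : |p.2.2 - q.2.2| ≤ d := by
    rw [← Real.dist_eq]
    calc dist p.2.2 q.2.2 ≤ dist p.2 q.2 :=
          le_trans (le_max_right _ _) (le_of_eq Prod.dist_eq.symm)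
      _ ≤ d := le_trans (le_max_right _ _) (le_of_eq Prod.dist_eq.symm)
  have hcp : |κ * p.1 - C₀| ≤ κ * R + |C₀| := c_abs_bound' hκ hp1
  -- component 1
  have e1 : |(Vf I C₀ a σD α p).1 - (Vf I C₀ a σD α q).1| ≤ 2 / α * (Q + R) * d := by
    have heq : (Vf I C₀ a σD α p).1 - (Vf I C₀ a σD α q).1 =
        2 / α * (p.2.2 * (p.1 - q.1) + q.1 * (p.2.2 - q.2.2)) := by
      simp only [Vf]; ring
    rw [heq, abs_mul, abs_of_nonneg (by positivity : (0:ℝ) ≤ 2 / α)]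
    have t1 : |p.2.2 * (p.1 - q.1)| ≤ Q * d := by
      rw [abs_mul]; exact mul_le_mul hp3 hd1 (abs_nonneg _) hQ
    have t2 : |q.1 * (p.2.2 - q.2.2)| ≤ R * d := by
      rw [abs_mul]; exact mul_le_mul hq1 hd3 (abs_nonneg _) hR
    have t3 := (abs_add_le (p.2.2 * (p.1 - q.1)) (q.1 * (p.2.2 - q.2.2)))
    have hα2 : (0:ℝ) ≤ 2 / α := by positivity
    have t4 : |p.2.2 * (p.1 - q.1) + q.1 * (p.2.2 - q.2.2)| ≤ Q * d + R * d := by linarith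
    have t5 : 2 / α * |p.2.2 * (p.1 - q.1) + q.1 * (p.2.2 - q.2.2)| ≤ 2 / α * (Q * d + R * d) :=
      mul_le_mul_of_nonneg_left t4 hα2
    have t6 : 2 / α * (Q * d + R * d) = 2 / α * (Q + R) * d := by ring
    linarith
  -- component 2
  have e2 : |(Vf I C₀ a σD α p).2.1 - (Vf I C₀ a σD α q).2.1| ≤ K2 * d := by
    have heq : (Vf I C₀ a σD α p).2.1 - (Vf I C₀ a σD α q).2.1 =
        (p.2.1 - q.2.1) * (κ * p.1 - C₀) + q.2.1 * (κ * (p.1 - q.1)) := by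
      simp only [Vf]; ring
    rw [heq]
    have t1 : |(p.2.1 - q.2.1) * (κ * p.1 - C₀)| ≤ d * (κ * R + |C₀|) := by
      rw [abs_mul]
      exact mul_le_mul hd2 hcp (abs_nonneg _) hd0
    have t2 : |q.2.1 * (κ * (p.1 - q.1))| ≤ Q * (κ * d) := by
      rw [abs_mul, abs_mul, abs_of_nonneg hκ]
      exact mul_le_mul hq2 (mul_le_mul_of_nonneg_left hd1 hκ) (by positivity) hQ
    have t3 := abs_add_le ((p.2.1 - q.2.1) * (κ * p.1 - C₀)) (q.2.1 * (κ * (p.1 - q.1)))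
    have t4 : d * (κ * R + |C₀|) + Q * (κ * d) = K2 * d := by rw [hK2def]; ring
    linarith
  -- component 3
  have e3 : |(Vf I C₀ a σD α p).2.2 - (Vf I C₀ a σD α q).2.2| ≤
      (a * σD ^ 2 + 4 * Q / α + K2) * d := by
    have heq : (Vf I C₀ a σD α p).2.2 - (Vf I C₀ a σD α q).2.2 =
        a * σD ^ 2 * (p.2.1 - q.2.1) - 2 / α * ((p.2.2 + q.2.2) * (p.2.2 - q.2.2)) +
          ((p.2.2 - q.2.2) * (κ * p.1 - C₀) + q.2.2 * (κ * (p.1 - q.1))) := by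
      simp only [Vf]; ring
    rw [heq]
    have t1 : |a * σD ^ 2 * (p.2.1 - q.2.1)| ≤ a * σD ^ 2 * d := by
      rw [abs_mul, abs_of_nonneg (by positivity : (0:ℝ) ≤ a * σD ^ 2)]
      exact mul_le_mul_of_nonneg_left hd2 (by positivity)
    have t2 : |2 / α * ((p.2.2 + q.2.2) * (p.2.2 - q.2.2))| ≤ 2 / α * (2 * Q * d) := by
      rw [abs_mul, abs_mul, abs_of_nonneg (by positivity : (0:ℝ) ≤ 2 / α)]
      refine mul_le_mul_of_nonneg_left ?_ (by positivity)
      have : |p.2.2 + q.2.2| ≤ 2 * Q := by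
        calc |p.2.2 + q.2.2| ≤ |p.2.2| + |q.2.2| := abs_add_le _ _
          _ ≤ 2 * Q := by linarith
      exact mul_le_mul this hd3 (abs_nonneg _) (by positivity)
    have t3 : |(p.2.2 - q.2.2) * (κ * p.1 - C₀)| ≤ d * (κ * R + |C₀|) := by
      rw [abs_mul]
      exact mul_le_mul hd3 hcp (abs_nonneg _) hd0
    have t4 : |q.2.2 * (κ * (p.1 - q.1))| ≤ Q * (κ * d) := by
      rw [abs_mul, abs_mul, abs_of_nonneg hκ]
      exact mul_le_mul hq3 (mul_le_mul_of_nonneg_left hd1 hκ) (by positivity) hQ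
    have t5 := abs_sub (a * σD ^ 2 * (p.2.1 - q.2.1))
      (2 / α * ((p.2.2 + q.2.2) * (p.2.2 - q.2.2)))
    have t6 := abs_add_le (a * σD ^ 2 * (p.2.1 - q.2.1) -
        2 / α * ((p.2.2 + q.2.2) * (p.2.2 - q.2.2)))
      ((p.2.2 - q.2.2) * (κ * p.1 - C₀) + q.2.2 * (κ * (p.1 - q.1)))
    have t7 := abs_add_le ((p.2.2 - q.2.2) * (κ * p.1 - C₀)) (q.2.2 * (κ * (p.1 - q.1)))
    have t8 : a * σD ^ 2 * d + 2 / α * (2 * Q * d) + (d * (κ * R + |C₀|) + Q * (κ * d)) =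
        (a * σD ^ 2 + 4 * Q / α + K2) * d := by rw [hK2def]; field_simp; ring
    linarith
  -- assemble
  have hcoe : (Real.toNNReal KL : ℝ) = KL := Real.coe_toNNReal _ hKL
  calc dist (Vf I C₀ a σD α p) (Vf I C₀ a σD α q)
      = max (dist (Vf I C₀ a σD α p).1 (Vf I C₀ a σD α q).1)
          (max (dist (Vf I C₀ a σD α p).2.1 (Vf I C₀ a σD α q).2.1)
            (dist (Vf I C₀ a σD α p).2.2 (Vf I C₀ a σD α q).2.2)) := by
        rw [Prod.dist_eq, Prod.dist_eq]
    _ ≤ KL * d := by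
        have n1 : (0:ℝ) ≤ 2 / α * (Q + R) * d := by positivity
        have n2 : (0:ℝ) ≤ K2 * d := mul_nonneg hK2nn hd0
        have n3 : (0:ℝ) ≤ (a * σD ^ 2 + 4 * Q / α + K2) * d := by
          have : (0:ℝ) ≤ a * σD ^ 2 + 4 * Q / α + K2 := by positivity
          exact mul_nonneg this hd0
        have neq : KL * d = 2 / α * (Q + R) * d + K2 * d +
            (a * σD ^ 2 + 4 * Q / α + K2) * d := by rw [hKLdef]; ring
        refine max_le ?_ (max_le ?_ ?_)
        · rw [Real.dist_eq]; refine le_trans e1 ?_; linarith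
        · rw [Real.dist_eq]; refine le_trans e2 ?_; linarith
        · rw [Real.dist_eq]; refine le_trans e3 ?_; linarith
    _ = (Real.toNNReal KL : ℝ) * dist p q := by rw [hcoe]

lemma gronwallBound_mono_ε {δ K x : ℝ} (hK : 0 ≤ K) (hx : 0 ≤ x) {ε₁ ε₂ : ℝ}
    (hε : ε₁ ≤ ε₂) : gronwallBound δ K ε₁ x ≤ gronwallBound δ K ε₂ x := by
  rcases eq_or_lt_of_le hK with hK0 | hKpos
  · rw [← hK0, gronwallBound_K0, gronwallBound_K0]
    simp only
    nlinarith
  · rw [gronwallBound_of_K_ne_0 hKpos.ne', gronwallBound_of_K_ne_0 hKpos.ne']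
    simp only
    have h1 : (1:ℝ) ≤ exp (K * x) := Real.one_le_exp (by positivity)
    have h2 : ε₁ / K ≤ ε₂ / K := (div_le_div_iff_of_pos_right hKpos).2 hε
    nlinarith

/-- Continuous dependence on the initial value `h₀`, via Grönwall. -/
lemma comparison (I : ℕ) (C₀ a σD α : ℝ) (ha : 0 < a) (hσD : 0 < σD) (hα : 0 < α)
    (R B : ℝ) (hB : 0 ≤ B) :
    ∃ E : ℝ, 0 < E ∧ ∀ (b x y : ℝ) (h1 f1 g1 h2 f2 g2 : ℝ → ℝ),
      0 ≤ b → b ≤ B → 0 < x → 0 < y →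
      FwdSol I C₀ a σD α x h1 f1 g1 (Icc 0 b) →
      FwdSol I C₀ a σD α y h2 f2 g2 (Icc 0 b) →
      (∀ t ∈ Icc 0 b, h1 t ≤ R) → (∀ t ∈ Icc 0 b, h2 t ≤ R) →
      ∀ t ∈ Icc 0 b, |h1 t - h2 t| ≤ E * |x - y| := by
  set κ := a ^ 2 * σD ^ 2 / (2 * (I : ℝ)) with hκdef
  have hκ : 0 ≤ κ := by positivity
  set R' := max R 0 with hR'def
  have hR'0 : 0 ≤ R' := le_max_right _ _
  set M := κ * R' + |C₀| with hMdef
  have hM : 0 ≤ M := add_nonneg (mul_nonneg hκ hR'0) (abs_nonneg _)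
  set Qf := gronwallBound 1 M 1 B with hQfdef
  have hQf1 : (1:ℝ) ≤ Qf := by
    have := gronwallBound_mono' zero_le_one hM zero_le_one hB (x := 0)
    rwa [gronwallBound_x0] at this
  have hε0 : (0:ℝ) ≤ a * σD ^ 2 * Qf := mul_nonneg (by positivity) (by linarith)
  set Qg := gronwallBound 0 M (a * σD ^ 2 * Qf) B with hQgdef
  have hQg0 : 0 ≤ Qg := by
    have := gronwallBound_mono' (δ := 0) (ε := a * σD ^ 2 * Qf) le_rfl hM hε0 hB (x := 0)
    rwa [gronwallBound_x0] at this
  set Q := max Qf Qg with hQdef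
  have hQ0 : 0 ≤ Q := le_trans (by linarith) (le_max_left Qf Qg)
  set KL := 2 / α * (Q + R') + (κ * R' + |C₀| + Q * κ) +
      (a * σD ^ 2 + 4 * Q / α + (κ * R' + |C₀| + Q * κ)) with hKLdef
  have hKL : 0 ≤ KL := by positivity
  refine ⟨exp (KL * B), exp_pos _, ?_⟩
  intro b x y h1 f1 g1 h2 f2 g2 hb hbB hx hy sol1 sol2 hR1 hR2 t ht
  have hR1' : ∀ s ∈ Icc 0 b, h1 s ≤ R' := fun s hs => (hR1 s hs).trans (le_max_left _ _)
  have hR2' : ∀ s ∈ Icc 0 b, h2 s ≤ R' := fun s hs => (hR2 s hs).trans (le_max_left _ _)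
  -- trajectories
  set P1 : ℝ → ℝ × ℝ × ℝ := fun s => (h1 s, f1 s, g1 s) with hP1def
  set P2 : ℝ → ℝ × ℝ × ℝ := fun s => (h2 s, f2 s, g2 s) with hP2def
  have hvlip : ∀ s : ℝ, LipschitzOnWith (Real.toNNReal KL) (Vf I C₀ a σD α) (Box R' Q) :=
    fun _ => by
      have := Vf_lipschitz I (C₀ := C₀) ha hσD hα hR'0 hQ0
      rwa [hKLdef]
  -- memberships
  have hmem : ∀ (hh ff gg : ℝ → ℝ) (z : ℝ), 0 < z →
      FwdSol I C₀ a σD α z hh ff gg (Icc 0 b) → (∀ s ∈ Icc 0 b, hh s ≤ R') →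
      ∀ s ∈ Ico 0 b, (hh s, ff s, gg s) ∈ Box R' Q := by
    intro hh ff gg z hz sol hRz s hs
    have hsIcc : s ∈ Icc 0 b := ⟨hs.1, hs.2.le⟩
    refine ⟨?_, ?_, ?_⟩
    · rw [abs_of_pos (sol_h_pos ha hσD hα hz sol s hsIcc)]
      exact hRz s hsIcc
    · rw [abs_of_pos (sol_f_pos sol s hsIcc)]
      refine le_trans (sol_f_bound ha hσD hα hz hb sol hRz s hsIcc) (le_trans ?_
        (le_max_left Qf Qg))
      rw [hQfdef, hMdef]
      exact gronwallBound_mono' zero_le_one hM zero_le_one hbB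
    · rw [abs_of_nonneg (sol_g_nonneg ha hσD sol s hsIcc)]
      refine le_trans (sol_g_bound ha hσD hα hz hb sol hRz s hsIcc) (le_trans ?_
        (le_max_right Qf Qg))
      rw [hQgdef, hMdef]
      calc gronwallBound 0 M (a * σD ^ 2 * gronwallBound 1 M 1 b) b
          ≤ gronwallBound 0 M (a * σD ^ 2 * Qf) b := by
            refine gronwallBound_mono_ε hM hb ?_
            refine mul_le_mul_of_nonneg_left ?_ (by positivity)
            rw [hQfdef]
            exact gronwallBound_mono' zero_le_one hM zero_le_one hbB
        _ ≤ gronwallBound 0 M (a * σD ^ 2 * Qf) B :=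
            gronwallBound_mono' le_rfl hM hε0 hbB
  -- Grönwall
  have key := dist_le_of_trajectories_ODE_of_mem (v := fun _ p => Vf I C₀ a σD α p)
    (s := fun _ => Box R' Q) (K := Real.toNNReal KL) (f := P1) (g := P2)
    (a := 0) (b := b) (δ := |x - y|) (fun t _ => hvlip t)
    ((sol_cont_h sol1).prodMk ((sol_cont_f sol1).prodMk (sol_cont_g sol1)))
    (fun s hs => ((sol_hasDeriv_Ici_h sol1 hs).prodMk
      ((sol_hasDeriv_Ici_f sol1 hs).prodMk (sol_hasDeriv_Ici_g sol1 hs))))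
    (hmem h1 f1 g1 x hx sol1 hR1')
    ((sol_cont_h sol2).prodMk ((sol_cont_f sol2).prodMk (sol_cont_g sol2)))
    (fun s hs => ((sol_hasDeriv_Ici_h sol2 hs).prodMk
      ((sol_hasDeriv_Ici_f sol2 hs).prodMk (sol_hasDeriv_Ici_g sol2 hs))))
    (hmem h2 f2 g2 y hy sol2 hR2')
    (le_of_eq (by
      rw [hP1def, hP2def]
      simp only
      rw [Prod.dist_eq, Prod.dist_eq, sol1.1, sol1.2.1, sol1.2.2.1, sol2.1, sol2.2.1,
        sol2.2.2.1, dist_self, dist_self, Real.dist_eq]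
      simp [abs_nonneg]))
  have hdist := key t ht
  have hfst : |h1 t - h2 t| ≤ dist (P1 t) (P2 t) := by
    rw [← Real.dist_eq]
    have heq : dist (P1 t) (P2 t) =
        max (dist (h1 t) (h2 t)) (dist (f1 t, g1 t) (f2 t, g2 t)) := Prod.dist_eq
    rw [heq]
    exact le_max_left _ _
  have hcoe : (Real.toNNReal KL : ℝ) = KL := Real.coe_toNNReal _ hKL
  have hexp : exp ((Real.toNNReal KL : ℝ) * (t - 0)) ≤ exp (KL * B) := by
    rw [hcoe]
    exact exp_le_exp.2 (by nlinarith [ht.1, ht.2.trans hbB])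
  calc |h1 t - h2 t| ≤ dist (P1 t) (P2 t) := hfst
    _ ≤ |x - y| * exp ((Real.toNNReal KL : ℝ) * (t - 0)) := hdist
    _ ≤ |x - y| * exp (KL * B) := mul_le_mul_of_nonneg_left hexp (abs_nonneg _)
    _ = exp (KL * B) * |x - y| := mul_comm _ _

lemma FwdSol.restrict {I : ℕ} {C₀ a σD α h₀ b : ℝ} {h f g : ℝ → ℝ} {s : Set ℝ}
    (hs : FwdSol I C₀ a σD α h₀ h f g s) (hsub : Icc 0 b ⊆ s) :
    FwdSol I C₀ a σD α h₀ h f g (Icc 0 b) :=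
  ⟨hs.1, hs.2.1, hs.2.2.1, fun t ht =>
    ⟨((hs.2.2.2 t (hsub ht)).1).mono hsub, ((hs.2.2.2 t (hsub ht)).2.1).mono hsub,
      ((hs.2.2.2 t (hsub ht)).2.2).mono hsub⟩⟩

lemma dom_subset {τ₀ : WithTop ℝ} {c : ℝ} (hc : (c : WithTop ℝ) < τ₀) :
    Icc 0 c ⊆ {t : ℝ | 0 ≤ t ∧ (t : WithTop ℝ) < τ₀} := fun z hz =>
  ⟨hz.1, lt_of_le_of_lt (WithTop.coe_le_coe.2 hz.2) hc⟩

lemma hit_inf_mem {I : ℕ} {C₀ a σD α h₀ k : ℝ} {τ₀ : WithTop ℝ} {h f g : ℝ → ℝ}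
    (hh₀ : 0 < h₀) (hh₀k : h₀ < k)
    (hs : FwdSol I C₀ a σD α h₀ h f g {t : ℝ | 0 ≤ t ∧ (t : WithTop ℝ) < τ₀})
    (hne : {t : ℝ | 0 < t ∧ (t : WithTop ℝ) < τ₀ ∧ h t = k}.Nonempty) :
    (sInf {t : ℝ | 0 < t ∧ (t : WithTop ℝ) < τ₀ ∧ h t = k} ∈
      {t : ℝ | 0 < t ∧ (t : WithTop ℝ) < τ₀ ∧ h t = k}) ∧
    ∀ t, 0 ≤ t → t < sInf {t : ℝ | 0 < t ∧ (t : WithTop ℝ) < τ₀ ∧ h t = k} → h t < k := by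
  set S := {t : ℝ | 0 < t ∧ (t : WithTop ℝ) < τ₀ ∧ h t = k} with hSdef
  obtain ⟨t₁, ht₁pos, ht₁τ, ht₁k⟩ := hne
  have hsub : Icc 0 t₁ ⊆ {t : ℝ | 0 ≤ t ∧ (t : WithTop ℝ) < τ₀} := dom_subset ht₁τ
  have sol : FwdSol I C₀ a σD α h₀ h f g (Icc 0 t₁) := hs.restrict hsub
  have hcont : ContinuousOn h (Icc 0 t₁) := sol_cont_h sol
  set S' := {t | t ∈ Icc 0 t₁ ∧ h t = k} with hS'def
  have hS'closed : IsClosed S' := by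
    have : S' = Icc 0 t₁ ∩ h ⁻¹' {k} := by ext z; simp [hS'def, and_comm]
    rw [this]
    exact hcont.preimage_isClosed_of_isClosed isClosed_Icc isClosed_singleton
  have hS'ne : S'.Nonempty := ⟨t₁, ⟨ht₁pos.le, le_rfl⟩, ht₁k⟩
  have hS'bdd : BddBelow S' := ⟨0, fun z hz => hz.1.1⟩
  set t₀ := sInf S' with ht₀def
  have ht₀S' : t₀ ∈ S' := hS'closed.csInf_mem hS'ne hS'bdd
  have ht₀pos : 0 < t₀ := by
    rcases ht₀S'.1.1.lt_or_eq with h' | h'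
    · exact h'
    · exfalso
      have : h 0 = k := (h' ▸ ht₀S' : (0:ℝ) ∈ S').2
      rw [hs.1] at this
      linarith
  have ht₀S : t₀ ∈ S :=
    ⟨ht₀pos, lt_of_le_of_lt (WithTop.coe_le_coe.2 ht₀S'.1.2) ht₁τ, ht₀S'.2⟩
  have hSbdd : BddBelow S := ⟨0, fun z hz => hz.1.le⟩
  have hinf : sInf S = t₀ := by
    refine le_antisymm (csInf_le hSbdd ht₀S) (le_csInf ⟨t₀, ht₀S⟩ ?_)
    intro s hsS
    by_contra hlt
    push_neg at hlt
    have hsS' : s ∈ S' := ⟨⟨hsS.1.le, hlt.le.trans ht₀S'.1.2⟩, hsS.2.2⟩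
    exact absurd (csInf_le hS'bdd hsS') (not_le.2 hlt)
  constructor
  · rw [hinf]; exact ht₀S
  · intro t ht0 htlt
    rw [hinf] at htlt
    have htIcc : t ∈ Icc 0 t₁ := ⟨ht0, htlt.le.trans ht₀S'.1.2⟩
    have hne' : h t ≠ k := fun heq => by
      have : t ∈ S' := ⟨htIcc, heq⟩
      exact absurd (csInf_le hS'bdd this) (not_le.2 htlt)
    rcases lt_or_gt_of_ne hne' with h' | h'
    · exact h'
    · exfalso
      have hsub2 : Icc 0 t ⊆ Icc 0 t₁ := Icc_subset_Icc le_rfl htIcc.2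
      have hIVT := intermediate_value_Icc ht0 (hcont.mono hsub2)
      have hk_mem : k ∈ Icc (h 0) (h t) := ⟨by rw [hs.1]; exact hh₀k.le, h'.le⟩
      obtain ⟨s, hsIcc, hsk⟩ := hIVT hk_mem
      have : s ∈ S' := ⟨hsub2 hsIcc, hsk⟩
      have h1 := csInf_le hS'bdd this
      have h2 : (0:ℝ) < s := by
        rcases hsIcc.1.lt_or_eq with h'' | h''
        · exact h''
        · exfalso; rw [← h''] at hsk; rw [hs.1] at hsk; linarith
      linarith [hsIcc.2]

/-- the hitting-time map `h₀ ↦ T_{h=k}(h₀)` is continuous on `(0,k)`.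
Setup as in Statement 9; the strict monotonicity of the hitting-time map (known from the
context) is the hypothesis `hmono`. -/
theorem stmt11 (I : ℕ) (hI : 1 ≤ I) (C₀ T a σD α k : ℝ)
    (hT : 0 < T) (ha : 0 < a) (hσD : 0 < σD) (hα : 0 < α) (hk : 0 < k)
    (τ : ℝ → WithTop ℝ) (H F G : ℝ → ℝ → ℝ) (Thit : ℝ → ℝ)
    (hτ : ∀ h₀ ∈ Ioo (0 : ℝ) k, 0 < τ h₀)
    (hsol : ∀ h₀ ∈ Ioo (0 : ℝ) k,
      FwdSol I C₀ a σD α h₀ (H h₀) (F h₀) (G h₀) {t : ℝ | 0 ≤ t ∧ (t : WithTop ℝ) < τ h₀})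
    (hmax : ∀ h₀ ∈ Ioo (0 : ℝ) k, ∀ (T' : ℝ) (h' f' g' : ℝ → ℝ),
      FwdSol I C₀ a σD α h₀ h' f' g' (Ico 0 T') → (T' : WithTop ℝ) ≤ τ h₀)
    (hhit : ∀ h₀ ∈ Ioo (0 : ℝ) k,
      {t : ℝ | 0 < t ∧ (t : WithTop ℝ) < τ h₀ ∧ H h₀ t = k}.Nonempty ∧
      Thit h₀ = sInf {t : ℝ | 0 < t ∧ (t : WithTop ℝ) < τ h₀ ∧ H h₀ t = k})
    (hmono : StrictAntiOn Thit (Ioo 0 k)) :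
    ContinuousOn Thit (Ioo 0 k) := by
  rw [Metric.continuousOn_iff]
  intro x₀ hx₀ ε hε
  obtain ⟨hSne, hTeq⟩ := hhit x₀ hx₀
  have hsolx := hsol x₀ hx₀
  have hmemx := hit_inf_mem hx₀.1 hx₀.2 hsolx hSne
  rw [← hTeq] at hmemx
  obtain ⟨⟨hT0, hTτ, hTk⟩, hbefore⟩ := hmemx
  set T₀ := Thit x₀ with hT₀def
  set ε₁ := min (ε / 2) (T₀ / 2) with hε₁def
  have hε₁pos : 0 < ε₁ := lt_min (by linarith) (by linarith)
  have hε₁a : ε₁ ≤ ε / 2 := min_le_left _ _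
  have hε₁b : ε₁ ≤ T₀ / 2 := min_le_right _ _
  obtain ⟨ε', hε'pos, hε'le, hbτ⟩ :
      ∃ ε', 0 < ε' ∧ ε' ≤ ε₁ ∧ ((T₀ + ε' : ℝ) : WithTop ℝ) < τ x₀ := by
    rcases eq_or_ne (τ x₀) ⊤ with htop | hne'
    · exact ⟨ε₁, hε₁pos, le_rfl, by rw [htop]; exact WithTop.coe_lt_top _⟩
    · obtain ⟨c, hc⟩ := WithTop.ne_top_iff_exists.1 hne'
      have hcT : T₀ < c := by
        rw [← hc] at hTτ
        exact_mod_cast hTτ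
      refine ⟨min ε₁ ((c - T₀) / 2), lt_min hε₁pos (by linarith), min_le_left _ _, ?_⟩
      rw [← hc]
      have h1 : T₀ + min ε₁ ((c - T₀) / 2) < c := by
        have := min_le_right ε₁ ((c - T₀) / 2)
        linarith
      exact_mod_cast h1
  set b := T₀ + ε' with hbdef
  have hb0 : 0 ≤ b := by linarith
  have hTb : T₀ < b := by linarith
  have solxb : FwdSol I C₀ a σD α x₀ (H x₀) (F x₀) (G x₀) (Icc 0 b) :=
    hsolx.restrict (dom_subset hbτ)
  have hmonox : StrictMonoOn (H x₀) (Icc 0 b) := sol_h_mono ha hσD hα hx₀.1 solxb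
  set R := H x₀ b with hRdef
  have hRk : k < R := by
    have := hmonox ⟨hT0.le, hTb.le⟩ ⟨hb0, le_rfl⟩ hTb
    rwa [hTk] at this
  set b' := T₀ - ε₁ with hb'def
  have hb'0 : 0 < b' := by rw [hb'def]; linarith
  have hb'T : b' < T₀ := by rw [hb'def]; linarith
  have hb'b : b' ≤ b := by rw [hb'def, hbdef]; linarith
  have hm' : H x₀ b' < k := by
    have := hmonox ⟨hb'0.le, hb'b⟩ ⟨hT0.le, hTb.le⟩ hb'T
    rwa [hTk] at this
  set m := R - k with hmdef
  set m' := k - H x₀ b' with hm'def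
  have hm0 : 0 < m := by rw [hmdef]; linarith
  have hm'0 : 0 < m' := by rw [hm'def]; linarith
  have hHxR : ∀ t ∈ Icc 0 b, H x₀ t ≤ R := fun t ht =>
    hmonox.monotoneOn ht ⟨hb0, le_rfl⟩ ht.2
  obtain ⟨E, hEpos, hcomp⟩ := comparison I C₀ a σD α ha hσD hα R b hb0
  refine ⟨min m m' / (2 * E), by positivity, ?_⟩
  intro y hy hdist
  rw [Real.dist_eq] at hdist ⊢
  have hminpos : 0 < min m m' := lt_min hm0 hm'0
  have hEd : E * |y - x₀| < min m m' := by
    calc E * |y - x₀| < E * (min m m' / (2 * E)) := by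
          exact mul_lt_mul_of_pos_left hdist hEpos
      _ = min m m' / 2 := by field_simp
      _ < min m m' := by linarith
  have hEd' : E * |x₀ - y| < min m m' := by rwa [abs_sub_comm x₀ y]
  obtain ⟨hSney, hTeqy⟩ := hhit y hy
  have hsoly := hsol y hy
  have hmemy := hit_inf_mem hy.1 hy.2 hsoly hSney
  rw [← hTeqy] at hmemy
  obtain ⟨⟨hTy0, hTyτ, hTyk⟩, hbeforey⟩ := hmemy
  -- upper bound : Thit y ≤ b
  have hupper : Thit y ≤ b := by
    by_contra hgt
    push_neg at hgt
    have hbτy : ((b : ℝ) : WithTop ℝ) < τ y :=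
      lt_of_le_of_lt (WithTop.coe_le_coe.2 hgt.le) hTyτ
    have solyb : FwdSol I C₀ a σD α y (H y) (F y) (G y) (Icc 0 b) :=
      hsoly.restrict (dom_subset hbτy)
    have hHyR : ∀ t ∈ Icc 0 b, H y t ≤ R := fun t ht =>
      le_trans (hbeforey t ht.1 (lt_of_le_of_lt ht.2 hgt)).le (by linarith)
    have hcmp := hcomp b x₀ y (H x₀) (F x₀) (G x₀) (H y) (F y) (G y) hb0 le_rfl
      hx₀.1 hy.1 solxb solyb hHxR hHyR b ⟨hb0, le_rfl⟩
    have hylt : H y b < k := hbeforey b hb0 hgt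
    have h1 : |H x₀ b - H y b| < m := lt_of_le_of_lt hcmp
      (lt_of_lt_of_le hEd' (min_le_left _ _))
    have h2 : H x₀ b - H y b < m := lt_of_le_of_lt (le_abs_self _) h1
    rw [hmdef] at h2
    have : H x₀ b = R := rfl
    linarith
  -- lower bound : b' < Thit y
  have hlower : b' < Thit y := by
    by_contra hle
    push_neg at hle
    have solyT : FwdSol I C₀ a σD α y (H y) (F y) (G y) (Icc 0 (Thit y)) :=
      hsoly.restrict (dom_subset hTyτ)
    have solxT : FwdSol I C₀ a σD α x₀ (H x₀) (F x₀) (G x₀) (Icc 0 (Thit y)) :=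
      hsolx.restrict (dom_subset (lt_of_le_of_lt
        (WithTop.coe_le_coe.2 (hle.trans hb'b)) hbτ))
    have hHyR : ∀ t ∈ Icc 0 (Thit y), H y t ≤ R := by
      intro t ht
      rcases ht.2.lt_or_eq with h' | h'
      · exact le_trans (hbeforey t ht.1 h').le (by linarith)
      · rw [h', hTyk]; linarith
    have hHxR' : ∀ t ∈ Icc 0 (Thit y), H x₀ t ≤ R := fun t ht =>
      hHxR t ⟨ht.1, ht.2.trans (hle.trans hb'b)⟩
    have hcmp := hcomp (Thit y) x₀ y (H x₀) (F x₀) (G x₀) (H y) (F y) (G y) hTy0.le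
      (hle.trans hb'b) hx₀.1 hy.1 solxT solyT hHxR' hHyR (Thit y) ⟨hTy0.le, le_rfl⟩
    have h1 : |H x₀ (Thit y) - H y (Thit y)| < m' := lt_of_le_of_lt hcmp
      (lt_of_lt_of_le hEd' (min_le_right _ _))
    have h2 : H y (Thit y) - H x₀ (Thit y) < m' := by
      have h2a := le_abs_self (H y (Thit y) - H x₀ (Thit y))
      rw [abs_sub_comm] at h2a
      linarith
    have h3 : H x₀ (Thit y) ≤ H x₀ b' :=
      hmonox.monotoneOn ⟨hTy0.le, (hle.trans hb'b).trans le_rfl⟩ ⟨hb'0.le, hb'b⟩ hle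
    rw [hTyk] at h2
    rw [hm'def] at h2
    linarith
  -- conclude
  rw [abs_sub_lt_iff]
  constructor
  · have : Thit y ≤ T₀ + ε' := hupper
    linarith
  · have : T₀ - ε₁ < Thit y := hlower
    linarith
end
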